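/- arXiv:2101.06260 — 4 statements merged into one kernel-verified Lean document; each statement's English description precedes it below -/
import Mathlib

section
/- For all non-negative integers n and all integers r ≥ 2, the number of partitions of n with no part divisible by r equals the number of partitions of n in which every part appears at most r−1 times; that is, |O_{0,r}(n)| = |D_{0,r}(n)| (Glaisher's identity). -/
open Finset

/-- The number of parts of a partition. -/
def numParts {n : ℕ} (p : Nat.Partition n) : ℕ := Multiset.card p.parts

/-- The number of different parts of a partition. -/
def numDistinctParts {n : ℕ} (p : Nat.Partition n) : ℕ := p.parts.toFinset.card

/-- `O_{j,r}(n)`: partitions of `n` with exactly `j` different parts divisible by `r`. -/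
def setO (j r n : ℕ) : Finset (Nat.Partition n) :=
  Finset.univ.filter fun p => (p.parts.toFinset.filter fun i => r ∣ i).card = j

/-- `D_{j,r}(n)`: partitions of `n` with exactly `j` different parts repeated at least `r`
times (all other parts appearing at most `r - 1` times). -/
def setD (j r n : ℕ) : Finset (Nat.Partition n) :=
  Finset.univ.filter fun p => (p.parts.toFinset.filter fun i => r ≤ p.parts.count i).card = j

/-- `O_{≤j,r}(n)`: partitions of `n` with at most `j` different parts divisible by `r`. -/
def setOle (j r n : ℕ) : Finset (Nat.Partition n) :=
  Finset.univ.filter fun p => (p.parts.toFinset.filter fun i => r ∣ i).card ≤ j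

/-- `D_{≤j,r}(n)`: partitions of `n` with at most `j` different parts repeated at least `r`
times (all other parts appearing at most `r - 1` times). -/
def setDle (j r n : ℕ) : Finset (Nat.Partition n) :=
  Finset.univ.filter fun p => (p.parts.toFinset.filter fun i => r ≤ p.parts.count i).card ≤ j

/-- `ℓ_t(λ)`: the number of parts of `λ` congruent to `t` modulo `r`, counted with
multiplicity. -/
def ellMod {n : ℕ} (r t : ℕ) (p : Nat.Partition n) : ℕ :=
  Multiset.card (p.parts.filter fun i => i % r = t)

/-- `ℓ̄_t(λ)`: the number of different parts of `λ` whose residual multiplicity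
(multiplicity mod `r`) is at least `t`. -/
def ellBarMod {n : ℕ} (r t : ℕ) (p : Nat.Partition n) : ℕ :=
  (p.parts.toFinset.filter fun i => t ≤ p.parts.count i % r).card

/-- `b_{j,r}(n)`: the difference between the number of parts in all partitions in
`O_{j,r}(n)` and the number of parts in all partitions in `D_{j,r}(n)`. -/
def bDiff (j r n : ℕ) : ℤ :=
  (∑ p ∈ setO j r n, (numParts p : ℤ)) - ∑ p ∈ setD j r n, (numParts p : ℤ)

/-- `b_{≤j,r}(n)`. -/
def bDiffLe (j r n : ℕ) : ℤ :=
  (∑ p ∈ setOle j r n, (numParts p : ℤ)) - ∑ p ∈ setDle j r n, (numParts p : ℤ)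

/-- `E_{j,r,t}(n)`. -/
def EDiff (j r t n : ℕ) : ℤ :=
  (∑ p ∈ setO j r n, ((ellMod r t p : ℤ) - (ellMod r 0 p : ℤ))) -
    ∑ p ∈ setD j r n, (ellBarMod r t p : ℤ)

/-- `b'_{j,r}(n)`: the difference between the number of different parts in all partitions in
`D_{j,r}(n)` and the number of different parts in all partitions in `O_{j,r}(n)`. -/
def bDiff' (j r n : ℕ) : ℤ :=
  (∑ p ∈ setD j r n, (numDistinctParts p : ℤ)) - ∑ p ∈ setO j r n, (numDistinctParts p : ℤ)

/-- `b'_{≤j,r}(n)`. -/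
def bDiffLe' (j r n : ℕ) : ℤ :=
  (∑ p ∈ setDle j r n, (numDistinctParts p : ℤ)) - ∑ p ∈ setOle j r n, (numDistinctParts p : ℤ)

/-- `T_{j,r}(n)`: the number of different parts with multiplicity between `r + 1` and
`2r - 1` in all partitions in `D_{j,r}(n)`. -/
def Tcount (j r n : ℕ) : ℕ :=
  ∑ p ∈ setD j r n,
    (p.parts.toFinset.filter fun i =>
      r + 1 ≤ p.parts.count i ∧ p.parts.count i ≤ 2 * r - 1).card



section Glaisher

variable {r : ℕ}

/-- largest power of `r` dividing `a`. -/
local notation "vv" => Nat.maxPowDiv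

/-- the `r`-free part of `a`. -/
def gcore (r a : ℕ) : ℕ := a / r ^ Nat.maxPowDiv r a

lemma pow_vv_mul_gcore (r a : ℕ) : r ^ vv r a * gcore r a = a :=
  Nat.mul_div_cancel' (Nat.maxPowDiv.pow_dvd (p := r) (n := a))

lemma gcore_pos (hr : 2 ≤ r) {a : ℕ} (ha : 0 < a) : 0 < gcore r a :=
  Nat.div_pos (Nat.le_of_dvd ha (Nat.maxPowDiv.pow_dvd (p := r) (n := a))) (pow_pos (by omega) _)

lemma not_dvd_gcore (hr : 2 ≤ r) {a : ℕ} (ha : 0 < a) : ¬ r ∣ gcore r a := by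
  rintro ⟨c, hc⟩
  have h1 : r ^ (vv r a + 1) ∣ a := by
    refine ⟨c, ?_⟩
    conv_lhs => rw [← pow_vv_mul_gcore r a]
    rw [hc]; ring
  have : vv r a + 1 ≤ vv r a := (Nat.pow_dvd_iff_le_padicValNat (p := r) (by omega) ha.ne').1 h1
  omega

lemma vv_eq_zero (hr : 2 ≤ r) {m : ℕ} (hm : ¬ r ∣ m) : vv r m = 0 := by
  by_contra h
  have h1 : r ^ 1 ∣ r ^ vv r m := pow_dvd_pow r (Nat.one_le_iff_ne_zero.2 h)
  rw [pow_one] at h1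
  exact hm (h1.trans (Nat.maxPowDiv.pow_dvd (p := r) (n := m)))

lemma vv_mul_pow (hr : 2 ≤ r) {m : ℕ} (hm0 : 0 < m) (hm : ¬ r ∣ m) (k : ℕ) :
    vv r (m * r ^ k) = k := by
  rw [mul_comm, Nat.maxPowDiv, Nat.maxPowDiv.base_pow_mul (p := r) (by omega) hm0.ne', ← Nat.maxPowDiv, vv_eq_zero hr hm, zero_add]

lemma gcore_mul_pow (hr : 2 ≤ r) {m : ℕ} (hm0 : 0 < m) (hm : ¬ r ∣ m) (k : ℕ) :
    gcore r (m * r ^ k) = m := by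
  rw [gcore, vv_mul_pow hr hm0 hm, Nat.mul_div_cancel _ (pow_pos (by omega) _)]

end Glaisher


variable {r : ℕ}

/-- L1: digit sums are bounded. -/
lemma digitsum_lt (hr : 2 ≤ r) (c : ℕ → ℕ) (hc : ∀ k, c k < r) (K : ℕ) :
    ∑ k ∈ Finset.range K, c k * r ^ k < r ^ K := by
  induction K with
  | zero => simp
  | succ K ih =>
    rw [Finset.sum_range_succ, pow_succ]
    have h1 : c K * r ^ K + r ^ K ≤ r ^ K * r := by
      calc c K * r ^ K + r ^ K = (c K + 1) * r ^ K := by ring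
        _ ≤ r * r ^ K := Nat.mul_le_mul_right _ (hc K)
        _ = r ^ K * r := mul_comm _ _
    omega

/-- L2: digit extraction from a digit sum. -/
lemma digitsum_div_mod (hr : 2 ≤ r) (c : ℕ → ℕ) (hc : ∀ k, c k < r) (K j : ℕ) :
    (∑ k ∈ Finset.range K, c k * r ^ k) / r ^ j % r = if j < K then c j else 0 := by
  induction K with
  | zero => simp [Nat.zero_div]
  | succ K ih =>
    rw [Finset.sum_range_succ]
    rcases lt_trichotomy j K with hj | rfl | hj
    · rw [if_pos (by omega)] at ih ⊢
      have hdvd : c K * r ^ K = c K * r ^ (K - j) * r ^ j := by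
        rw [mul_assoc, ← pow_add]; congr 2; omega
      rw [hdvd, Nat.add_mul_div_right _ _ (pow_pos (by omega) j)]
      have hd : r ∣ c K * r ^ (K - j) :=
        Dvd.dvd.mul_left (dvd_pow_self r (by omega)) _
      have h0 : c K * r ^ (K - j) % r = 0 := by
        obtain ⟨t, ht⟩ := hd; simp [ht, Nat.mul_mod_right]
      rw [Nat.add_mod, h0, add_zero, Nat.mod_mod_of_dvd _ dvd_rfl, ih]
    · rw [if_pos (by omega)]
      have hlt := digitsum_lt hr c hc j
      have h2 : 0 < r ^ j := pow_pos (by omega) _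
      rw [Nat.add_mul_div_right _ _ h2, Nat.div_eq_of_lt hlt, zero_add,
        Nat.mod_eq_of_lt (hc j)]
    · rw [if_neg (by omega)]
      have hlt : ∑ k ∈ Finset.range K, c k * r ^ k + c K * r ^ K < r ^ (K + 1) :=
        digitsum_lt hr c hc (K + 1) |>.trans_le' (by rw [Finset.sum_range_succ])
      have : r ^ (K + 1) ≤ r ^ j := pow_le_pow_right₀ (by omega) (by omega)
      rw [Nat.div_eq_of_lt (by omega), Nat.zero_mod]

/-- L0: reconstruction of a number from its digits. -/
lemma sum_div_mod_eq (hr : 2 ≤ r) (K : ℕ) : ∀ c : ℕ, c < r ^ K →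
    ∑ k ∈ Finset.range K, c / r ^ k % r * r ^ k = c := by
  induction K with
  | zero => intro c hc; simp at hc; simp [hc]
  | succ K ih =>
    intro c hc
    rw [Finset.sum_range_succ']
    have key : ∀ k, c / r ^ (k + 1) % r * r ^ (k + 1) = (c / r) / r ^ k % r * r ^ k * r := by
      intro k
      rw [pow_succ, ← Nat.div_div_eq_div_mul, mul_comm (r ^ k) r]
      ring_nf
      rw [Nat.div_div_eq_div_mul, mul_comm (r ^ k) r, ← Nat.div_div_eq_div_mul]
    simp_rw [key]
    rw [← Finset.sum_mul, ih (c / r) (by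
      rw [Nat.div_lt_iff_lt_mul (by omega)]
      calc c < r ^ (K + 1) := hc
        _ = r ^ K * r := pow_succ r K)]
    simp only [pow_zero, Nat.div_one, mul_one]
    rw [mul_comm]
    exact Nat.div_add_mod c r

/-- Glaisher's map from `D`-type to `O`-type partitions, at multiset level. -/
def glaisherF (r : ℕ) (s : Multiset ℕ) : Multiset ℕ :=
  s.bind fun a => Multiset.replicate (r ^ Nat.maxPowDiv r a) (gcore r a)

/-- Glaisher's map from `O`-type to `D`-type partitions, at multiset level. -/
def glaisherG (r K : ℕ) (s : Multiset ℕ) : Multiset ℕ :=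
  ∑ m ∈ s.toFinset, ∑ k ∈ Finset.range K,
    Multiset.replicate (s.count m / r ^ k % r) (m * r ^ k)

lemma glaisherF_sum (hr : 2 ≤ r) (s : Multiset ℕ) : (glaisherF r s).sum = s.sum := by
  rw [glaisherF, Multiset.sum_bind]
  congr 1
  rw [show s = s.map id from (Multiset.map_id s).symm, Multiset.map_map]
  congr 1
  funext a
  simp [Multiset.sum_replicate, pow_vv_mul_gcore]

lemma mem_glaisherF (hr : 2 ≤ r) {s : Multiset ℕ} {b : ℕ} (hb : b ∈ glaisherF r s) :
    ∃ a ∈ s, b = gcore r a := by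
  rw [glaisherF, Multiset.mem_bind] at hb
  obtain ⟨a, ha, hba⟩ := hb
  exact ⟨a, ha, Multiset.eq_of_mem_replicate hba⟩

lemma glaisherF_count (hr : 2 ≤ r) (s : Multiset ℕ) (m : ℕ) :
    (glaisherF r s).count m =
      ∑ a ∈ s.toFinset, s.count a * (if gcore r a = m then r ^ Nat.maxPowDiv r a else 0) := by
  rw [glaisherF, Multiset.count_bind, Finset.sum_multiset_map_count]
  refine Finset.sum_congr rfl fun a _ => ?_
  rw [Multiset.count_replicate, smul_eq_mul]

lemma glaisherG_sum (hr : 2 ≤ r) (K : ℕ) (s : Multiset ℕ)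
    (hs : ∀ m ∈ s.toFinset, s.count m < r ^ K) : (glaisherG r K s).sum = s.sum := by
  rw [glaisherG]
  conv_rhs => rw [← Multiset.toFinset_sum_count_nsmul_eq s]
  rw [← Multiset.coe_sumAddMonoidHom, map_sum, map_sum]
  refine Finset.sum_congr rfl fun m hm => ?_
  rw [map_sum]
  simp only [Multiset.coe_sumAddMonoidHom, Multiset.sum_replicate, smul_eq_mul]
  have h1 : ∀ k, Multiset.count m s / r ^ k % r * (m * r ^ k)
      = Multiset.count m s / r ^ k % r * r ^ k * m := fun k => by ring
  simp_rw [h1]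
  rw [← Finset.sum_mul, sum_div_mod_eq hr K _ (hs m hm)]
  rw [Multiset.sum_nsmul, Multiset.sum_singleton, smul_eq_mul, mul_comm]

lemma mem_glaisherG {K : ℕ} {s : Multiset ℕ} {b : ℕ} (hb : b ∈ glaisherG r K s) :
    ∃ m ∈ s.toFinset, ∃ k < K, b = m * r ^ k := by
  rw [glaisherG, Multiset.mem_sum] at hb
  obtain ⟨m, hm, hb⟩ := hb
  rw [Multiset.mem_sum] at hb
  obtain ⟨k, hk, hb⟩ := hb
  exact ⟨m, hm, k, Finset.mem_range.1 hk, Multiset.eq_of_mem_replicate hb⟩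

lemma glaisherG_count (hr : 2 ≤ r) (K : ℕ) {s : Multiset ℕ}
    (hs : ∀ m ∈ s, 0 < m ∧ ¬ r ∣ m) {m : ℕ} (hm0 : 0 < m) (hm : ¬ r ∣ m)
    {k : ℕ} (hk : k < K) :
    (glaisherG r K s).count (m * r ^ k) = s.count m / r ^ k % r := by
  rw [glaisherG, Multiset.count_sum']
  have key : ∀ m' ∈ s.toFinset,
      (∑ j ∈ Finset.range K, Multiset.replicate (s.count m' / r ^ j % r) (m' * r ^ j)).count
        (m * r ^ k) = if m' = m then s.count m / r ^ k % r else 0 := by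
    intro m' hm'
    obtain ⟨hm'0, hm'd⟩ := hs m' (Multiset.mem_toFinset.1 hm')
    rw [Multiset.count_sum']
    by_cases h : m' = m
    · subst h
      rw [if_pos rfl]
      rw [Finset.sum_eq_single k]
      · rw [Multiset.count_replicate, if_pos rfl]
      · intro j _ hj
        rw [Multiset.count_replicate, if_neg]
        intro hEq
        have := vv_mul_pow hr hm'0 hm'd j
        rw [hEq, vv_mul_pow hr hm'0 hm'd k] at this
        omega
      · intro h; exact absurd (Finset.mem_range.2 hk) h
    · rw [if_neg h]
      refine Finset.sum_eq_zero fun j _ => ?_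
      rw [Multiset.count_replicate, if_neg]
      intro hEq
      apply h
      have h1 := gcore_mul_pow hr hm'0 hm'd j
      rw [hEq, gcore_mul_pow hr hm0 hm k] at h1
      omega
  rw [Finset.sum_congr rfl key]
  by_cases hms : m ∈ s.toFinset
  · rw [Finset.sum_ite_eq' s.toFinset m, if_pos hms]
  · rw [Finset.sum_ite_eq' s.toFinset m, if_neg hms,
      Multiset.count_eq_zero_of_notMem (fun h => hms (Multiset.mem_toFinset.2 h))]
    simp

/-- Reindexing sums over parts with a fixed core. -/
lemma sum_gcore_eq (hr : 2 ≤ r) (T : Finset ℕ) (m K : ℕ) (hm0 : 0 < m) (hm : ¬ r ∣ m)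
    (hK : ∀ b ∈ T, Nat.maxPowDiv r b < K) (hT : ∀ b ∈ T, 0 < b) (g : ℕ → ℕ)
    (hg : ∀ k, k < K → m * r ^ k ∉ T → g k = 0) :
    ∑ b ∈ T, (if gcore r b = m then g (Nat.maxPowDiv r b) else 0)
      = ∑ k ∈ Finset.range K, g k := by
  rw [← Finset.sum_filter]
  have h1 : ∑ b ∈ T.filter (fun b => gcore r b = m), g (Nat.maxPowDiv r b)
      = ∑ k ∈ (Finset.range K).filter (fun k => m * r ^ k ∈ T), g k := by
    refine Finset.sum_nbij' (fun b => Nat.maxPowDiv r b) (fun k => m * r ^ k) ?_ ?_ ?_ ?_ ?_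
    · intro b hb
      rw [Finset.mem_filter] at hb
      rw [Finset.mem_filter, Finset.mem_range]
      refine ⟨hK b hb.1, ?_⟩
      have := pow_vv_mul_gcore r b
      rw [hb.2] at this
      rw [mul_comm, this]
      exact hb.1
    · intro k hk
      rw [Finset.mem_filter] at hk
      rw [Finset.mem_filter]
      exact ⟨hk.2, gcore_mul_pow hr hm0 hm k⟩
    · intro b hb
      rw [Finset.mem_filter] at hb
      have := pow_vv_mul_gcore r b
      rw [hb.2] at this
      show m * r ^ Nat.maxPowDiv r b = b
      rw [mul_comm]
      exact this
    · intro k hk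
      exact vv_mul_pow hr hm0 hm k
    · intro b hb
      rfl
  rw [h1]
  refine Finset.sum_subset (Finset.filter_subset _ _) fun k hk hk' => ?_
  rw [Finset.mem_range] at hk
  rw [Finset.mem_filter, not_and] at hk'
  exact hg k hk (fun h => hk' (Finset.mem_range.2 hk) h)

lemma count_le_sum {s : Multiset ℕ} (hpos : ∀ a ∈ s, 0 < a) (a : ℕ) :
    s.count a ≤ s.sum := by
  calc s.count a ≤ Multiset.card s := Multiset.count_le_card a s
    _ = Multiset.card s • 1 := (smul_eq_mul _ _ |>.trans (mul_one _)).symm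
    _ ≤ s.sum := Multiset.card_nsmul_le_sum hpos

lemma vv_lt_of_mem (hr : 2 ≤ r) {s : Multiset ℕ} {K b : ℕ} (hb : b ∈ s)
    (hpos : 0 < b) (hK : s.sum < r ^ K) : Nat.maxPowDiv r b < K := by
  have h1 : r ^ Nat.maxPowDiv r b ≤ b := Nat.le_of_dvd hpos (Nat.maxPowDiv.pow_dvd (p := r) (n := b))
  have h2 : b ≤ s.sum := Multiset.le_sum_of_mem hb
  exact (pow_lt_pow_iff_right₀ (by omega : 1 < r)).1 (by omega)

/-- `G ∘ F = id` on multisets with all multiplicities `< r`. -/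
lemma glaisherGF (hr : 2 ≤ r) (K : ℕ) (s : Multiset ℕ) (hpos : ∀ a ∈ s, 0 < a)
    (hcount : ∀ a, s.count a < r) (hK : s.sum < r ^ K) :
    glaisherG r K (glaisherF r s) = s := by
  have hFs : ∀ b ∈ glaisherF r s, 0 < b ∧ ¬ r ∣ b := by
    intro b hb
    obtain ⟨c, hc, rfl⟩ := mem_glaisherF hr hb
    exact ⟨gcore_pos hr (hpos c hc), not_dvd_gcore hr (hpos c hc)⟩
  ext a
  rcases Nat.eq_zero_or_pos a with rfl | ha
  · rw [Multiset.count_eq_zero_of_notMem, Multiset.count_eq_zero_of_notMem]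
    · exact fun h => (hpos 0 h).ne' rfl
    · intro h
      obtain ⟨m, hm, k, hk, hmk⟩ := mem_glaisherG h
      have := (hFs m (Multiset.mem_toFinset.1 hm)).1
      have : 0 < m * r ^ k := Nat.mul_pos this (pow_pos (by omega) _)
      omega
  · set m := gcore r a with hmdef
    set j := Nat.maxPowDiv r a with hjdef
    have ham : a = m * r ^ j := by rw [mul_comm]; exact (pow_vv_mul_gcore r a).symm
    have hm0 : 0 < m := gcore_pos hr ha
    have hmd : ¬ r ∣ m := not_dvd_gcore hr ha
    by_cases hjK : j < K
    · rw [ham, glaisherG_count hr K hFs hm0 hmd hjK]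
      have hFc : (glaisherF r s).count m
          = ∑ k ∈ Finset.range K, s.count (m * r ^ k) * r ^ k := by
        rw [glaisherF_count hr s m]
        rw [← sum_gcore_eq hr s.toFinset m K hm0 hmd
          (fun b hb => vv_lt_of_mem hr (Multiset.mem_toFinset.1 hb)
            (hpos b (Multiset.mem_toFinset.1 hb)) hK)
          (fun b hb => hpos b (Multiset.mem_toFinset.1 hb))
          (fun k => s.count (m * r ^ k) * r ^ k)
          (fun k _ hk => by
            rw [Multiset.count_eq_zero_of_notMem
              (fun h => hk (Multiset.mem_toFinset.2 h)), zero_mul])]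
        refine Finset.sum_congr rfl fun b hb => ?_
        by_cases hgb : gcore r b = m
        · rw [if_pos hgb, if_pos hgb]
          have hb' : b = m * r ^ Nat.maxPowDiv r b := by
            conv_lhs => rw [← pow_vv_mul_gcore r b]
            rw [hgb, mul_comm]
          rw [← hb']
        · rw [if_neg hgb, if_neg hgb, mul_zero]
      rw [hFc, digitsum_div_mod hr _ (fun k => hcount _) K j, if_pos hjK, ← ham]
    · -- j ≥ K : both sides are zero
      rw [Multiset.count_eq_zero_of_notMem, Multiset.count_eq_zero_of_notMem]
      · intro h
        have h2 : a ≤ s.sum := Multiset.le_sum_of_mem h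
        have := vv_lt_of_mem hr h ha hK
        omega
      · intro h
        obtain ⟨m', hm', k, hk, hmk⟩ := mem_glaisherG h
        obtain ⟨hm'0, hm'd⟩ := hFs m' (Multiset.mem_toFinset.1 hm')
        have : j = k := by rw [hjdef, hmk, vv_mul_pow hr hm'0 hm'd]
        omega

/-- `F ∘ G = id` on multisets with no element divisible by `r`. -/
lemma glaisherFG (hr : 2 ≤ r) (K : ℕ) (s : Multiset ℕ) (hpos : ∀ a ∈ s, 0 < a)
    (hdvd : ∀ a ∈ s, ¬ r ∣ a) (hK : s.sum < r ^ K) :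
    glaisherF r (glaisherG r K s) = s := by
  have hGmem : ∀ b ∈ glaisherG r K s, (0 < b ∧ ¬ r ∣ gcore r b)
      ∧ Nat.maxPowDiv r b < K := by
    intro b hb
    obtain ⟨m, hm, k, hk, rfl⟩ := mem_glaisherG hb
    have hm' := Multiset.mem_toFinset.1 hm
    have hm0 : 0 < m := hpos m hm'
    have hmd : ¬ r ∣ m := hdvd m hm'
    have hb0 : 0 < m * r ^ k := Nat.mul_pos hm0 (pow_pos (by omega) _)
    exact ⟨⟨hb0, not_dvd_gcore hr hb0⟩, by rw [vv_mul_pow hr hm0 hmd]; exact hk⟩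
  ext a
  rcases Nat.eq_zero_or_pos a with rfl | ha
  · rw [Multiset.count_eq_zero_of_notMem, Multiset.count_eq_zero_of_notMem]
    · exact fun h => (hpos 0 h).ne' rfl
    · intro h
      obtain ⟨c, hc, h0⟩ := mem_glaisherF hr h
      exact (gcore_pos hr ((hGmem c hc).1.1)).ne' h0.symm
  by_cases had : r ∣ a
  · rw [Multiset.count_eq_zero_of_notMem, Multiset.count_eq_zero_of_notMem]
    · exact fun h => hdvd a h had
    · intro h
      obtain ⟨c, hc, h0⟩ := mem_glaisherF hr h
      rw [h0] at had
      exact not_dvd_gcore hr ((hGmem c hc).1.1) had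
  · have hFc : (glaisherF r (glaisherG r K s)).count a
        = ∑ k ∈ Finset.range K, (glaisherG r K s).count (a * r ^ k) * r ^ k := by
      rw [glaisherF_count hr _ a]
      rw [← sum_gcore_eq hr (glaisherG r K s).toFinset a K ha had
        (fun b hb => (hGmem b (Multiset.mem_toFinset.1 hb)).2)
        (fun b hb => (hGmem b (Multiset.mem_toFinset.1 hb)).1.1)
        (fun k => (glaisherG r K s).count (a * r ^ k) * r ^ k)
        (fun k _ hk => by
          rw [Multiset.count_eq_zero_of_notMem
            (fun h => hk (Multiset.mem_toFinset.2 h)), zero_mul])]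
      refine Finset.sum_congr rfl fun b hb => ?_
      by_cases hgb : gcore r b = a
      · rw [if_pos hgb, if_pos hgb]
        have hb' : b = a * r ^ Nat.maxPowDiv r b := by
          conv_lhs => rw [← pow_vv_mul_gcore r b]
          rw [hgb, mul_comm]
        rw [← hb']
      · rw [if_neg hgb, if_neg hgb, mul_zero]
    rw [hFc]
    have hs' : ∀ m ∈ s, 0 < m ∧ ¬ r ∣ m := fun m hm => ⟨hpos m hm, hdvd m hm⟩
    rw [Finset.sum_congr rfl (fun k hk => by
      rw [glaisherG_count hr K hs' ha had (Finset.mem_range.1 hk)])]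
    exact sum_div_mod_eq hr K _ (lt_of_le_of_lt (count_le_sum hpos a) hK)

lemma n_lt_pow (hr : 2 ≤ r) (n : ℕ) : n < r ^ (n + 1) :=
  lt_of_lt_of_le ((Nat.lt_two_pow_self (n := n)))
    (le_trans (Nat.pow_le_pow_right (by omega) (by omega))
      (Nat.pow_le_pow_left hr _))

/-- The Glaisher map as a map of partitions. -/
def partF (r : ℕ) (hr : 2 ≤ r) {n : ℕ} (p : Nat.Partition n) : Nat.Partition n where
  parts := glaisherF r p.parts
  parts_pos := fun hi => by
    obtain ⟨a, ha, h⟩ := mem_glaisherF hr hi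
    rw [h]; exact gcore_pos hr (p.parts_pos ha)
  parts_sum := by rw [glaisherF_sum hr, p.parts_sum]

/-- The inverse Glaisher map as a map of partitions. -/
def partG (r : ℕ) (hr : 2 ≤ r) {n : ℕ} (p : Nat.Partition n) : Nat.Partition n where
  parts := glaisherG r (n + 1) p.parts
  parts_pos := fun hi => by
    obtain ⟨m, hm, k, hk, h⟩ := mem_glaisherG hi
    rw [h]
    exact Nat.mul_pos (p.parts_pos (Multiset.mem_toFinset.1 hm)) (pow_pos (by omega) _)
  parts_sum := by
    rw [glaisherG_sum hr _ _ (fun m _ => lt_of_le_of_lt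
      ((count_le_sum (fun a ha => p.parts_pos ha) m).trans_eq p.parts_sum)
      (n_lt_pow hr n)), p.parts_sum]

lemma mem_setO_zero {n : ℕ} {p : Nat.Partition n} :
    p ∈ setO 0 r n ↔ ∀ i ∈ p.parts, ¬ r ∣ i := by
  rw [setO, Finset.mem_filter, Finset.card_eq_zero, Finset.filter_eq_empty_iff]
  constructor
  · exact fun h i hi => h.2 (Multiset.mem_toFinset.2 hi)
  · exact fun h => ⟨Finset.mem_univ _, fun i hi => h i (Multiset.mem_toFinset.1 hi)⟩

lemma mem_setD_zero (hr : 2 ≤ r) {n : ℕ} {p : Nat.Partition n} :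
    p ∈ setD 0 r n ↔ ∀ i, p.parts.count i < r := by
  rw [setD, Finset.mem_filter, Finset.card_eq_zero, Finset.filter_eq_empty_iff]
  constructor
  · intro h i
    by_cases hi : i ∈ p.parts
    · have := h.2 (Multiset.mem_toFinset.2 hi)
      omega
    · rw [Multiset.count_eq_zero_of_notMem hi]; omega
  · exact fun h => ⟨Finset.mem_univ _, fun {i} _ hc => absurd hc (by have := h i; omega)⟩

theorem glaisher_identity' (n r : ℕ) (hr : 2 ≤ r) :
    (setO 0 r n).card = (setD 0 r n).card := by
  refine Finset.card_bij' (fun p _ => partG r hr p) (fun p _ => partF r hr p) ?_ ?_ ?_ ?_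
  · -- partG maps O into D
    intro p hp
    rw [mem_setO_zero] at hp
    rw [mem_setD_zero hr]
    intro i
    by_cases hi : i ∈ (partG r hr p).parts
    · obtain ⟨m, hm, k, hk, h⟩ := mem_glaisherG hi
      have hm' := Multiset.mem_toFinset.1 hm
      rw [show (partG r hr p).parts = glaisherG r (n + 1) p.parts from rfl, h,
        glaisherG_count hr _ (fun a ha => ⟨p.parts_pos ha, hp a ha⟩)
          (p.parts_pos hm') (hp m hm') hk]
      exact Nat.mod_lt _ (by omega)
    · rw [Multiset.count_eq_zero_of_notMem hi]; omega
  · -- partF maps D into O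
    intro p hp
    rw [mem_setO_zero]
    intro i hi
    obtain ⟨a, ha, h⟩ := mem_glaisherF hr hi
    rw [h]
    exact not_dvd_gcore hr (p.parts_pos ha)
  · -- F ∘ G = id on O
    intro p hp
    rw [mem_setO_zero] at hp
    apply Nat.Partition.ext
    exact glaisherFG hr (n + 1) p.parts (fun a ha => p.parts_pos ha) hp
      (by rw [p.parts_sum]; exact n_lt_pow hr n)
  · -- G ∘ F = id on D
    intro p hp
    rw [mem_setD_zero hr] at hp
    apply Nat.Partition.ext
    exact glaisherGF hr (n + 1) p.parts (fun a ha => p.parts_pos ha) hp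
      (by rw [p.parts_sum]; exact n_lt_pow hr n)

/-- Glaisher's identity: `|O_{0,r}(n)| = |D_{0,r}(n)|`. -/
theorem glaisher_identity (n r : ℕ) (hr : 2 ≤ r) :
    (setO 0 r n).card = (setD 0 r n).card :=
  glaisher_identity' n r hr
end

section
/- For all non-negative integers n, j and all integers r ≥ 2, the number of partitions of n with exactly j different parts divisible by r equals the number of partitions of n in which exactly j different parts are repeated at least r times and all other parts appear at most r−1 times; that is, |O_{j,r}(n)| = |D_{j,r}(n)| (Franklin's identity). -/
open Finset

namespace FranklinAux

/-- r-adic valuation -/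
def nuR (r s : ℕ) : ℕ := Nat.maxPowDiv r s

/-- r-free part -/
def baseR (r s : ℕ) : ℕ := s / r ^ Nat.maxPowDiv r s

lemma maxPowDiv_eq_zero {r i : ℕ} (hi : ¬ r ∣ i) : Nat.maxPowDiv r i = 0 := by
  by_contra h
  exact hi (dvd_trans (dvd_pow_self r h) (Nat.maxPowDiv.pow_dvd (p := r) (n := i)))

lemma nuR_enc {r i : ℕ} (hr : 2 ≤ r) (hi : ¬ r ∣ i) (k : ℕ) : nuR r (i * r ^ k) = k := by
  have hipos : 0 < i := by
    rcases Nat.eq_zero_or_pos i with h | h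
    · exact absurd (h ▸ dvd_zero r) hi
    · exact h
  have this : Nat.maxPowDiv r (r ^ k * i) = Nat.maxPowDiv r i + k := Nat.maxPowDiv.base_pow_mul (p := r) (n := i) (by omega) hipos.ne' k
  rw [nuR, mul_comm, this, maxPowDiv_eq_zero hi]
  omega

lemma baseR_enc {r i : ℕ} (hr : 2 ≤ r) (hi : ¬ r ∣ i) (k : ℕ) : baseR r (i * r ^ k) = i := by
  have h := nuR_enc hr hi k
  rw [baseR] at *
  rw [show Nat.maxPowDiv r (i * r ^ k) = k from h]
  exact Nat.mul_div_cancel i (Nat.pow_pos (by omega))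

lemma dec_spec {r s : ℕ} (hr : 2 ≤ r) (hs : 0 < s) :
    baseR r s * r ^ nuR r s = s ∧ ¬ r ∣ baseR r s ∧ 0 < baseR r s := by
  set k := nuR r s with hk
  have hdvd : r ^ k ∣ s := Nat.maxPowDiv.pow_dvd (p := r) (n := s)
  have heq : baseR r s * r ^ k = s := Nat.div_mul_cancel hdvd
  have hb : 0 < baseR r s := by
    rcases Nat.eq_zero_or_pos (baseR r s) with h | h
    · rw [h, zero_mul] at heq; omega
    · exact h
  refine ⟨heq, ?_, hb⟩
  rintro ⟨d, hd⟩
  have h2 : r ^ (k + 1) ∣ s := by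
    refine ⟨d, ?_⟩
    calc s = baseR r s * r ^ k := heq.symm
    _ = r * d * r ^ k := by rw [hd]
    _ = r ^ (k + 1) * d := by ring
  have : k + 1 ≤ Nat.maxPowDiv r s := (Nat.pow_dvd_iff_le_padicValNat (by omega) hs.ne').mp h2
  rw [show Nat.maxPowDiv r s = k from hk.symm] at this
  omega

lemma nuR_le {r s n : ℕ} (hr : 2 ≤ r) (hs : 0 < s) (hsn : s ≤ n) : nuR r s < n + 1 := by
  have hdvd : r ^ nuR r s ∣ s := Nat.maxPowDiv.pow_dvd (p := r) (n := s)
  have h1 : r ^ nuR r s ≤ s := Nat.le_of_dvd hs hdvd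
  have h2 : nuR r s < 2 ^ nuR r s := Nat.lt_two_pow_self
  have h3 : (2:ℕ) ^ nuR r s ≤ r ^ nuR r s := Nat.pow_le_pow_left hr _
  omega

/-- digits reconstruct -/
lemma sum_digits {r : ℕ} (hr : 2 ≤ r) : ∀ K m, m < r ^ K →
    ∑ k ∈ range K, m / r ^ k % r * r ^ k = m := by
  intro K
  induction K with
  | zero =>
    intro m hm
    rw [pow_zero] at hm
    simp [show m = 0 by omega]
  | succ K ih =>
    intro m hm
    have hr0 : 0 < r := by omega
    have hdiv : m / r < r ^ K := by
      rw [Nat.div_lt_iff_lt_mul hr0, ← pow_succ]; exact hm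
    rw [Finset.sum_range_succ']
    have hcong : ∀ k ∈ range K, m / r ^ (k+1) % r * r ^ (k+1)
        = (m / r / r ^ k % r * r ^ k) * r := by
      intro k _
      rw [pow_succ', Nat.div_div_eq_div_mul]
      ring
    rw [Finset.sum_congr rfl hcong, ← Finset.sum_mul, ih _ hdiv]
    simp only [pow_zero, Nat.div_one, mul_one]
    exact Nat.div_add_mod' m r

/-- digit extraction -/
lemma digit_of_sum {r : ℕ} (hr : 2 ≤ r) : ∀ j K (c : ℕ → ℕ), (∀ k, c k < r) → j < K →
    (∑ k ∈ range K, c k * r ^ k) / r ^ j % r = c j := by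
  intro j
  induction j with
  | zero =>
    intro K c hc hj
    obtain ⟨K', rfl⟩ : ∃ K', K = K' + 1 := ⟨K - 1, by omega⟩
    rw [Finset.sum_range_succ']
    have hcong : ∀ k ∈ range K', c (k+1) * r ^ (k+1) = r * (c (k+1) * r ^ k) := by
      intro k _; rw [pow_succ']; ring
    rw [Finset.sum_congr rfl hcong, ← Finset.mul_sum]
    simp only [pow_zero, Nat.pow_zero, mul_one, Nat.div_one]
    rw [Nat.mul_add_mod]
    exact Nat.mod_eq_of_lt (hc 0)
  | succ j ih =>
    intro K c hc hj
    obtain ⟨K', rfl⟩ : ∃ K', K = K' + 1 := ⟨K - 1, by omega⟩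
    rw [Finset.sum_range_succ']
    have hcong : ∀ k ∈ range K', c (k+1) * r ^ (k+1) = r * (c (k+1) * r ^ k) := by
      intro k _; rw [pow_succ']; ring
    rw [Finset.sum_congr rfl hcong, ← Finset.mul_sum]
    simp only [pow_zero, mul_one]
    have hstep : (r * (∑ k ∈ range K', c (k+1) * r ^ k) + c 0) / r ^ (j + 1)
        = (∑ k ∈ range K', c (k+1) * r ^ k) / r ^ j := by
      rw [pow_succ', ← Nat.div_div_eq_div_mul, Nat.mul_add_div (by omega),
        Nat.div_eq_of_lt (hc 0), add_zero]
    rw [hstep]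
    exact ih K' (fun k => c (k+1)) (fun k => hc (k+1)) (by omega)


/-- rebuild a multiset from a count function -/
def Mk (n : ℕ) (f : ℕ → ℕ) : Multiset ℕ :=
  ∑ v ∈ Finset.range (n+1), Multiset.replicate (f v) v

lemma count_Mk (n : ℕ) (f : ℕ → ℕ) (u : ℕ) :
    (Mk n f).count u = if u < n + 1 then f u else 0 := by
  rw [Mk, Multiset.count_sum']
  simp only [Multiset.count_replicate]
  rw [Finset.sum_ite_eq' (Finset.range (n+1)) u f]
  simp [Finset.mem_range]

lemma sum_Mk (n : ℕ) (f : ℕ → ℕ) :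
    (Mk n f).sum = ∑ v ∈ Finset.range (n+1), v * f v := by
  rw [Mk]
  rw [Multiset.sum_sum]
  refine Finset.sum_congr rfl fun v _ => ?_
  rw [Multiset.sum_replicate, smul_eq_mul, mul_comm]

/-- a good count function for partitions of n -/
def Good (n : ℕ) (f : ℕ → ℕ) : Prop :=
  f 0 = 0 ∧ (∀ v, n < v → f v = 0) ∧ ∑ v ∈ Finset.range (n+1), v * f v = n

lemma Good.le {n : ℕ} {f : ℕ → ℕ} (hf : Good n f) (v : ℕ) : v * f v ≤ n := by
  rcases le_or_gt v n with h | h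
  · calc v * f v ≤ ∑ u ∈ Finset.range (n+1), u * f u :=
        Finset.single_le_sum (f := fun u => u * f u) (fun _ _ => Nat.zero_le _)
          (Finset.mem_range.mpr (by omega))
    _ = n := hf.2.2
  · rw [hf.2.1 v h, mul_zero]; exact Nat.zero_le n

/-- build a partition from a good count function -/
def toPart {n : ℕ} (f : ℕ → ℕ) (hf : Good n f) : Nat.Partition n where
  parts := Mk n f
  parts_pos := by
    intro i hi
    have := Multiset.count_pos.mpr hi
    rw [count_Mk] at this
    rcases Nat.eq_zero_or_pos i with rfl | h
    · rw [if_pos (by omega), hf.1] at this; omega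
    · exact h
  parts_sum := by rw [sum_Mk]; exact hf.2.2

lemma count_toPart {n : ℕ} (f : ℕ → ℕ) (hf : Good n f) (v : ℕ) :
    (toPart f hf).parts.count v = f v := by
  show (Mk n f).count v = f v
  rw [count_Mk]
  split
  · rfl
  · exact (hf.2.1 v (by omega)).symm

lemma parts_le {n : ℕ} (p : Nat.Partition n) {v : ℕ} (hv : v ∈ p.parts) : v ≤ n := by
  obtain ⟨t, ht⟩ := Multiset.exists_cons_of_mem hv
  have := p.parts_sum
  rw [ht, Multiset.sum_cons] at this
  omega

lemma count_good {n : ℕ} (p : Nat.Partition n) : Good n (fun v => p.parts.count v) := by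
  refine ⟨?_, ?_, ?_⟩
  · rw [Multiset.count_eq_zero]
    intro h; exact absurd (p.parts_pos h) (by omega)
  · intro v hv
    rw [Multiset.count_eq_zero]
    intro h
    exact absurd (parts_le p h) (by omega)
  · have hparts : p.parts = Mk n (fun v => p.parts.count v) := by
      ext u
      rw [count_Mk]
      split
      · rfl
      · rw [Multiset.count_eq_zero]
        intro h
        exact absurd (parts_le p h) (by omega)
    conv_rhs => rw [← p.parts_sum, hparts, sum_Mk]


/-- the Glaisher–Franklin map on count functions -/
def phiC (r : ℕ) (f : ℕ → ℕ) : ℕ → ℕ := fun s =>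
  if s = 0 then 0 else f (baseR r s) / r ^ (nuR r s) % r + r * f (r * s)

/-- the inverse map on count functions -/
def psiC (r n : ℕ) (g : ℕ → ℕ) : ℕ → ℕ := fun v =>
  if v = 0 then 0
  else if r ∣ v then g (v / r) / r
  else ∑ k ∈ Finset.range (n+1), (g (v * r ^ k) % r) * r ^ k

lemma phiC_supp {r n : ℕ} {f : ℕ → ℕ} (hr : 2 ≤ r) (hf : Good n f) :
    ∀ s, n < s → phiC r f s = 0 := by
  intro s hs
  rw [phiC]
  rw [if_neg (by omega)]
  obtain ⟨heq, hnd, hbpos⟩ := dec_spec (s := s) hr (by omega)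
  have h1 : f (baseR r s) < r ^ nuR r s := by
    have h2 : baseR r s * f (baseR r s) ≤ n := hf.le _
    by_contra h
    push_neg at h
    have : baseR r s * r ^ nuR r s ≤ baseR r s * f (baseR r s) :=
      Nat.mul_le_mul_left _ h
    omega
  rw [Nat.div_eq_of_lt h1, Nat.zero_mod, hf.2.1 (r * s) (by nlinarith)]
  omega

lemma psiC_supp {r n : ℕ} {g : ℕ → ℕ} (hr : 2 ≤ r) (hg : Good n g) :
    ∀ v, n < v → psiC r n g v = 0 := by
  intro v hv
  rw [psiC]
  rw [if_neg (by omega)]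
  split
  · next hdvd =>
    obtain ⟨u, rfl⟩ := hdvd
    have hu : 0 < u := Nat.pos_of_ne_zero (by rintro rfl; rw [mul_zero] at hv; omega)
    rw [Nat.mul_div_cancel_left u (by omega)]
    have h2 : u * g u ≤ n := hg.le u
    have : g u < r := by nlinarith
    exact Nat.div_eq_of_lt this
  · apply Finset.sum_eq_zero
    intro k _
    have : n < v * r ^ k := by
      calc n < v := hv
      _ ≤ v * r ^ k := Nat.le_mul_of_pos_right v (Nat.pow_pos (by omega))
    rw [hg.2.1 _ this]
    simp

/-- reindexing sum over s as sum over (base, exponent) pairs -/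
lemma RL {r : ℕ} (hr : 2 ≤ r) (n : ℕ) (H : ℕ → ℕ)
    (hsupp : ∀ s, H s ≠ 0 → 0 < s ∧ s ≤ n) :
    ∑ s ∈ Finset.range (n+1), H s
      = ∑ p ∈ ((Finset.range (n+1)).filter (fun i => ¬ r ∣ i)) ×ˢ Finset.range (n+1),
          H (p.1 * r ^ p.2) := by
  rw [← Finset.sum_filter_ne_zero (Finset.range (n+1))]
  rw [← Finset.sum_filter_ne_zero
    (((Finset.range (n+1)).filter (fun i => ¬ r ∣ i)) ×ˢ Finset.range (n+1))]
  refine Finset.sum_nbij' (i := fun s => (baseR r s, nuR r s))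
    (j := fun p => p.1 * r ^ p.2) ?_ ?_ ?_ ?_ ?_
  · intro s hs
    rw [Finset.mem_filter, Finset.mem_range] at hs
    obtain ⟨hsr, hne⟩ := hs
    obtain ⟨hspos, hsn⟩ := hsupp s hne
    obtain ⟨heq, hnd, hbpos⟩ := dec_spec (s := s) hr hspos
    rw [Finset.mem_filter]
    constructor
    · rw [Finset.mem_product, Finset.mem_filter, Finset.mem_range, Finset.mem_range]
      refine ⟨⟨?_, hnd⟩, ?_⟩
      · have : baseR r s ≤ s := Nat.div_le_self _ _
        omega
      · exact nuR_le hr hspos hsn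
    · simpa [heq] using hne
  · intro p hp
    rw [Finset.mem_filter] at hp
    obtain ⟨hsupmem, hne⟩ := hp
    obtain ⟨hpos, hle⟩ := hsupp _ hne
    rw [Finset.mem_filter, Finset.mem_range]
    exact ⟨by omega, hne⟩
  · intro s hs
    rw [Finset.mem_filter, Finset.mem_range] at hs
    obtain ⟨hsr, hne⟩ := hs
    obtain ⟨hspos, hsn⟩ := hsupp s hne
    dsimp only
    exact (dec_spec hr hspos).1
  · intro p hp
    rw [Finset.mem_filter, Finset.mem_product, Finset.mem_filter] at hp
    obtain ⟨⟨⟨_, hnd⟩, _⟩, _⟩ := hp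
    ext
    · exact baseR_enc hr hnd _
    · exact nuR_enc hr hnd _
  · intro s hs
    rw [Finset.mem_filter, Finset.mem_range] at hs
    obtain ⟨hsr, hne⟩ := hs
    obtain ⟨hspos, hsn⟩ := hsupp s hne
    dsimp only
    rw [(dec_spec hr hspos).1]

/-- reindexing sum over multiples of r -/
lemma RL2 {r : ℕ} (hr : 2 ≤ r) (n : ℕ) (H : ℕ → ℕ)
    (hsupp : ∀ s, H (r * s) ≠ 0 → r * s ≤ n) :
    ∑ s ∈ Finset.range (n+1), H (r * s)
      = ∑ v ∈ (Finset.range (n+1)).filter (fun v => r ∣ v), H v := by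
  rw [← Finset.sum_filter_ne_zero (Finset.range (n+1))]
  rw [← Finset.sum_filter_ne_zero ((Finset.range (n+1)).filter (fun v => r ∣ v))]
  refine Finset.sum_nbij' (i := fun s => r * s) (j := fun v => v / r) ?_ ?_ ?_ ?_ ?_
  · intro s hs
    rw [Finset.mem_filter, Finset.mem_range] at hs
    rw [Finset.mem_filter, Finset.mem_filter, Finset.mem_range]
    have := hsupp s hs.2
    exact ⟨⟨by omega, Dvd.intro s rfl⟩, hs.2⟩
  · intro v hv
    rw [Finset.mem_filter, Finset.mem_filter, Finset.mem_range] at hv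
    obtain ⟨⟨hvr, hdvd⟩, hne⟩ := hv
    rw [Finset.mem_filter, Finset.mem_range]
    have hle : v / r ≤ v := Nat.div_le_self _ _
    rw [Nat.mul_div_cancel' hdvd]
    exact ⟨by omega, hne⟩
  · intro s hs
    rw [Finset.mem_filter, Finset.mem_range] at hs
    exact Nat.mul_div_cancel_left s (by omega)
  · intro v hv
    rw [Finset.mem_filter, Finset.mem_filter, Finset.mem_range] at hv
    exact Nat.mul_div_cancel' hv.1.2
  · intro s _
    rfl


lemma phiC_good {r n : ℕ} {f : ℕ → ℕ} (hr : 2 ≤ r) (hf : Good n f) :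
    Good n (phiC r f) := by
  refine ⟨by rw [phiC]; simp, phiC_supp hr hf, ?_⟩
  have hsplit : ∀ s, s * phiC r f s
      = s * (f (baseR r s) / r ^ nuR r s % r) + (r * s) * f (r * s) := by
    intro s
    rcases Nat.eq_zero_or_pos s with rfl | hs
    · rw [phiC]; simp [hf.1]
    · rw [phiC, if_neg (by omega)]; ring
  rw [Finset.sum_congr rfl (fun s _ => hsplit s), Finset.sum_add_distrib]
  have h1 : ∑ s ∈ Finset.range (n+1), s * (f (baseR r s) / r ^ nuR r s % r)
      = ∑ i ∈ (Finset.range (n+1)).filter (fun i => ¬ r ∣ i), i * f i := by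
    rw [RL hr n (fun s => s * (f (baseR r s) / r ^ nuR r s % r)) ?hsupp]
    case hsupp =>
      intro s hne
      have hs : 0 < s := by
        rcases Nat.eq_zero_or_pos s with rfl | hs
        · simp at hne
        · exact hs
      refine ⟨hs, ?_⟩
      obtain ⟨heq, hnd, hbpos⟩ := dec_spec (s := s) hr hs
      have hdig : f (baseR r s) / r ^ nuR r s % r ≠ 0 := by
        intro h; rw [h, mul_zero] at hne; exact hne rfl
      have hge : r ^ nuR r s ≤ f (baseR r s) := by
        by_contra h
        push_neg at h
        rw [Nat.div_eq_of_lt h] at hdig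
        simp at hdig
      have := hf.le (baseR r s)
      calc s = baseR r s * r ^ nuR r s := heq.symm
      _ ≤ baseR r s * f (baseR r s) := Nat.mul_le_mul_left _ hge
      _ ≤ n := hf.le _
    rw [Finset.sum_product]
    refine Finset.sum_congr rfl fun i hi => ?_
    rw [Finset.mem_filter, Finset.mem_range] at hi
    obtain ⟨hir, hnd⟩ := hi
    have hipos : 0 < i := by
      rcases Nat.eq_zero_or_pos i with rfl | h
      · exact absurd (dvd_zero r) hnd
      · exact h
    have hcong : ∀ k ∈ Finset.range (n+1),
        (i * r ^ k) * (f (baseR r (i * r ^ k)) / r ^ nuR r (i * r ^ k) % r)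
          = i * (f i / r ^ k % r * r ^ k) := by
      intro k _
      rw [baseR_enc hr hnd, nuR_enc hr hnd]
      ring
    rw [Finset.sum_congr rfl hcong, ← Finset.mul_sum]
    congr 1
    apply sum_digits hr
    have h1 : f i ≤ n := by have := hf.le i; nlinarith
    have h2 : n + 1 < 2 ^ (n+1) := Nat.lt_two_pow_self
    have h3 : (2:ℕ) ^ (n+1) ≤ r ^ (n+1) := Nat.pow_le_pow_left hr _
    omega
  have h2 : ∑ s ∈ Finset.range (n+1), (r * s) * f (r * s)
      = ∑ v ∈ (Finset.range (n+1)).filter (fun v => r ∣ v), v * f v := by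
    apply RL2 hr n (fun v => v * f v)
    intro s hne
    have hpos : 0 < f (r * s) := by
      rcases Nat.eq_zero_or_pos (f (r * s)) with h | h
      · rw [h, mul_zero] at hne; exact absurd rfl hne
      · exact h
    calc r * s ≤ (r * s) * f (r * s) := Nat.le_mul_of_pos_right _ hpos
    _ ≤ n := hf.le _
  rw [h1, h2, add_comm, Finset.sum_filter_add_sum_filter_not]
  exact hf.2.2

lemma psiC_good {r n : ℕ} {g : ℕ → ℕ} (hr : 2 ≤ r) (hg : Good n g) :
    Good n (psiC r n g) := by
  refine ⟨by rw [psiC]; simp, psiC_supp hr hg, ?_⟩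
  rw [← Finset.sum_filter_add_sum_filter_not (Finset.range (n+1)) (fun v => r ∣ v)]
  have h1 : ∑ v ∈ (Finset.range (n+1)).filter (fun v => r ∣ v), v * psiC r n g v
      = ∑ s ∈ Finset.range (n+1), (r * s) * (g s / r) := by
    have hptw : ∀ v ∈ (Finset.range (n+1)).filter (fun v => r ∣ v),
        v * psiC r n g v = v * (g (v / r) / r) := by
      intro v hv
      rw [Finset.mem_filter] at hv
      rcases Nat.eq_zero_or_pos v with rfl | hvpos
      · simp [psiC]
      · rw [psiC, if_neg (by omega), if_pos hv.2]
    rw [Finset.sum_congr rfl hptw]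
    rw [← RL2 hr n (fun v => v * (g (v / r) / r)) ?hsupp]
    case hsupp =>
      intro s hne
      rw [Nat.mul_div_cancel_left s (by omega)] at hne
      have hgs : r ≤ g s := by
        by_contra h
        push_neg at h
        rw [Nat.div_eq_of_lt h, mul_zero] at hne
        exact hne rfl
      have hs : 0 < s := by
        rcases Nat.eq_zero_or_pos s with rfl | h
        · rw [hg.1] at hgs; omega
        · exact h
      calc r * s ≤ g s * s := Nat.mul_le_mul_right s hgs
      _ = s * g s := mul_comm _ _
      _ ≤ n := hg.le s
    refine Finset.sum_congr rfl fun s _ => ?_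
    rw [Nat.mul_div_cancel_left s (by omega)]
  have h2 : ∑ v ∈ (Finset.range (n+1)).filter (fun v => ¬ r ∣ v), v * psiC r n g v
      = ∑ u ∈ Finset.range (n+1), u * (g u % r) := by
    have hptw : ∀ v ∈ (Finset.range (n+1)).filter (fun v => ¬ r ∣ v),
        v * psiC r n g v
          = ∑ k ∈ Finset.range (n+1), (v * r ^ k) * (g (v * r ^ k) % r) := by
      intro v hv
      rw [Finset.mem_filter] at hv
      have hvpos : 0 < v := by
        rcases Nat.eq_zero_or_pos v with rfl | h
        · exact absurd (dvd_zero r) hv.2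
        · exact h
      rw [psiC, if_neg (by omega), if_neg hv.2, Finset.mul_sum]
      refine Finset.sum_congr rfl fun k _ => ?_
      ring
    rw [Finset.sum_congr rfl hptw, ← Finset.sum_product']
    rw [← RL hr n (fun u => u * (g u % r)) ?hsupp]
    case hsupp =>
      intro u hne
      have hgu : 0 < g u := by
        rcases Nat.eq_zero_or_pos (g u) with h | h
        · rw [h] at hne; simp at hne
        · exact h
      have hu : 0 < u := by
        rcases Nat.eq_zero_or_pos u with rfl | h
        · rw [hg.1] at hgu; omega
        · exact h
      refine ⟨hu, ?_⟩
      calc u ≤ u * g u := Nat.le_mul_of_pos_right _ hgu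
      _ ≤ n := hg.le u
  rw [h1, h2, ← Finset.sum_add_distrib]
  have hptw : ∀ s ∈ Finset.range (n+1),
      (r * s) * (g s / r) + s * (g s % r) = s * g s := by
    intro s _
    have h := Nat.div_add_mod (g s) r
    calc (r * s) * (g s / r) + s * (g s % r) = s * (r * (g s / r) + g s % r) := by ring
    _ = s * g s := by rw [h]
  rw [Finset.sum_congr rfl hptw]
  exact hg.2.2


lemma psiC_phiC {r n : ℕ} {f : ℕ → ℕ} (hr : 2 ≤ r) (hf : Good n f) (v : ℕ) :
    psiC r n (phiC r f) v = f v := by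
  rcases Nat.eq_zero_or_pos v with rfl | hv
  · rw [psiC]; simp [hf.1]
  rcases le_or_gt v n with hvn | hvn
  swap
  · rw [psiC_supp hr (phiC_good hr hf) v hvn, hf.2.1 v hvn]
  by_cases hdvd : r ∣ v
  · rw [psiC, if_neg (by omega), if_pos hdvd]
    have huv : r * (v / r) = v := Nat.mul_div_cancel' hdvd
    have hu : 0 < v / r := by
      rcases Nat.eq_zero_or_pos (v / r) with h | h
      · rw [h, mul_zero] at huv; omega
      · exact h
    rw [phiC, if_neg (by omega), huv]
    have hdig : f (baseR r (v / r)) / r ^ nuR r (v / r) % r < r := Nat.mod_lt _ (by omega)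
    rw [Nat.add_mul_div_left _ _ (show 0 < r by omega), Nat.div_eq_of_lt hdig, zero_add]
  · rw [psiC, if_neg (by omega), if_neg hdvd]
    have hptw : ∀ k ∈ Finset.range (n+1),
        phiC r f (v * r ^ k) % r * r ^ k = f v / r ^ k % r * r ^ k := by
      intro k _
      have hne : v * r ^ k ≠ 0 := by positivity
      rw [phiC, if_neg hne, baseR_enc hr hdvd, nuR_enc hr hdvd,
        Nat.add_mul_mod_self_left, Nat.mod_mod_of_dvd _ dvd_rfl]
    rw [Finset.sum_congr rfl hptw]
    apply sum_digits hr
    have h1 : f v ≤ n := by have := hf.le v; nlinarith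
    have h2 : n + 1 < 2 ^ (n+1) := Nat.lt_two_pow_self
    have h3 : (2:ℕ) ^ (n+1) ≤ r ^ (n+1) := Nat.pow_le_pow_left hr _
    omega

lemma phiC_psiC {r n : ℕ} {g : ℕ → ℕ} (hr : 2 ≤ r) (hg : Good n g) (s : ℕ) :
    phiC r (psiC r n g) s = g s := by
  rcases Nat.eq_zero_or_pos s with rfl | hs
  · rw [phiC]; simp [hg.1]
  rcases le_or_gt s n with hsn | hsn
  swap
  · rw [phiC_supp hr (psiC_good hr hg) s hsn, hg.2.1 s hsn]
  obtain ⟨heq, hnd, hbpos⟩ := dec_spec (s := s) hr hs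
  rw [phiC, if_neg (by omega)]
  have hA : psiC r n g (r * s) = g s / r := by
    rw [psiC, if_neg (by positivity), if_pos (Dvd.intro s rfl),
      Nat.mul_div_cancel_left s (by omega)]
  have hB : psiC r n g (baseR r s)
      = ∑ k ∈ Finset.range (n+1), (g (baseR r s * r ^ k) % r) * r ^ k := by
    rw [psiC, if_neg (by omega), if_neg hnd]
  rw [hA, hB]
  rw [digit_of_sum hr (nuR r s) (n+1) (fun k => g (baseR r s * r ^ k) % r)
    (fun k => Nat.mod_lt _ (by omega)) (nuR_le hr hs hsn)]
  rw [heq]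
  exact Nat.mod_add_div (g s) r


lemma filter_toFinset {n : ℕ} (p : Nat.Partition n) (P : ℕ → Prop) [DecidablePred P] :
    p.parts.toFinset.filter P
      = (Finset.range (n+1)).filter (fun v => 0 < p.parts.count v ∧ P v) := by
  ext v
  simp only [Finset.mem_filter, Multiset.mem_toFinset, Finset.mem_range]
  constructor
  · rintro ⟨hv, hP⟩
    exact ⟨by have := parts_le p hv; omega, Multiset.count_pos.mpr hv, hP⟩
  · rintro ⟨_, h1, hP⟩
    exact ⟨Multiset.count_pos.mp h1, hP⟩

lemma cardO_phi {r n : ℕ} {f : ℕ → ℕ} (hr : 2 ≤ r) (hf : Good n f) :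
    ((Finset.range (n+1)).filter (fun u => 0 < f u ∧ r ∣ u)).card
      = ((Finset.range (n+1)).filter (fun v => 0 < phiC r f v ∧ r ≤ phiC r f v)).card := by
  refine Finset.card_nbij' (i := fun u => u / r) (j := fun v => r * v) ?_ ?_ ?_ ?_
  · intro u hu
    dsimp only
    rw [Finset.mem_coe, Finset.mem_filter, Finset.mem_range] at hu
    obtain ⟨hun, hfu, hdvd⟩ := hu
    have hu1 : 0 < u := by
      rcases Nat.eq_zero_or_pos u with rfl | h
      · rw [hf.1] at hfu; omega
      · exact h
    have hur : r ≤ u := Nat.le_of_dvd hu1 hdvd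
    have huv : r * (u / r) = u := Nat.mul_div_cancel' hdvd
    have hv1 : 0 < u / r := Nat.div_pos hur (by omega)
    rw [Finset.mem_coe, Finset.mem_filter, Finset.mem_range]
    have hvn : u / r < n + 1 := by have := Nat.div_le_self u r; omega
    refine ⟨hvn, ?_⟩
    have : phiC r f (u / r)
        = f (baseR r (u / r)) / r ^ nuR r (u / r) % r + r * f (r * (u / r)) := by
      rw [phiC, if_neg (by omega)]
    rw [this, huv]
    have : r ≤ r * f u := Nat.le_mul_of_pos_right r hfu
    omega
  · intro v hv
    dsimp only
    rw [Finset.mem_coe, Finset.mem_filter, Finset.mem_range] at hv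
    obtain ⟨hvn, hpos, hge⟩ := hv
    have hv1 : 0 < v := by
      rcases Nat.eq_zero_or_pos v with rfl | h
      · rw [phiC] at hpos; simp at hpos
      · exact h
    have hphi : phiC r f v
        = f (baseR r v) / r ^ nuR r v % r + r * f (r * v) := by
      rw [phiC, if_neg (by omega)]
    have hdig : f (baseR r v) / r ^ nuR r v % r < r := Nat.mod_lt _ (by omega)
    have hfrv : 0 < f (r * v) := by
      rcases Nat.eq_zero_or_pos (f (r * v)) with h | h
      · rw [hphi, h, mul_zero, add_zero] at hge; omega
      · exact h
    rw [Finset.mem_coe, Finset.mem_filter, Finset.mem_range]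
    refine ⟨?_, hfrv, Dvd.intro v rfl⟩
    have h1 : r * v ≤ (r * v) * f (r * v) := Nat.le_mul_of_pos_right _ hfrv
    have h2 := hf.le (r * v)
    omega
  · intro u hu
    rw [Finset.mem_coe, Finset.mem_filter] at hu
    exact Nat.mul_div_cancel' hu.2.2
  · intro v _
    exact Nat.mul_div_cancel_left v (by omega)

lemma cardD_psi {r n : ℕ} {g : ℕ → ℕ} (hr : 2 ≤ r) (hg : Good n g) :
    ((Finset.range (n+1)).filter (fun v => 0 < g v ∧ r ≤ g v)).card
      = ((Finset.range (n+1)).filter (fun u => 0 < psiC r n g u ∧ r ∣ u)).card := by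
  refine Finset.card_nbij' (i := fun v => r * v) (j := fun u => u / r) ?_ ?_ ?_ ?_
  · intro v hv
    dsimp only
    rw [Finset.mem_coe, Finset.mem_filter, Finset.mem_range] at hv
    obtain ⟨hvn, hpos, hge⟩ := hv
    have hv1 : 0 < v := by
      rcases Nat.eq_zero_or_pos v with rfl | h
      · rw [hg.1] at hpos; omega
      · exact h
    rw [Finset.mem_coe, Finset.mem_filter, Finset.mem_range]
    have h1 : r * v ≤ v * g v := by
      calc r * v ≤ g v * v := Nat.mul_le_mul_right v hge
      _ = v * g v := mul_comm _ _
    have h2 := hg.le v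
    refine ⟨by omega, ?_, Dvd.intro v rfl⟩
    rw [psiC, if_neg (by positivity), if_pos (Dvd.intro v rfl),
      Nat.mul_div_cancel_left v (by omega)]
    exact Nat.div_pos hge (by omega)
  · intro u hu
    dsimp only
    rw [Finset.mem_coe, Finset.mem_filter, Finset.mem_range] at hu
    obtain ⟨hun, hpos, hdvd⟩ := hu
    have hu1 : 0 < u := by
      rcases Nat.eq_zero_or_pos u with rfl | h
      · rw [psiC] at hpos; simp at hpos
      · exact h
    rw [psiC, if_neg (by omega), if_pos hdvd] at hpos
    have hge : r ≤ g (u / r) := by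
      by_contra h
      push_neg at h
      rw [Nat.div_eq_of_lt h] at hpos
      omega
    rw [Finset.mem_coe, Finset.mem_filter, Finset.mem_range]
    have : u / r ≤ u := Nat.div_le_self u r
    exact ⟨by omega, by omega, hge⟩
  · intro v _
    exact Nat.mul_div_cancel_left v (by omega)
  · intro u hu
    rw [Finset.mem_coe, Finset.mem_filter] at hu
    exact Nat.mul_div_cancel' hu.2.2

end FranklinAux


/-- Franklin's identity: `|O_{j,r}(n)| = |D_{j,r}(n)|`. -/
theorem franklin_identity (n j r : ℕ) (hr : 2 ≤ r) :
    (setO j r n).card = (setD j r n).card := by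
  classical
  refine Finset.card_nbij'
    (i := fun p => FranklinAux.toPart (FranklinAux.phiC r (fun v => p.parts.count v))
      (FranklinAux.phiC_good hr (FranklinAux.count_good p)))
    (j := fun q => FranklinAux.toPart (FranklinAux.psiC r n (fun v => q.parts.count v))
      (FranklinAux.psiC_good hr (FranklinAux.count_good q)))
    ?_ ?_ ?_ ?_
  · intro p hp
    dsimp only
    rw [Finset.mem_coe, setO, Finset.mem_filter] at hp
    rw [Finset.mem_coe, setD, Finset.mem_filter]
    refine ⟨Finset.mem_univ _, ?_⟩
    rw [FranklinAux.filter_toFinset]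
    simp only [FranklinAux.count_toPart]
    rw [← FranklinAux.cardO_phi hr (FranklinAux.count_good p)]
    rw [FranklinAux.filter_toFinset] at hp
    exact hp.2
  · intro q hq
    dsimp only
    rw [Finset.mem_coe, setD, Finset.mem_filter] at hq
    rw [Finset.mem_coe, setO, Finset.mem_filter]
    refine ⟨Finset.mem_univ _, ?_⟩
    rw [FranklinAux.filter_toFinset]
    simp only [FranklinAux.count_toPart]
    rw [← FranklinAux.cardD_psi hr (FranklinAux.count_good q)]
    rw [FranklinAux.filter_toFinset] at hq
    exact hq.2
  · intro p _
    dsimp only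
    apply Nat.Partition.ext
    apply Multiset.ext.mpr
    intro u
    rw [FranklinAux.count_toPart]
    simp only [FranklinAux.count_toPart]
    exact FranklinAux.psiC_phiC hr (FranklinAux.count_good p) u
  · intro q _
    dsimp only
    apply Nat.Partition.ext
    apply Multiset.ext.mpr
    intro u
    rw [FranklinAux.count_toPart]
    simp only [FranklinAux.count_toPart]
    exact FranklinAux.phiC_psiC hr (FranklinAux.count_good q) u
end

section
/- For all non-negative integers n, the difference between the total number of parts in all partitions of n into odd parts and the total number of parts in all partitions of n into distinct parts equals |O_{1,2}(n)|, the number of partitions of n whose set of even parts has exactly one element, and also equals |D_{1,2}(n)|, the number of partitions of n with exactly one part repeated (Andrews' theorem, originally Beck's conjecture). -/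
/-!
# Euler's Partition Theorem

This file proves Theorem 45 from the [100 Theorems List](https://www.cs.ru.nl/~freek/100/).

The theorem concerns the counting of integer partitions -- ways of
writing a positive integer `n` as a sum of positive integer parts.

Specifically, Euler proved that the number of integer partitions of `n`
into *distinct* parts equals the number of partitions of `n` into *odd*
parts.

## Proof outline

The proof is based on the generating functions for odd and distinct partitions, which turn out to be
equal:

$$\prod_{i=0}^\infty \frac {1}{1-X^{2i+1}} = \prod_{i=0}^\infty (1+X^{i+1})$$

In fact, we do not take a limit: it turns out that comparing the `n`'th coefficients of the partial
products up to `m := n + 1` is sufficient.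

In particular, we

1. define the partial product for the generating function for odd partitions `partialOddGF m` :=
  $$\prod_{i=0}^m \frac {1}{1-X^{2i+1}}$$;
2. prove `oddGF_prop`: if `m` is big enough (`m * 2 > n`), the partial product's coefficient counts
  the number of odd partitions;
3. define the partial product for the generating function for distinct partitions
  `partialDistinctGF m` := $$\prod_{i=0}^m (1+X^{i+1})$$;
4. prove `distinctGF_prop`: if `m` is big enough (`m + 1 > n`), the `n`th coefficient of the
  partial product counts the number of distinct partitions of `n`;
5. prove `same_coeffs`: if m is big enough (`m ≥ n`), the `n`th coefficient of the partial products
  are equal;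
6. combine the above in `partition_theorem`.

## References
https://en.wikipedia.org/wiki/Partition_(number_theory)#Odd_parts_and_distinct_parts
-/


open PowerSeries

namespace Theorems100

noncomputable section

variable {α : Type*}

open Finset

open scoped Classical

/-- The partial product for the generating function for odd partitions.
TODO: As `m` tends to infinity, this converges (in the `X`-adic topology).

If `m` is sufficiently large, the `i`th coefficient gives the number of odd partitions of the
natural number `i`: proved in `oddGF_prop`.
It is stated for an arbitrary field `α`, though it usually suffices to use `ℚ` or `ℝ`.
-/
def partialOddGF (m : ℕ) [Field α] :=
  ∏ i ∈ range m, (1 - (X : PowerSeries α) ^ (2 * i + 1))⁻¹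

/-- The partial product for the generating function for distinct partitions.
TODO: As `m` tends to infinity, this converges (in the `X`-adic topology).

If `m` is sufficiently large, the `i`th coefficient gives the number of distinct partitions of the
natural number `i`: proved in `distinctGF_prop`.
It is stated for an arbitrary commutative semiring `α`, though it usually suffices to use `ℕ`, `ℚ`
or `ℝ`.
-/
def partialDistinctGF (m : ℕ) [CommSemiring α] :=
  ∏ i ∈ range m, (1 + (X : PowerSeries α) ^ (i + 1))

open Finset.HasAntidiagonal

universe u
variable {ι : Type u}

/-- A convenience constructor for the power series whose coefficients indicate a subset. -/
def indicatorSeries (α : Type*) [Semiring α] (s : Set ℕ) : PowerSeries α :=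
  PowerSeries.mk fun n => if n ∈ s then 1 else 0

theorem coeff_indicator (s : Set ℕ) [Semiring α] (n : ℕ) :
    coeff n (indicatorSeries α s) = if n ∈ s then 1 else 0 :=
  coeff_mk _ _

theorem coeff_indicator_pos (s : Set ℕ) [Semiring α] (n : ℕ) (h : n ∈ s) :
    coeff n (indicatorSeries α s) = 1 := by rw [coeff_indicator, if_pos h]

theorem coeff_indicator_neg (s : Set ℕ) [Semiring α] (n : ℕ) (h : n ∉ s) :
    coeff n (indicatorSeries α s) = 0 := by rw [coeff_indicator, if_neg h]

theorem constantCoeff_indicator (s : Set ℕ) [Semiring α] :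
    constantCoeff (indicatorSeries α s) = if 0 ∈ s then 1 else 0 :=
  rfl

theorem two_series (i : ℕ) [Semiring α] :
    1 + (X : PowerSeries α) ^ i.succ = indicatorSeries α {0, i.succ} := by
  ext n
  simp only [coeff_indicator, coeff_one, coeff_X_pow, Set.mem_insert_iff, Set.mem_singleton_iff,
    map_add]
  cases' n with d
  · simp [(Nat.succ_ne_zero i).symm]
  · simp [Nat.succ_ne_zero d]

theorem num_series' [Field α] (i : ℕ) :
    (1 - (X : PowerSeries α) ^ (i + 1))⁻¹ = indicatorSeries α {k | i + 1 ∣ k} := by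
  rw [PowerSeries.inv_eq_iff_mul_eq_one]
  · ext n
    cases n with
    | zero => simp [mul_sub, zero_pow, constantCoeff_indicator]
    | succ n =>
      simp only [coeff_one, if_false, mul_sub, mul_one, coeff_indicator,
        LinearMap.map_sub, reduceCtorEq]
      simp_rw [coeff_mul, coeff_X_pow, coeff_indicator, @boole_mul _ _ _ _]
      simp only [Set.mem_setOf_eq]; erw [sum_ite, sum_ite]
      simp_rw [@filter_filter _ _ _ _ _, sum_const_zero, add_zero, sum_const, nsmul_eq_mul, mul_one,
        sub_eq_iff_eq_add, zero_add]
      symm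
      split_ifs with h
      · suffices #{a ∈ antidiagonal (n + 1) | i + 1 ∣ a.fst ∧ a.snd = i + 1} = 1 by
          convert congr_arg ((↑) : ℕ → α) this; norm_cast
        rw [card_eq_one]
        cases' h with p hp
        refine ⟨((i + 1) * (p - 1), i + 1), ?_⟩
        ext ⟨a₁, a₂⟩
        simp only [mem_filter, Prod.mk.injEq, HasAntidiagonal.mem_antidiagonal, mem_singleton]
        constructor
        · rintro ⟨a_left, ⟨a, rfl⟩, rfl⟩
          refine ⟨?_, rfl⟩
          rw [Nat.mul_sub_left_distrib, ← hp, ← a_left, mul_one, Nat.add_sub_cancel]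
        · rintro ⟨rfl, rfl⟩
          match p with
          | 0 => rw [mul_zero] at hp; cases hp
          | p + 1 => rw [hp]; simp [mul_add]
      · suffices #{a ∈ antidiagonal (n + 1) | i + 1 ∣ a.fst ∧ a.snd = i + 1} = 0 by
          convert congr_arg ((↑) : ℕ → α) this; norm_cast
        rw [card_eq_zero]
        apply eq_empty_of_forall_notMem
        simp only [Prod.forall, mem_filter, not_and, HasAntidiagonal.mem_antidiagonal]
        rintro _ h₁ h₂ ⟨a, rfl⟩ rfl
        apply h
        simp [← h₂]
  · simp [zero_pow]

def mkOdd : ℕ ↪ ℕ :=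
  ⟨fun i => 2 * i + 1, fun x y h => by linarith⟩

-- The main workhorse of the partition theorem proof.
theorem partialGF_prop (α : Type*) [CommSemiring α] (n : ℕ) (s : Finset ℕ) (hs : ∀ i ∈ s, 0 < i)
    (c : ℕ → Set ℕ) (hc : ∀ i, i ∉ s → 0 ∈ c i) :
    #{p : n.Partition | (∀ j, p.parts.count j ∈ c j) ∧ ∀ j ∈ p.parts, j ∈ s} =
      coeff n (∏ i ∈ s, indicatorSeries α ((· * i) '' c i)) := by
  simp_rw [coeff_prod, coeff_indicator, prod_boole, sum_boole]
  apply congr_arg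
  simp only [mem_univ, forall_true_left, not_and, not_forall, exists_prop,
    Set.mem_image, not_exists]
  set φ : (a : Nat.Partition n) →
    a ∈ filter (fun p ↦ (∀ (j : ℕ), Multiset.count j p.parts ∈ c j) ∧ ∀ j ∈ p.parts, j ∈ s) univ →
    ℕ →₀ ℕ := fun p _ => {
      toFun := fun i => Multiset.count i p.parts • i
      support := Finset.filter (fun i => i ≠ 0) p.parts.toFinset
      mem_support_toFun := fun a => by
        simp only [smul_eq_mul, ne_eq, mul_eq_zero, Multiset.count_eq_zero]
        rw [not_or, not_not]
        simp only [Multiset.mem_toFinset, not_not, mem_filter] }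
  refine Finset.card_bij φ ?_ ?_ ?_
  · intro a ha
    simp only [φ, not_forall, not_exists, not_and, exists_prop, mem_filter]
    rw [mem_finsuppAntidiag]
    dsimp only [ne_eq, smul_eq_mul, id_eq, eq_mpr_eq_cast, le_eq_subset, Finsupp.coe_mk]
    simp only [mem_univ, forall_true_left, not_and, not_forall, exists_prop,
      mem_filter, true_and] at ha
    refine ⟨⟨?_, fun i ↦ ?_⟩, fun i _ ↦ ⟨a.parts.count i, ha.1 i, rfl⟩⟩
    · conv_rhs => simp [← a.parts_sum]
      rw [sum_multiset_count_of_subset _ s]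
      · simp only [smul_eq_mul]
      · intro i
        simp only [Multiset.mem_toFinset, not_not, mem_filter]
        apply ha.2
    · simp only [ne_eq, Multiset.mem_toFinset, not_not, mem_filter, and_imp]
      exact fun hi _ ↦ ha.2 i hi
  · intro p₁ hp₁ p₂ hp₂ h
    apply Nat.Partition.ext
    simp only [true_and, mem_univ, mem_filter] at hp₁ hp₂
    ext i
    simp only [φ, ne_eq, Multiset.mem_toFinset, not_not, smul_eq_mul, Finsupp.mk.injEq] at h
    by_cases hi : i = 0
    · rw [hi]
      rw [Multiset.count_eq_zero_of_notMem]
      · rw [Multiset.count_eq_zero_of_notMem]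
        intro a; exact Nat.lt_irrefl 0 (hs 0 (hp₂.2 0 a))
      intro a; exact Nat.lt_irrefl 0 (hs 0 (hp₁.2 0 a))
    · rw [← mul_left_inj' hi]
      rw [funext_iff] at h
      exact h.2 i
  · simp only [φ, mem_filter, mem_finsuppAntidiag, mem_univ, exists_prop, true_and, and_assoc]
    rintro f ⟨hf, hf₃, hf₄⟩
    have hf' : f ∈ finsuppAntidiag s n := mem_finsuppAntidiag.mpr ⟨hf, hf₃⟩
    simp only [mem_finsuppAntidiag] at hf'
    refine ⟨⟨∑ i ∈ s, Multiset.replicate (f i / i) i, ?_, ?_⟩, ?_, ?_, ?_⟩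
    · intro i hi
      simp only [exists_prop, Multiset.mem_sum, mem_map, Function.Embedding.coeFn_mk] at hi
      rcases hi with ⟨t, ht, z⟩
      apply hs
      rwa [Multiset.eq_of_mem_replicate z]
    · simp_rw [Multiset.sum_sum, Multiset.sum_replicate, Nat.nsmul_eq_mul]
      rw [← hf'.1]
      refine sum_congr rfl fun i hi => Nat.div_mul_cancel ?_
      rcases hf₄ i hi with ⟨w, _, hw₂⟩
      rw [← hw₂]
      exact dvd_mul_left _ _
    · intro i
      simp_rw [Multiset.count_sum', Multiset.count_replicate, sum_ite_eq']
      split_ifs with h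
      · rcases hf₄ i h with ⟨w, hw₁, hw₂⟩
        rwa [← hw₂, Nat.mul_div_cancel _ (hs i h)]
      · exact hc _ h
    · intro i hi
      rw [Multiset.mem_sum] at hi
      rcases hi with ⟨j, hj₁, hj₂⟩
      rwa [Multiset.eq_of_mem_replicate hj₂]
    · ext i
      simp_rw [Multiset.count_sum', Multiset.count_replicate, sum_ite_eq']
      simp only [ne_eq, Multiset.mem_toFinset, not_not, smul_eq_mul, ite_mul,
        zero_mul, Finsupp.coe_mk]
      split_ifs with h
      · apply Nat.div_mul_cancel
        rcases hf₄ i h with ⟨w, _, hw₂⟩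
        apply Dvd.intro_left _ hw₂
      · apply symm
        rw [← Finsupp.notMem_support_iff]
        exact notMem_mono hf'.2 h

theorem partialOddGF_prop [Field α] (n m : ℕ) :
    #{p : n.Partition | ∀ j ∈ p.parts, j ∈ (range m).map mkOdd} = coeff n (partialOddGF m : PowerSeries α) := by
  rw [partialOddGF]
  convert partialGF_prop α n
    ((range m).map mkOdd) _ (fun _ => Set.univ) (fun _ _ => trivial) using 2
  · congr
    simp only [true_and, forall_const, Set.mem_univ]
  · rw [Finset.prod_map]
    simp_rw [num_series']
    congr! 2 with x
    ext k
    constructor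
    · rintro ⟨p, rfl⟩
      refine ⟨p, ⟨⟩, ?_⟩
      apply mul_comm
    rintro ⟨a_w, -, rfl⟩
    apply Dvd.intro_left a_w rfl
  · intro i
    rw [mem_map]
    rintro ⟨a, -, rfl⟩
    exact Nat.succ_pos _

/-- If m is big enough, the partial product's coefficient counts the number of odd partitions -/
theorem oddGF_prop [Field α] (n m : ℕ) (h : n < m * 2) :
    #(Nat.Partition.odds n) = coeff n (partialOddGF m : PowerSeries α) := by
  rw [← partialOddGF_prop, Nat.Partition.odds, Nat.Partition.restricted]
  congr with p
  apply forall₂_congr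
  intro i hi
  have hin : i ≤ n := by
    simpa [p.parts_sum] using Multiset.single_le_sum (fun _ _ => Nat.zero_le _) _ hi
  simp only [mkOdd, exists_prop, mem_range, Function.Embedding.coeFn_mk, mem_map]
  constructor
  · intro hi₂
    have := Nat.mod_add_div i 2
    rw [Nat.not_even_iff] at hi₂
    rw [hi₂, add_comm] at this
    refine ⟨i / 2, ?_, this⟩
    rw [Nat.div_lt_iff_lt_mul zero_lt_two]
    exact lt_of_le_of_lt hin h
  · rintro ⟨a, -, rfl⟩
    rw [even_iff_two_dvd]
    apply Nat.two_not_dvd_two_mul_add_one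

theorem partialDistinctGF_prop [CommSemiring α] (n m : ℕ) :
    #{p : n.Partition |
        p.parts.Nodup ∧ ∀ j ∈ p.parts, j ∈ (range m).map ⟨Nat.succ, Nat.succ_injective⟩} =
      coeff n (partialDistinctGF m : PowerSeries α) := by
  rw [partialDistinctGF]
  convert partialGF_prop α n
    ((range m).map ⟨Nat.succ, Nat.succ_injective⟩) _ (fun _ => {0, 1}) (fun _ _ => Or.inl rfl)
    using 2
  · congr! with p
    rw [Multiset.nodup_iff_count_le_one]
    congr! 1 with i
    rcases Multiset.count i p.parts with (_ | _ | ms) <;> simp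
  · simp_rw [Finset.prod_map, two_series]
    congr with i
    simp [Set.image_pair]
  · simp only [mem_map, Function.Embedding.coeFn_mk]
    rintro i ⟨_, _, rfl⟩
    apply Nat.succ_pos

/-- If m is big enough, the partial product's coefficient counts the number of distinct partitions
-/
theorem distinctGF_prop [CommSemiring α] (n m : ℕ) (h : n < m + 1) :
    #(Nat.Partition.distincts n) = coeff n (partialDistinctGF m : PowerSeries α) := by
  rw [← partialDistinctGF_prop, Nat.Partition.distincts]
  congr with p
  apply (and_iff_left _).symm
  intro i hi
  have : i ≤ n := by
    simpa [p.parts_sum] using Multiset.single_le_sum (fun _ _ => Nat.zero_le _) _ hi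
  simp only [mkOdd, exists_prop, mem_range, Function.Embedding.coeFn_mk, mem_map]
  refine ⟨i - 1, ?_, Nat.succ_pred_eq_of_pos (p.parts_pos hi)⟩
  rw [tsub_lt_iff_right (Nat.one_le_iff_ne_zero.mpr (p.parts_pos hi).ne')]
  exact lt_of_le_of_lt this h

/-- The key proof idea for the partition theorem, showing that the generating functions for both
sequences are ultimately the same (since the factor converges to 0 as m tends to infinity).
It's enough to not take the limit though, and just consider large enough `m`.
-/
theorem same_gf [Field α] (m : ℕ) :
    (partialOddGF m * (range m).prod fun i => 1 - (X : PowerSeries α) ^ (m + i + 1)) =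
      partialDistinctGF m := by
  rw [partialOddGF, partialDistinctGF]
  induction' m with m ih
  · simp
  set! π₀ : PowerSeries α := ∏ i ∈ range m, (1 - X ^ (m + 1 + i + 1)) with hπ₀
  set! π₁ : PowerSeries α := ∏ i ∈ range m, (1 - X ^ (2 * i + 1))⁻¹ with hπ₁
  set! π₂ : PowerSeries α := ∏ i ∈ range m, (1 - X ^ (m + i + 1)) with hπ₂
  set! π₃ : PowerSeries α := ∏ i ∈ range m, (1 + X ^ (i + 1)) with hπ₃
  rw [← hπ₃] at ih
  have h : constantCoeff (1 - X ^ (2 * m + 1) : PowerSeries α) ≠ 0 := by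
    rw [RingHom.map_sub, RingHom.map_pow, constantCoeff_one, constantCoeff_X,
      zero_pow (2 * m).succ_ne_zero, sub_zero]
    exact one_ne_zero
  calc
    (∏ i ∈ range (m + 1), (1 - X ^ (2 * i + 1))⁻¹) *
          ∏ i ∈ range (m + 1), (1 - X ^ (m + 1 + i + 1)) =
        π₁ * (1 - X ^ (2 * m + 1))⁻¹ * (π₀ * (1 - X ^ (m + 1 + m + 1))) := by
      rw [prod_range_succ _ m, ← hπ₁, prod_range_succ _ m, ← hπ₀]
    _ = π₁ * (1 - X ^ (2 * m + 1))⁻¹ * (π₀ * ((1 + X ^ (m + 1)) * (1 - X ^ (m + 1)))) := by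
      rw [← sq_sub_sq, one_pow, add_assoc _ m 1, ← two_mul (m + 1), pow_mul']
    _ = π₀ * (1 - X ^ (m + 1)) * (1 - X ^ (2 * m + 1))⁻¹ * (π₁ * (1 + X ^ (m + 1))) := by ring
    _ =
        (∏ i ∈ range (m + 1), (1 - X ^ (m + 1 + i))) * (1 - X ^ (2 * m + 1))⁻¹ *
          (π₁ * (1 + X ^ (m + 1))) := by
      rw [prod_range_succ', add_zero, hπ₀]; simp_rw [← add_assoc]
    _ = π₂ * (1 - X ^ (m + 1 + m)) * (1 - X ^ (2 * m + 1))⁻¹ * (π₁ * (1 + X ^ (m + 1))) := by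
      rw [add_right_comm, hπ₂, ← prod_range_succ]; simp_rw [add_right_comm]
    _ = π₂ * (1 - X ^ (2 * m + 1)) * (1 - X ^ (2 * m + 1))⁻¹ * (π₁ * (1 + X ^ (m + 1))) := by
      rw [two_mul, add_right_comm _ m 1]
    _ = (1 - X ^ (2 * m + 1)) * (1 - X ^ (2 * m + 1))⁻¹ * π₂ * (π₁ * (1 + X ^ (m + 1))) := by ring
    _ = π₂ * (π₁ * (1 + X ^ (m + 1))) := by rw [PowerSeries.mul_inv_cancel _ h, one_mul]
    _ = π₁ * π₂ * (1 + X ^ (m + 1)) := by ring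
    _ = π₃ * (1 + X ^ (m + 1)) := by rw [ih]
    _ = _ := by rw [prod_range_succ]

theorem same_coeffs [Field α] (m n : ℕ) (h : n ≤ m) :
    coeff n (partialOddGF m : PowerSeries α) = coeff n (partialDistinctGF m : PowerSeries α) := by
  rw [← same_gf, coeff_mul_prod_one_sub_of_lt_order]
  rintro i -
  rw [order_X_pow]
  exact mod_cast Nat.lt_succ_of_le (le_add_right h)

theorem partition_theorem (n : ℕ) : #(Nat.Partition.odds n) = #(Nat.Partition.distincts n) := by
  suffices (#(Nat.Partition.odds n) : ℚ) = #(Nat.Partition.distincts n) from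
    mod_cast this
  rw [distinctGF_prop n (n + 1) (by linarith)]
  rw [oddGF_prop n (n + 1) (by linarith)]
  apply same_coeffs (n + 1) n n.le_succ

end

end Theorems100




open Finset

namespace AndrewsBeck
open Nat Nat.Partition Multiset

def P (m : ℕ) : ℕ := (distincts m).card
def Po (m : ℕ) : ℕ := (odds m).card

lemma Po_eq_P (m : ℕ) : Po m = P m := Theorems100.partition_theorem m

def dd (b m : ℕ) : ℕ := ((distincts m).filter (fun q => b ∈ q.parts)).card

lemma mem_odds_iff {n : ℕ} (p : Nat.Partition n) :
    p ∈ odds n ↔ ∀ i ∈ p.parts, ¬Even i := by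
  simp [odds, restricted, Finset.mem_filter]

lemma mem_distincts_iff {n : ℕ} (p : Nat.Partition n) :
    p ∈ distincts n ↔ p.parts.Nodup := by
  simp [distincts, Finset.mem_filter]

lemma part_le {n : ℕ} (p : Nat.Partition n) {i : ℕ} (hi : i ∈ p.parts) : i ≤ n :=
  p.parts_sum ▸ Multiset.le_sum_of_mem hi

lemma card_parts_le {n : ℕ} (p : Nat.Partition n) : Multiset.card p.parts ≤ n := by
  have : Multiset.card p.parts • 1 ≤ p.parts.sum :=
    Multiset.card_nsmul_le_sum (fun x hx => p.parts_pos hx)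
  simpa [p.parts_sum] using this

lemma dd_eq_zero {b m : ℕ} (h : m < b) : dd b m = 0 := by
  rw [dd, Finset.card_eq_zero, Finset.filter_eq_empty_iff]
  intro q _
  exact fun hb => absurd (part_le q hb) (not_le.2 h)

/-- remove `j` copies of `a` from a partition -/
def removeP {n : ℕ} (p : Nat.Partition n) (a j k : ℕ)
    (h : Multiset.replicate j a ≤ p.parts) (hk : k + j * a = n) : Nat.Partition k where
  parts := p.parts - Multiset.replicate j a
  parts_pos := fun hi => p.parts_pos (Multiset.mem_of_le (tsub_le_self) hi)
  parts_sum := by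
    have h2 : (p.parts - Multiset.replicate j a) + Multiset.replicate j a = p.parts :=
      tsub_add_cancel_of_le h
    have h3 := congrArg Multiset.sum h2
    rw [Multiset.sum_add, Multiset.sum_replicate, smul_eq_mul, p.parts_sum] at h3
    omega

@[simp] lemma removeP_parts {n : ℕ} (p : Nat.Partition n) (a j k : ℕ) (h hk) :
    (removeP p a j k h hk).parts = p.parts - Multiset.replicate j a := rfl

/-- add `j` copies of `a` to a partition -/
def addP {m : ℕ} (q : Nat.Partition m) (a j n : ℕ) (ha : 0 < a)
    (hn : m + j * a = n) : Nat.Partition n where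
  parts := Multiset.replicate j a + q.parts
  parts_pos := fun hi => by
    rcases Multiset.mem_add.1 hi with h | h
    · exact (Multiset.eq_of_mem_replicate h) ▸ ha
    · exact q.parts_pos h
  parts_sum := by
    rw [Multiset.sum_add, Multiset.sum_replicate, smul_eq_mul, q.parts_sum]
    omega

@[simp] lemma addP_parts {m : ℕ} (q : Nat.Partition m) (a j n : ℕ) (ha hn) :
    (addP q a j n ha hn).parts = Multiset.replicate j a + q.parts := rfl

lemma odds_count_card {n a j : ℕ} (ha : ¬Even a) (hj1 : 1 ≤ j) (hja : j * a ≤ n) :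
    ((odds n).filter fun p => j ≤ p.parts.count a).card = Po (n - j * a) := by
  have ha0 : 0 < a := by
    rcases Nat.eq_zero_or_pos a with h | h
    · exact absurd (h ▸ Even.zero) ha
    · exact h
  have hk : (n - j * a) + j * a = n := Nat.sub_add_cancel hja
  refine Finset.card_bij'
    (fun p hp => removeP p a j (n - j * a)
      (Multiset.le_count_iff_replicate_le.1 (Finset.mem_filter.1 hp).2) hk)
    (fun q _ => addP q a j n ha0 hk) ?_ ?_ ?_ ?_
  · -- maps into odds (n - j*a)
    intro p hp
    rw [mem_odds_iff]
    intro i hi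
    exact (mem_odds_iff p).1 (Finset.mem_filter.1 hp).1 i
      (Multiset.mem_of_le tsub_le_self hi)
  · -- maps back into filter
    intro q hq
    rw [Finset.mem_filter]
    constructor
    · rw [mem_odds_iff]
      intro i hi
      rcases Multiset.mem_add.1 hi with h | h
      · exact (Multiset.eq_of_mem_replicate h) ▸ ha
      · exact (mem_odds_iff q).1 hq i h
    · simp [Multiset.count_replicate]
  · intro p hp
    apply Nat.Partition.ext
    simp only [addP_parts, removeP_parts]
    exact add_tsub_cancel_of_le
      (Multiset.le_count_iff_replicate_le.1 (Finset.mem_filter.1 hp).2)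
  · intro q hq
    apply Nat.Partition.ext
    simp only [addP_parts, removeP_parts]
    exact add_tsub_cancel_left _ _

lemma nodup_count_le {s : Multiset ℕ} (h : s.Nodup) (b : ℕ) : s.count b ≤ 1 :=
  Multiset.nodup_iff_count_le_one.1 h b

lemma dd_succ {b m : ℕ} (hb : 0 < b) :
    ((distincts m).filter (fun q => b ∉ q.parts)).card = dd b (m + b) := by
  rw [show dd b (m + b) = ((distincts (m+b)).filter (fun q => b ∈ q.parts)).card from rfl]
  refine Finset.card_bij'
    (fun q _ => addP q b 1 (m + b) hb (by omega))
    (fun p hp => removeP p b 1 m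
      (Multiset.le_count_iff_replicate_le.1
        (by simpa using Multiset.one_le_count_iff_mem.2 (Finset.mem_filter.1 hp).2))
      (by omega)) ?_ ?_ ?_ ?_
  · intro q hq
    have hq' := Finset.mem_filter.1 hq
    rw [Finset.mem_filter, mem_distincts_iff]
    constructor
    · rw [addP_parts, Multiset.replicate_one, Multiset.singleton_add, Multiset.nodup_cons]
      exact ⟨hq'.2, (mem_distincts_iff q).1 hq'.1⟩
    · rw [addP_parts, Multiset.replicate_one, Multiset.singleton_add]
      exact Multiset.mem_cons_self b _
  · intro p hp
    have hp' := Finset.mem_filter.1 hp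
    have hnd := (mem_distincts_iff p).1 hp'.1
    rw [Finset.mem_filter, mem_distincts_iff]
    refine ⟨Multiset.nodup_of_le tsub_le_self hnd, ?_⟩
    rw [removeP_parts, ← Multiset.count_eq_zero]
    rw [Multiset.count_sub, Multiset.count_replicate_self]
    have h1 : p.parts.count b ≤ 1 := nodup_count_le hnd b
    omega
  · intro q hq
    apply Nat.Partition.ext
    simp only [addP_parts, removeP_parts]
    exact add_tsub_cancel_left _ _
  · intro p hp
    apply Nat.Partition.ext
    simp only [addP_parts, removeP_parts]
    exact add_tsub_cancel_of_le (Multiset.le_count_iff_replicate_le.1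
      (by simpa using Multiset.one_le_count_iff_mem.2 (Finset.mem_filter.1 hp).2))

lemma P_split {b m : ℕ} (hb : 0 < b) : P m = dd b m + dd b (m + b) := by
  rw [P, ← Finset.card_filter_add_card_filter_not (s := distincts m)
    (p := fun q => b ∈ q.parts), dd_succ hb]
  rfl

/-! ### Summation machinery -/

def Pif (n k : ℕ) : ℕ := if k ≤ n then P (n - k) else 0
def ddif (b n k : ℕ) : ℕ := if k ≤ n then dd b (n - k) else 0

/-- sum over odd multipliers -/
def SO (b n : ℕ) : ℕ := ∑ i ∈ Finset.range n, Pif n ((2*i+1)*b)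
/-- sum over even multipliers -/
def SE (b n : ℕ) : ℕ := ∑ i ∈ Finset.range n, Pif n ((2*i+2)*b)
/-- sum of `dd` over multiples -/
def UD (b n : ℕ) : ℕ := ∑ i ∈ Finset.range n, ddif b n ((i+1)*b)

lemma Pif_shift {b n k : ℕ} (hbn : b ≤ n) : Pif (n - b) k = Pif n (k + b) := by
  unfold Pif
  split_ifs with h1 h2 h2
  · congr 1; omega
  · omega
  · omega
  · rfl

lemma ddif_shift {c b n k : ℕ} (hbn : b ≤ n) : ddif c (n - b) k = ddif c n (k + b) := by
  unfold ddif
  split_ifs with h1 h2 h2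
  · congr 1; omega
  · omega
  · omega
  · rfl

lemma Pif_vanish {b n s : ℕ} (hb : 0 < b) (h : n < s) : Pif n (s * b) = 0 := by
  have := Nat.le_mul_of_pos_right s hb
  exact if_neg (by omega)

lemma ddif_vanish {c b n s : ℕ} (hb : 0 < b) (h : n < s) : ddif c n (s * b) = 0 := by
  have := Nat.le_mul_of_pos_right s hb
  exact if_neg (by omega)

lemma ib_ge (i b : ℕ) (hb : 0 < b) : i ≤ i * b := Nat.le_mul_of_pos_right i hb

/-- terms of `SE`-type vanish for `i ≥ n - b` -/
lemma SE_term_vanish {b n i : ℕ} (hb : 0 < b) (hi : n ≤ i + b) : Pif n ((2*i+2)*b) = 0 := by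
  apply if_neg
  intro h
  have h1 : (2*i+2)*b = 2*(i*b) + 2*b := by ring
  have h2 := ib_ge i b hb
  omega

lemma SO3_term_vanish {b n i : ℕ} (hb : 0 < b) (hi : n ≤ i + b) : Pif n ((2*i+3)*b) = 0 := by
  apply if_neg
  intro h
  have h1 : (2*i+3)*b = 2*(i*b) + 3*b := by ring
  have h2 := ib_ge i b hb
  omega

lemma UD2_term_vanish {b n i : ℕ} (hb : 0 < b) (hi : n ≤ i + b) : ddif b n ((i+2)*b) = 0 := by
  apply if_neg
  intro h
  have h1 : (i+2)*b = i*b + 2*b := by ring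
  have h2 := ib_ge i b hb
  omega

lemma sum_shrink {N m : ℕ} (f : ℕ → ℕ) (h : m ≤ N) (hf : ∀ i, m ≤ i → f i = 0) :
    ∑ i ∈ Finset.range N, f i = ∑ i ∈ Finset.range m, f i :=
  (Finset.sum_subset (Finset.range_subset_range.2 h)
    (fun i _ hi => hf i (by simpa using hi))).symm

lemma SO_term_vanish {b n i : ℕ} (hb : 0 < b) (hi : n < b) :
    Pif n ((2*i+1)*b) = 0 := by
  apply if_neg
  intro h
  have h1 : (2*i+1)*b = 2*(i*b) + b := by ring
  have h2 := ib_ge i b hb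
  omega

lemma SO_zero {b n : ℕ} (hb : 0 < b) (h : n < b) : SO b n = 0 := by
  apply Finset.sum_eq_zero
  intro i _
  exact SO_term_vanish hb h

lemma SE_zero {b n : ℕ} (hb : 0 < b) (h : n < b) : SE b n = 0 := by
  apply Finset.sum_eq_zero
  intro i _
  exact SE_term_vanish hb (by omega)

lemma UD_zero {b n : ℕ} (hb : 0 < b) (h : n < b) : UD b n = 0 := by
  apply Finset.sum_eq_zero
  intro i _
  apply if_neg
  intro hc
  have h1 : (i+1)*b = i*b + b := by ring
  have h2 := ib_ge i b hb
  omega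

lemma dd_zero' {b n : ℕ} (h : n < b) : dd b n = 0 := dd_eq_zero h

/-- R2 : `SE b n = SO b (n - b)` -/
lemma SE_eq_SO_sub {b n : ℕ} (hb : 0 < b) (hbn : b ≤ n) : SE b n = SO b (n - b) := by
  rw [SO]
  have hterm : ∀ i, Pif (n - b) ((2*i+1)*b) = Pif n ((2*i+2)*b) := by
    intro i
    rw [Pif_shift hbn]
    congr 1
    ring
  rw [Finset.sum_congr rfl (fun i _ => hterm i)]
  rw [SE, sum_shrink (N := n) (m := n - b) (fun i => Pif n ((2*i+2)*b)) (by omega)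
    (fun i hi => SE_term_vanish hb (by omega))]

/-- R1 : `SO b n = P (n-b) + SE b (n-b)` -/
lemma SO_rec {b n : ℕ} (hb : 0 < b) (hbn : b ≤ n) : SO b n = P (n - b) + SE b (n - b) := by
  obtain ⟨m, rfl⟩ : ∃ m, n = m + 1 := ⟨n - 1, by omega⟩
  rw [SO, Finset.sum_range_succ']
  have h0 : Pif (m+1) ((2*0+1)*b) = P (m+1-b) := by
    simp only [Pif]
    rw [if_pos (by omega)]
    congr 1
    omega
  have hterm : ∀ i, Pif ((m+1) - b) ((2*i+2)*b) = Pif (m+1) ((2*(i+1)+1)*b) := by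
    intro i
    rw [Pif_shift hbn]
    congr 1
    ring
  rw [h0, SE]
  rw [Finset.sum_congr rfl (fun i _ => hterm i)]
  rw [sum_shrink (N := m) (m := m+1-b) (fun i => Pif (m+1) ((2*(i+1)+1)*b))
    (show m+1-b ≤ m by omega)
    (fun i hi => by
      show Pif (m+1) ((2*(i+1)+1)*b) = 0
      have h3 : (2*(i+1)+1) = 2*i+3 := by ring
      rw [h3]
      exact SO3_term_vanish hb (by omega))]
  omega

/-- R3 : `UD b n = dd b (n-b) + UD b (n-b)` -/
lemma UD_rec {b n : ℕ} (hb : 0 < b) (hbn : b ≤ n) : UD b n = dd b (n - b) + UD b (n - b) := by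
  obtain ⟨m, rfl⟩ : ∃ m, n = m + 1 := ⟨n - 1, by omega⟩
  rw [UD, Finset.sum_range_succ']
  have h0 : ddif b (m+1) ((0+1)*b) = dd b (m+1-b) := by
    simp only [ddif]
    rw [if_pos (by omega)]
    congr 1
    omega
  have hterm : ∀ i, ddif b ((m+1) - b) ((i+1)*b) = ddif b (m+1) ((i+1+1)*b) := by
    intro i
    rw [ddif_shift hbn]
    congr 1
    ring
  rw [h0, UD]
  rw [Finset.sum_congr rfl (fun i _ => hterm i)]
  rw [sum_shrink (N := m) (m := m+1-b) (fun i => ddif b (m+1) ((i+1+1)*b))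
    (show m+1-b ≤ m by omega)
    (fun i hi => by
      show ddif b (m+1) ((i+1+1)*b) = 0
      have h3 : (i+1+1) = i+2 := by ring
      rw [h3]
      exact UD2_term_vanish hb (by omega))]
  omega

/-- M1 -/
lemma SO_eq_dd_add_SE (b : ℕ) (hb : 0 < b) : ∀ n, SO b n = dd b n + SE b n := by
  intro n
  induction n using Nat.strong_induction_on with
  | _ n ih =>
    rcases lt_or_ge n b with h | h
    · rw [SO_zero hb h, SE_zero hb h, dd_zero' h]
    · have hsub : n - b < n := by omega
      have ihs := ih (n - b) hsub
      have hps : P (n - b) = dd b (n - b) + dd b n := by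
        have := P_split (b := b) (m := n - b) hb
        rwa [show n - b + b = n by omega] at this
      have h1 := SO_rec hb h
      have h2 := SE_eq_SO_sub hb h
      omega

/-- M2 -/
lemma UD_eq_SE (b : ℕ) (hb : 0 < b) : ∀ n, UD b n = SE b n := by
  intro n
  induction n using Nat.strong_induction_on with
  | _ n ih =>
    rcases lt_or_ge n b with h | h
    · rw [UD_zero hb h, SE_zero hb h]
    · have hsub : n - b < n := by omega
      have ihs := ih (n - b) hsub
      have h1 := UD_rec hb h
      have h2 := SE_eq_SO_sub hb h
      have h3 := SO_eq_dd_add_SE b hb (n - b)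
      omega

/-! ### Bridging index lemmas -/

lemma bridge_SO {b n : ℕ} (hb : 0 < b) :
    (∑ a ∈ Finset.Icc 1 n, if ¬Even a ∧ a * b ≤ n then P (n - a * b) else 0) = SO b n := by
  rw [← Finset.sum_filter]
  have hso : SO b n = ∑ i ∈ (Finset.range n).filter (fun i => (2*i+1)*b ≤ n),
      P (n - (2*i+1)*b) := by
    rw [SO, Finset.sum_filter]
    exact Finset.sum_congr rfl (fun i _ => rfl)
  rw [hso]
  apply Finset.sum_nbij' (i := fun a => a / 2) (j := fun i => 2*i+1)
  · intro a ha
    simp only [Finset.mem_filter, Finset.mem_Icc, Finset.mem_range] at ha ⊢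
    rw [Nat.not_even_iff] at ha
    obtain ⟨⟨h1, h2⟩, h3, h4⟩ := ha
    have hab := ib_ge a b hb
    constructor
    · omega
    · have : 2 * (a/2) + 1 = a := by omega
      rw [this]
      exact h4
  · intro i hi
    simp only [Finset.mem_filter, Finset.mem_Icc, Finset.mem_range] at hi ⊢
    rw [Nat.not_even_iff]
    have := ib_ge (2*i+1) b hb
    omega
  · intro a ha
    simp only [Finset.mem_filter, Finset.mem_Icc] at ha
    rw [Nat.not_even_iff] at ha
    omega
  · intro i _
    omega
  · intro a ha
    simp only [Finset.mem_filter, Finset.mem_Icc] at ha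
    rw [Nat.not_even_iff] at ha
    have he : 2*(a/2)+1 = a := by omega
    rw [he]

lemma bridge_SE {b n : ℕ} (hb : 0 < b) :
    (∑ a ∈ Finset.Icc 1 n, if Even a ∧ a * b ≤ n then P (n - a * b) else 0) = SE b n := by
  rw [← Finset.sum_filter]
  have hse : SE b n = ∑ i ∈ (Finset.range n).filter (fun i => (2*i+2)*b ≤ n),
      P (n - (2*i+2)*b) := by
    rw [SE, Finset.sum_filter]
    exact Finset.sum_congr rfl (fun i _ => rfl)
  rw [hse]
  apply Finset.sum_nbij' (i := fun a => a / 2 - 1) (j := fun i => 2*i+2)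
  · intro a ha
    simp only [Finset.mem_filter, Finset.mem_Icc, Finset.mem_range] at ha ⊢
    rw [Nat.even_iff] at ha
    obtain ⟨⟨h1, h2⟩, h3, h4⟩ := ha
    have hab := ib_ge a b hb
    constructor
    · omega
    · have : 2 * (a/2 - 1) + 2 = a := by omega
      rw [this]
      exact h4
  · intro i hi
    simp only [Finset.mem_filter, Finset.mem_Icc, Finset.mem_range] at hi ⊢
    rw [Nat.even_iff]
    have := ib_ge (2*i+2) b hb
    omega
  · intro a ha
    simp only [Finset.mem_filter, Finset.mem_Icc] at ha
    rw [Nat.even_iff] at ha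
    omega
  · intro i _
    omega
  · intro a ha
    simp only [Finset.mem_filter, Finset.mem_Icc] at ha
    rw [Nat.even_iff] at ha
    have he : 2*(a/2-1)+2 = a := by omega
    rw [he]

lemma bridge_UD {b n : ℕ} (hb : 0 < b) :
    (∑ j ∈ Finset.Icc 1 n, if j * b ≤ n then dd b (n - j * b) else 0) = UD b n := by
  rw [← Finset.sum_filter]
  have hud : UD b n = ∑ i ∈ (Finset.range n).filter (fun i => (i+1)*b ≤ n),
      dd b (n - (i+1)*b) := by
    rw [UD, Finset.sum_filter]
    exact Finset.sum_congr rfl (fun i _ => rfl)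
  rw [hud]
  apply Finset.sum_nbij' (i := fun j => j - 1) (j := fun i => i + 1)
  · intro a ha
    simp only [Finset.mem_filter, Finset.mem_Icc, Finset.mem_range] at ha ⊢
    have hab := ib_ge a b hb
    obtain ⟨⟨h1, h2⟩, h3⟩ := ha
    constructor
    · omega
    · have : a - 1 + 1 = a := by omega
      rw [this]
      exact h3
  · intro i hi
    simp only [Finset.mem_filter, Finset.mem_Icc, Finset.mem_range] at hi ⊢
    have := ib_ge (i+1) b hb
    omega
  · intro a ha
    simp only [Finset.mem_filter, Finset.mem_Icc] at ha
    omega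
  · intro i _
    omega
  · intro a ha
    simp only [Finset.mem_filter, Finset.mem_Icc] at ha
    have he : a - 1 + 1 = a := by omega
    rw [he]

/-! ### Counting total number of parts -/

lemma mul_le_of_replicate_le {n : ℕ} (p : Nat.Partition n) {a j : ℕ}
    (h : Multiset.replicate j a ≤ p.parts) : j * a ≤ n := by
  have h2 := congrArg Multiset.sum (tsub_add_cancel_of_le h)
  rw [Multiset.sum_add, Multiset.sum_replicate, smul_eq_mul, p.parts_sum] at h2
  omega

lemma card_parts_eq_sum_count {n : ℕ} (p : Nat.Partition n) :
    Multiset.card p.parts = ∑ a ∈ Finset.Icc 1 n, p.parts.count a := by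
  rw [← Multiset.toFinset_sum_count_eq]
  apply Finset.sum_subset
  · intro a ha
    rw [Multiset.mem_toFinset] at ha
    exact Finset.mem_Icc.2 ⟨p.parts_pos ha, part_le p ha⟩
  · intro a _ ha
    exact Multiset.count_eq_zero_of_notMem (fun h => ha (Multiset.mem_toFinset.2 h))

lemma count_eq_sum_ite {n : ℕ} (p : Nat.Partition n) (a : ℕ) :
    p.parts.count a = ∑ j ∈ Finset.Icc 1 n, (if j ≤ p.parts.count a then 1 else 0) := by
  have hc : p.parts.count a ≤ n := le_trans (Multiset.count_le_card a _) (card_parts_le p)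
  rw [← Finset.card_filter]
  have : (Finset.Icc 1 n).filter (fun j => j ≤ p.parts.count a)
      = Finset.Icc 1 (p.parts.count a) := by
    ext j
    simp only [Finset.mem_filter, Finset.mem_Icc]
    omega
  rw [this, Nat.card_Icc]
  omega

lemma inner_card {n a j : ℕ} (ha : 1 ≤ a) (hj : 1 ≤ j) :
    ((odds n).filter fun p => j ≤ p.parts.count a).card
      = if ¬Even a ∧ a * j ≤ n then P (n - a * j) else 0 := by
  split_ifs with h
  · rw [show a * j = j * a from mul_comm a j, ← Po_eq_P]
    exact odds_count_card h.1 hj (by rw [mul_comm] at h; exact h.2)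
  · rw [Finset.card_eq_zero, Finset.filter_eq_empty_iff]
    intro p hp
    intro hcount
    have hrep : Multiset.replicate j a ≤ p.parts :=
      Multiset.le_count_iff_replicate_le.1 hcount
    rcases not_and_or.1 h with h1 | h2
    · push_neg at h1
      have hmem : a ∈ p.parts := by
        rw [← Multiset.one_le_count_iff_mem]
        omega
      exact (mem_odds_iff p).1 hp a hmem h1
    · exact h2 (by have h5 := mul_le_of_replicate_le p hrep; have h6 : a*j = j*a := mul_comm a j; omega)

lemma G1 (n : ℕ) : (∑ p ∈ odds n, Multiset.card p.parts) = ∑ b ∈ Finset.Icc 1 n, SO b n := by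
  have h1 : (∑ p ∈ odds n, Multiset.card p.parts)
      = ∑ p ∈ odds n, ∑ a ∈ Finset.Icc 1 n, ∑ j ∈ Finset.Icc 1 n,
          (if j ≤ p.parts.count a then 1 else 0) := by
    refine Finset.sum_congr rfl (fun p _ => ?_)
    rw [card_parts_eq_sum_count]
    exact Finset.sum_congr rfl (fun a _ => count_eq_sum_ite p a)
  rw [h1, Finset.sum_comm]
  have h2 : ∀ a ∈ Finset.Icc 1 n,
      (∑ p ∈ odds n, ∑ j ∈ Finset.Icc 1 n, (if j ≤ p.parts.count a then 1 else 0))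
      = ∑ j ∈ Finset.Icc 1 n, (if ¬Even a ∧ a * j ≤ n then P (n - a * j) else 0) := by
    intro a ha
    rw [Finset.sum_comm]
    refine Finset.sum_congr rfl (fun j hj => ?_)
    rw [← Finset.card_filter]
    exact inner_card (Finset.mem_Icc.1 ha).1 (Finset.mem_Icc.1 hj).1
  rw [Finset.sum_congr rfl h2, Finset.sum_comm]
  refine Finset.sum_congr rfl (fun j hj => ?_)
  exact bridge_SO (Finset.mem_Icc.1 hj).1

lemma G2 (n : ℕ) : (∑ p ∈ distincts n, Multiset.card p.parts) = ∑ b ∈ Finset.Icc 1 n, dd b n := by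
  have h1 : (∑ p ∈ distincts n, Multiset.card p.parts)
      = ∑ p ∈ distincts n, ∑ b ∈ Finset.Icc 1 n, (if b ∈ p.parts then 1 else 0) := by
    refine Finset.sum_congr rfl (fun p hp => ?_)
    rw [card_parts_eq_sum_count]
    refine Finset.sum_congr rfl (fun b _ => ?_)
    have hnd := (mem_distincts_iff p).1 hp
    have h1 := nodup_count_le hnd b
    by_cases hb : b ∈ p.parts
    · rw [if_pos hb]
      have := Multiset.one_le_count_iff_mem.2 hb
      omega
    · rw [if_neg hb, Multiset.count_eq_zero_of_notMem hb]
  rw [h1, Finset.sum_comm]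
  refine Finset.sum_congr rfl (fun b _ => ?_)
  rw [← Finset.card_filter]
  rfl

/-! ### Decomposition of `setO 1 2 n` and `setD 1 2 n` -/

lemma even_dvd (x : ℕ) : 2 ∣ x ↔ Even x := even_iff_two_dvd.symm

def theE {n : ℕ} (p : Nat.Partition n) : ℕ :=
  ((p.parts.toFinset.filter (fun i => 2 ∣ i)).min).untopD 0

def theB {n : ℕ} (p : Nat.Partition n) : ℕ :=
  ((p.parts.toFinset.filter (fun i => 2 ≤ p.parts.count i)).min).untopD 0

lemma mem_setO_iff {n : ℕ} (p : Nat.Partition n) :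
    p ∈ setO 1 2 n ↔ (p.parts.toFinset.filter (fun i => 2 ∣ i)).card = 1 := by
  simp [setO]

lemma mem_setD_iff {n : ℕ} (p : Nat.Partition n) :
    p ∈ setD 1 2 n ↔ (p.parts.toFinset.filter (fun i => 2 ≤ p.parts.count i)).card = 1 := by
  simp [setD]

lemma theE_spec {n : ℕ} {p : Nat.Partition n} {e : ℕ}
    (h : p.parts.toFinset.filter (fun i => 2 ∣ i) = {e}) : theE p = e := by
  rw [theE, h, Finset.min_singleton, WithTop.untopD_coe]

lemma theB_spec {n : ℕ} {p : Nat.Partition n} {b : ℕ}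
    (h : p.parts.toFinset.filter (fun i => 2 ≤ p.parts.count i) = {b}) : theB p = b := by
  rw [theB, h, Finset.min_singleton, WithTop.untopD_coe]

def TO (n : ℕ) : Finset (ℕ × ℕ) :=
  ((Finset.Icc 1 n) ×ˢ (Finset.Icc 1 n)).filter (fun x => Even x.1 ∧ x.1 * x.2 ≤ n)

def TD (n : ℕ) : Finset (ℕ × ℕ) :=
  ((Finset.Icc 1 n) ×ˢ (Finset.Icc 1 n)).filter (fun x => x.2 * x.1 ≤ n)

lemma mapsO {n : ℕ} : ∀ p ∈ setO 1 2 n,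
    (theE p, p.parts.count (theE p)) ∈ TO n := by
  intro p hp
  obtain ⟨e, he⟩ := Finset.card_eq_one.1 ((mem_setO_iff p).1 hp)
  have hth := theE_spec he
  have hemem : e ∈ p.parts.toFinset.filter (fun i => 2 ∣ i) := he ▸ Finset.mem_singleton_self e
  rw [Finset.mem_filter, Multiset.mem_toFinset] at hemem
  obtain ⟨hep, hdvd⟩ := hemem
  have heven : Even e := (even_dvd e).1 hdvd
  have he1 : 1 ≤ e := p.parts_pos hep
  have hen : e ≤ n := part_le p hep
  have hc1 : 1 ≤ p.parts.count e := Multiset.one_le_count_iff_mem.2 hep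
  have hcn : p.parts.count e ≤ n := le_trans (Multiset.count_le_card e _) (card_parts_le p)
  have hrep : Multiset.replicate (p.parts.count e) e ≤ p.parts :=
    Multiset.le_count_iff_replicate_le.1 le_rfl
  have hmul : p.parts.count e * e ≤ n := mul_le_of_replicate_le p hrep
  rw [hth, TO, Finset.mem_filter, Finset.mem_product, Finset.mem_Icc, Finset.mem_Icc]
  have hcomm : e * p.parts.count e = p.parts.count e * e := mul_comm _ _
  exact ⟨⟨⟨he1, hen⟩, ⟨hc1, hcn⟩⟩, heven, show e * p.parts.count e ≤ n by omega⟩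

lemma fiberO {n e j : ℕ} (he2 : Even e) (he1 : 1 ≤ e) (hj1 : 1 ≤ j) (hejn : e * j ≤ n) :
    ((setO 1 2 n).filter
      (fun p => (theE p, p.parts.count (theE p)) = (e, j))).card = Po (n - e * j) := by
  have hje : j * e = e * j := mul_comm j e
  have hk : (n - e * j) + j * e = n := by omega
  have hfilter : ∀ p ∈ (setO 1 2 n).filter
      (fun p => (theE p, p.parts.count (theE p)) = (e, j)),
      (p.parts.toFinset.filter (fun i => 2 ∣ i) = {e}) ∧ p.parts.count e = j := by
    intro p hp
    rw [Finset.mem_filter, Prod.mk.injEq] at hp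
    obtain ⟨hpO, hthe, hcnt⟩ := hp
    obtain ⟨e', he'⟩ := Finset.card_eq_one.1 ((mem_setO_iff p).1 hpO)
    have hth' := theE_spec he'
    have hee : e' = e := by rw [← hthe, hth']
    subst hee
    rw [hth'] at hcnt
    exact ⟨he', hcnt⟩
  refine Finset.card_bij'
    (fun p hp => removeP p e j (n - e * j)
      (Multiset.le_count_iff_replicate_le.1 (le_of_eq (hfilter p hp).2.symm)) hk)
    (fun q _ => addP q e j n (by omega) hk) ?_ ?_ ?_ ?_
  · intro p hp
    obtain ⟨hsing, hcnt⟩ := hfilter p hp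
    rw [mem_odds_iff]
    intro x hx hevenx
    have hxp : x ∈ p.parts := Multiset.mem_of_le tsub_le_self hx
    have hxe : x = e := by
      have : x ∈ p.parts.toFinset.filter (fun i => 2 ∣ i) := by
        rw [Finset.mem_filter, Multiset.mem_toFinset]
        exact ⟨hxp, hevenx.two_dvd⟩
      rwa [hsing, Finset.mem_singleton] at this
    have hcount0 : (p.parts - Multiset.replicate j e).count e = 0 := by
      rw [Multiset.count_sub, Multiset.count_replicate_self, hcnt]
      omega
    rw [hxe] at hx
    exact absurd hx (Multiset.count_eq_zero.1 hcount0)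
  · intro q hq
    rw [Finset.mem_filter, Prod.mk.injEq]
    have hqodd := (mem_odds_iff q).1 hq
    have hcount_e_q : q.parts.count e = 0 := by
      rw [Multiset.count_eq_zero]
      intro hmem
      exact hqodd e hmem he2
    have hsing : (addP q e j n (by omega) hk).parts.toFinset.filter (fun i => 2 ∣ i) = {e} := by
      ext x
      rw [Finset.mem_filter, Multiset.mem_toFinset, Finset.mem_singleton, addP_parts]
      constructor
      · rintro ⟨hmem, hdvd⟩
        rcases Multiset.mem_add.1 hmem with h | h
        · exact Multiset.eq_of_mem_replicate h
        · exact absurd ((even_dvd x).1 hdvd) (hqodd x h)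
      · intro hxe
        rw [hxe]
        refine ⟨Multiset.mem_add.2 (Or.inl ?_), (even_dvd e).2 he2⟩
        rw [Multiset.mem_replicate]
        exact ⟨by omega, rfl⟩
    have hcnt : (addP q e j n (by omega) hk).parts.count e = j := by
      rw [addP_parts, Multiset.count_add, Multiset.count_replicate_self, hcount_e_q]
      omega
    refine ⟨(mem_setO_iff _).2 (by rw [hsing]; rfl), ?_, ?_⟩

    · exact theE_spec hsing
    · rw [theE_spec hsing, hcnt]
  · intro p hp
    apply Nat.Partition.ext
    simp only [addP_parts, removeP_parts]
    exact add_tsub_cancel_of_le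
      (Multiset.le_count_iff_replicate_le.1 (le_of_eq (hfilter p hp).2.symm))
  · intro q hq
    apply Nat.Partition.ext
    simp only [addP_parts, removeP_parts]
    exact add_tsub_cancel_left _ _

lemma G3 (n : ℕ) : (setO 1 2 n).card = ∑ b ∈ Finset.Icc 1 n, SE b n := by
  rw [Finset.card_eq_sum_card_fiberwise mapsO]
  have h1 : ∀ x ∈ TO n, ((setO 1 2 n).filter
      (fun p => (theE p, p.parts.count (theE p)) = x)).card = P (n - x.1 * x.2) := by
    rintro ⟨e, j⟩ hx
    rw [TO, Finset.mem_filter, Finset.mem_product, Finset.mem_Icc, Finset.mem_Icc] at hx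
    obtain ⟨⟨⟨h1, _⟩, ⟨h3, _⟩⟩, heven, hle⟩ := hx
    rw [← Po_eq_P]
    exact fiberO heven h1 h3 hle
  rw [Finset.sum_congr rfl h1, TO, Finset.sum_filter, Finset.sum_product, Finset.sum_comm]
  exact Finset.sum_congr rfl (fun j hj => bridge_SE (Finset.mem_Icc.1 hj).1)

lemma mapsD {n : ℕ} : ∀ p ∈ setD 1 2 n,
    (theB p, p.parts.count (theB p) - 1) ∈ TD n := by
  intro p hp
  obtain ⟨b, hb⟩ := Finset.card_eq_one.1 ((mem_setD_iff p).1 hp)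
  have hth := theB_spec hb
  have hbmem : b ∈ p.parts.toFinset.filter (fun i => 2 ≤ p.parts.count i) :=
    hb ▸ Finset.mem_singleton_self b
  rw [Finset.mem_filter, Multiset.mem_toFinset] at hbmem
  obtain ⟨hbp, hcnt2⟩ := hbmem
  have hb1 : 1 ≤ b := p.parts_pos hbp
  have hbn : b ≤ n := part_le p hbp
  have hcn : p.parts.count b ≤ n := le_trans (Multiset.count_le_card b _) (card_parts_le p)
  have hrep : Multiset.replicate (p.parts.count b) b ≤ p.parts :=
    Multiset.le_count_iff_replicate_le.1 le_rfl
  have hmul : p.parts.count b * b ≤ n := mul_le_of_replicate_le p hrep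
  rw [hth, TD, Finset.mem_filter, Finset.mem_product, Finset.mem_Icc, Finset.mem_Icc]
  refine ⟨⟨⟨hb1, hbn⟩, ?_, by omega⟩, ?_⟩
  · omega
  · show (p.parts.count b - 1) * b ≤ n
    have h6 : (p.parts.count b - 1) * b ≤ p.parts.count b * b :=
      Nat.mul_le_mul_right b (by omega)
    omega

lemma fiberD {n b j : ℕ} (hb1 : 1 ≤ b) (hj1 : 1 ≤ j) (hbjn : j * b ≤ n) :
    ((setD 1 2 n).filter
      (fun p => (theB p, p.parts.count (theB p) - 1) = (b, j))).card = dd b (n - j * b) := by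
  have hk : (n - j * b) + j * b = n := by omega
  rw [show dd b (n - j*b)
    = ((distincts (n - j*b)).filter (fun q => b ∈ q.parts)).card from rfl]
  have hfilter : ∀ p ∈ (setD 1 2 n).filter
      (fun p => (theB p, p.parts.count (theB p) - 1) = (b, j)),
      (p.parts.toFinset.filter (fun i => 2 ≤ p.parts.count i) = {b})
        ∧ p.parts.count b = j + 1 := by
    intro p hp
    rw [Finset.mem_filter, Prod.mk.injEq] at hp
    obtain ⟨hpD, hthe, hcnt⟩ := hp
    obtain ⟨b', hb'⟩ := Finset.card_eq_one.1 ((mem_setD_iff p).1 hpD)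
    have hth' := theB_spec hb'
    have hbb : b' = b := by rw [← hthe, hth']
    subst hbb
    rw [hth'] at hcnt
    have hbmem : b' ∈ p.parts.toFinset.filter (fun i => 2 ≤ p.parts.count i) :=
      hb' ▸ Finset.mem_singleton_self b'
    rw [Finset.mem_filter] at hbmem
    exact ⟨hb', by omega⟩
  have hrep : ∀ p (hp : p ∈ (setD 1 2 n).filter
      (fun p => (theB p, p.parts.count (theB p) - 1) = (b, j))),
      Multiset.replicate j b ≤ p.parts := fun p hp =>
    Multiset.le_count_iff_replicate_le.1 (by rw [(hfilter p hp).2]; omega)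
  refine Finset.card_bij'
    (fun p hp => removeP p b j (n - j * b) (hrep p hp) hk)
    (fun q _ => addP q b j n (by omega) hk) ?_ ?_ ?_ ?_
  · intro p hp
    obtain ⟨hsing, hcnt⟩ := hfilter p hp
    have hcount : ∀ x, (p.parts - Multiset.replicate j b).count x
        = p.parts.count x - (if b = x then j else 0) := by
      intro x
      rw [Multiset.count_sub, Multiset.count_replicate]
    rw [Finset.mem_filter, mem_distincts_iff]
    constructor
    · rw [Multiset.nodup_iff_count_le_one]
      intro x
      rw [removeP_parts, hcount x]
      by_cases hxb : x = b
      · subst hxb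
        rw [if_pos rfl, hcnt]
        omega
      · rw [if_neg (fun h => hxb h.symm)]
        by_cases hx2 : 2 ≤ p.parts.count x
        · exfalso
          have hxp : x ∈ p.parts := by
            rw [← Multiset.one_le_count_iff_mem]
            omega
          have : x ∈ p.parts.toFinset.filter (fun i => 2 ≤ p.parts.count i) := by
            rw [Finset.mem_filter, Multiset.mem_toFinset]
            exact ⟨hxp, hx2⟩
          rw [hsing, Finset.mem_singleton] at this
          exact hxb this
        · omega
    · rw [removeP_parts, ← Multiset.one_le_count_iff_mem, hcount b, if_pos rfl, hcnt]
      omega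
  · intro q hq
    rw [Finset.mem_filter] at hq
    obtain ⟨hqd, hbq⟩ := hq
    have hnd := (mem_distincts_iff q).1 hqd
    have hcb : q.parts.count b = 1 := Multiset.count_eq_one_of_mem hnd hbq
    have hcountx : ∀ x, (addP q b j n (by omega) hk).parts.count x
        = (if b = x then j else 0) + q.parts.count x := by
      intro x
      rw [addP_parts, Multiset.count_add, Multiset.count_replicate]
    have hsing : (addP q b j n (by omega) hk).parts.toFinset.filter
        (fun i => 2 ≤ (addP q b j n (by omega) hk).parts.count i) = {b} := by
      ext x
      rw [Finset.mem_filter, Multiset.mem_toFinset, Finset.mem_singleton]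
      constructor
      · rintro ⟨hmem, h2⟩
        by_contra hxb
        rw [hcountx x, if_neg (fun h => hxb h.symm)] at h2
        have := nodup_count_le hnd x
        omega
      · intro hxb
        rw [hxb]
        constructor
        · rw [← Multiset.one_le_count_iff_mem, hcountx b, if_pos rfl, hcb]
          omega
        · rw [hcountx b, if_pos rfl, hcb]
          omega
    have hcnt : (addP q b j n (by omega) hk).parts.count b = j + 1 := by
      rw [hcountx b, if_pos rfl, hcb]
    rw [Finset.mem_filter, Prod.mk.injEq]
    refine ⟨(mem_setD_iff _).2 (by rw [hsing]; rfl), ?_, ?_⟩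
    · exact theB_spec hsing
    · rw [theB_spec hsing, hcnt]
      omega
  · intro p hp
    apply Nat.Partition.ext
    simp only [addP_parts, removeP_parts]
    exact add_tsub_cancel_of_le (hrep p hp)
  · intro q hq
    apply Nat.Partition.ext
    simp only [addP_parts, removeP_parts]
    exact add_tsub_cancel_left _ _

lemma G4 (n : ℕ) : (setD 1 2 n).card = ∑ b ∈ Finset.Icc 1 n, UD b n := by
  rw [Finset.card_eq_sum_card_fiberwise mapsD]
  have h1 : ∀ x ∈ TD n, ((setD 1 2 n).filter
      (fun p => (theB p, p.parts.count (theB p) - 1) = x)).card = dd x.1 (n - x.2 * x.1) := by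
    rintro ⟨b, j⟩ hx
    rw [TD, Finset.mem_filter, Finset.mem_product, Finset.mem_Icc, Finset.mem_Icc] at hx
    obtain ⟨⟨⟨h1, _⟩, ⟨h3, _⟩⟩, hle⟩ := hx
    exact fiberD h1 h3 hle
  rw [Finset.sum_congr rfl h1, TD, Finset.sum_filter, Finset.sum_product]
  exact Finset.sum_congr rfl (fun b hb => bridge_UD (Finset.mem_Icc.1 hb).1)

lemma setO_zero (n : ℕ) : setO 0 2 n = odds n := by
  ext p
  rw [setO, Finset.mem_filter, mem_odds_iff]
  simp only [Finset.mem_univ, true_and, Finset.card_eq_zero, Finset.filter_eq_empty_iff,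
    Multiset.mem_toFinset]
  constructor
  · intro h i hi hievn
    exact h hi ((even_dvd i).2 hievn)
  · intro h i hi hidvd
    exact h i hi ((even_dvd i).1 hidvd)

lemma setD_zero (n : ℕ) : setD 0 2 n = distincts n := by
  ext p
  rw [setD, Finset.mem_filter, mem_distincts_iff]
  simp only [Finset.mem_univ, true_and, Finset.card_eq_zero, Finset.filter_eq_empty_iff,
    Multiset.mem_toFinset]
  rw [Multiset.nodup_iff_count_le_one]
  constructor
  · intro h x
    by_cases hx : x ∈ p.parts
    · have := h hx
      omega
    · rw [Multiset.count_eq_zero_of_notMem hx]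
      omega
  · intro h i _ h2
    have := h i
    omega

/-- Key identity A = B + |O₁| -/
lemma main_identity (n : ℕ) :
    (∑ p ∈ odds n, Multiset.card p.parts)
      = (∑ p ∈ distincts n, Multiset.card p.parts) + (setO 1 2 n).card := by
  rw [G1, G2, G3, ← Finset.sum_add_distrib]
  exact Finset.sum_congr rfl (fun b hb => SO_eq_dd_add_SE b (Finset.mem_Icc.1 hb).1 n)

lemma second_identity (n : ℕ) : (setD 1 2 n).card = (setO 1 2 n).card := by
  rw [G3, G4]
  exact Finset.sum_congr rfl (fun b hb => UD_eq_SE b (Finset.mem_Icc.1 hb).1 n)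

end AndrewsBeck

/-- Andrews' theorem (Beck's conjecture): the difference between the total number of parts
in all partitions of `n` into odd parts and the total number of parts in all partitions of
`n` into distinct parts equals `|O_{1,2}(n)|` and also equals `|D_{1,2}(n)|`. -/
theorem andrews_beck (n : ℕ) :
    bDiff 0 2 n = ((setO 1 2 n).card : ℤ) ∧ bDiff 0 2 n = ((setD 1 2 n).card : ℤ) := by
  have h1 := AndrewsBeck.main_identity n
  have h2 := AndrewsBeck.second_identity n
  have hb : bDiff 0 2 n = ((setO 1 2 n).card : ℤ) := by
    rw [bDiff, AndrewsBeck.setO_zero, AndrewsBeck.setD_zero]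
    simp only [numParts]
    rw [← Nat.cast_sum, ← Nat.cast_sum]
    rw [h1]
    push_cast
    ring
  exact ⟨hb, by rw [hb, h2]⟩
end

section
/- For all non-negative integers n, j and all integers r ≥ 2, b_{j,r}(n) = (r−1)·((j+1)·|O_{j+1,r}(n)| − j·|O_{j,r}(n)|), where the equality holds in the integers. -/
open Finset

namespace BeckAux

lemma digit_sum_eq {r : ℕ} (hr : 2 ≤ r) : ∀ (K m : ℕ), m < r ^ K →
    ∑ k ∈ Finset.range K, m / r ^ k % r * r ^ k = m := by
  have hr0 : 0 < r := by omega
  intro K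
  induction K with
  | zero =>
    intro m hm
    have : m = 0 := by simpa using hm
    simp [this]
  | succ K ih =>
    intro m hm
    have h2 : m / r < r ^ K := by
      apply Nat.div_lt_of_lt_mul
      rwa [pow_succ'] at hm
    have hterm : ∀ k, m / r ^ (k + 1) % r * r ^ (k + 1)
        = (m / r) / r ^ k % r * r ^ k * r := by
      intro k
      rw [pow_succ', Nat.div_div_eq_div_mul]
      ring
    rw [Finset.sum_range_succ']
    simp only [hterm, pow_zero, Nat.div_one, mul_one]
    rw [← Finset.sum_mul, ih (m / r) h2]
    exact Nat.div_add_mod' m r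

lemma digit_extract {r : ℕ} (hr : 2 ≤ r) (c : ℕ → ℕ) (hc : ∀ t, c t < r) :
    ∀ (k K : ℕ), k < K → (∑ t ∈ Finset.range K, c t * r ^ t) / r ^ k % r = c k := by
  have hr0 : 0 < r := by omega
  intro k
  induction k generalizing c with
  | zero =>
    intro K hK
    obtain ⟨K', rfl⟩ : ∃ K', K = K' + 1 := ⟨K - 1, by omega⟩
    rw [Finset.sum_range_succ']
    simp only [pow_zero, mul_one, Nat.div_one, pow_succ']
    have : ∀ t ∈ Finset.range K', c (t+1) * (r * r ^ t) = r * (c (t+1) * r ^ t) := by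
      intros; ring
    rw [Finset.sum_congr rfl this, ← Finset.mul_sum]
    rw [Nat.mul_add_mod, Nat.mod_eq_of_lt (hc 0)]
  | succ k ih =>
    intro K hK
    obtain ⟨K', rfl⟩ : ∃ K', K = K' + 1 := ⟨K - 1, by omega⟩
    rw [Finset.sum_range_succ']
    have hsum : (∑ t ∈ Finset.range K', c (t+1) * r ^ (t+1)) + c 0 * r ^ 0
        = (∑ t ∈ Finset.range K', c (t+1) * r ^ t) * r + c 0 := by
      rw [Finset.sum_mul]
      simp only [pow_zero, mul_one]
      congr 1
      refine Finset.sum_congr rfl fun t _ => ?_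
      rw [pow_succ]; ring
    rw [hsum, pow_succ']
    rw [← Nat.div_div_eq_div_mul]
    have : ((∑ t ∈ Finset.range K', c (t+1) * r ^ t) * r + c 0) / r
        = ∑ t ∈ Finset.range K', c (t+1) * r ^ t := by
      rw [mul_comm, Nat.mul_add_div hr0, Nat.div_eq_of_lt (hc 0), add_zero]
    rw [this]
    exact ih (fun t => c (t+1)) (fun t => hc (t+1)) K' (by omega)


/-- largest `k` with `r^k ∣ a`. -/
def kv (r a : ℕ) : ℕ := Nat.maxPowDiv r a

/-- the `r`-free part of `a`. -/
def ordp (r a : ℕ) : ℕ := a / r ^ Nat.maxPowDiv r a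

lemma ordp_mul_pow {r : ℕ} (a : ℕ) : ordp r a * r ^ kv r a = a :=
  Nat.div_mul_cancel (Nat.maxPowDiv.pow_dvd (p := r) (n := a))

lemma ordp_pos {r a : ℕ} (ha : 0 < a) : 0 < ordp r a := by
  rcases Nat.eq_zero_or_pos (ordp r a) with h | h
  · have := ordp_mul_pow (r := r) a; rw [h] at this; simp at this; omega
  · exact h

lemma pos_of_not_dvd {r i : ℕ} (hi : ¬ r ∣ i) : 0 < i := by
  rcases Nat.eq_zero_or_pos i with h | h
  · exfalso; apply hi; rw [h]; exact dvd_zero r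
  · exact h

lemma maxPowDiv_eq_zero {r i : ℕ} (hr : 2 ≤ r) (hi : ¬ r ∣ i) : Nat.maxPowDiv r i = 0 := by
  by_contra h
  have h1 : r ^ 1 ∣ r ^ Nat.maxPowDiv r i := pow_dvd_pow r (by omega)
  have := (h1.trans (Nat.maxPowDiv.pow_dvd (p := r) (n := i)))
  simp at this
  exact hi this

lemma kv_mul_pow {r i k : ℕ} (hr : 2 ≤ r) (hi : ¬ r ∣ i) : kv r (i * r ^ k) = k := by
  unfold kv
  rw [mul_comm, show Nat.maxPowDiv r (r ^ k * i) = padicValNat r (r ^ k * i) from rfl,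
    Nat.maxPowDiv.base_pow_mul (by omega) (pos_of_not_dvd hi).ne',
    show padicValNat r i = Nat.maxPowDiv r i from rfl, maxPowDiv_eq_zero hr hi, zero_add]

lemma ordp_mul_pow_eq {r i k : ℕ} (hr : 2 ≤ r) (hi : ¬ r ∣ i) : ordp r (i * r ^ k) = i := by
  unfold ordp
  rw [show Nat.maxPowDiv r (i * r ^ k) = k from kv_mul_pow hr hi,
    Nat.mul_div_cancel _ (by positivity)]

lemma not_dvd_ordp {r a : ℕ} (hr : 2 ≤ r) (ha : 0 < a) : ¬ r ∣ ordp r a := by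
  intro ⟨c, hc⟩
  have h1 := ordp_mul_pow (r := r) a
  have h2 : r ^ (kv r a + 1) ∣ a := by
    refine ⟨c, ?_⟩
    conv_lhs => rw [← h1]
    rw [hc, pow_succ]
    ring
  have := (Nat.pow_dvd_iff_le_padicValNat (show r ≠ 1 by omega) ha.ne').mp h2
  unfold kv Nat.maxPowDiv at *
  omega

lemma kv_pos_of_dvd {r a : ℕ} (hr : 2 ≤ r) (ha : 0 < a) (h : r ∣ a) : 1 ≤ kv r a := by
  have h1 : r ^ 1 ∣ a := by rwa [pow_one]
  have := (Nat.pow_dvd_iff_le_padicValNat (show r ≠ 1 by omega) ha.ne').mp h1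
  unfold kv Nat.maxPowDiv; omega

lemma pow_kv_le {r a : ℕ} (ha : 0 < a) : r ^ kv r a ≤ a :=
  Nat.le_of_dvd ha (Nat.maxPowDiv.pow_dvd (p := r) (n := a))

lemma lt_pow_self' {r k : ℕ} (hr : 2 ≤ r) : k < r ^ k :=
  lt_of_lt_of_le (Nat.lt_two_pow_self (n := k)) (Nat.pow_le_pow_left hr k)

lemma kv_le {r a n : ℕ} (hr : 2 ≤ r) (ha : 0 < a) (han : a ≤ n) : kv r a ≤ n := by
  have h1 := pow_kv_le (r := r) ha
  have h2 := lt_pow_self' (r := r) (k := kv r a) hr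
  omega

lemma ordp_le {r a : ℕ} (ha : 0 < a) : ordp r a ≤ a := Nat.div_le_self _ _

lemma sub_digitsum {r : ℕ} (hr : 2 ≤ r) (K m : ℕ) (hm : m < r ^ K) :
    (m : ℤ) - (∑ k ∈ Finset.range K, m / r ^ k % r : ℕ) =
      ((r : ℤ) - 1) * (∑ k ∈ Finset.range K, m / r ^ (k + 1) : ℕ) := by
  have hr0 : 0 < r := by omega
  have keyN : ∀ k, m / r ^ k % r + r * (m / r ^ (k + 1)) = m / r ^ k := by
    intro k
    have h1 : m / r ^ (k + 1) = m / r ^ k / r := by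
      rw [Nat.div_div_eq_div_mul, pow_succ]
    rw [h1]
    exact Nat.mod_add_div _ _
  have h1N : (∑ k ∈ Finset.range K, m / r ^ k % r)
      + r * (∑ k ∈ Finset.range K, m / r ^ (k + 1))
      = ∑ k ∈ Finset.range K, m / r ^ k := by
    rw [Finset.mul_sum, ← Finset.sum_add_distrib]
    exact Finset.sum_congr rfl fun k _ => keyN k
  have h2N : (∑ k ∈ Finset.range K, m / r ^ (k + 1)) + m
      = ∑ k ∈ Finset.range K, m / r ^ k := by
    have e1 : ∑ k ∈ Finset.range (K + 1), m / r ^ k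
        = ∑ k ∈ Finset.range K, m / r ^ (k + 1) + m / r ^ 0 := Finset.sum_range_succ' _ _
    have e2 : ∑ k ∈ Finset.range (K + 1), m / r ^ k
        = ∑ k ∈ Finset.range K, m / r ^ k + m / r ^ K := Finset.sum_range_succ _ _
    have e3 : m / r ^ K = 0 := Nat.div_eq_of_lt hm
    have e4 : m / r ^ 0 = m := by simp
    omega
  have h1 : ((∑ k ∈ Finset.range K, m / r ^ k % r : ℕ) : ℤ)
      + (r : ℤ) * ((∑ k ∈ Finset.range K, m / r ^ (k + 1) : ℕ) : ℤ)
      = ((∑ k ∈ Finset.range K, m / r ^ k : ℕ) : ℤ) := by exact_mod_cast congrArg (fun x : ℕ => (x : ℤ)) h1N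
  have h2 : ((∑ k ∈ Finset.range K, m / r ^ (k + 1) : ℕ) : ℤ) + (m : ℤ)
      = ((∑ k ∈ Finset.range K, m / r ^ k : ℕ) : ℤ) := by exact_mod_cast congrArg (fun x : ℕ => (x : ℤ)) h2N
  linarith


section PartitionBasics

variable {n : ℕ}

lemma count_mul_le (p : Nat.Partition n) (a : ℕ) : p.parts.count a * a ≤ n := by
  have h1 : Multiset.replicate (p.parts.count a) a ≤ p.parts :=
    Multiset.le_count_iff_replicate_le.mp le_rfl
  obtain ⟨c, hc⟩ := Multiset.le_iff_exists_add.mp h1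
  have h2 : p.parts.sum = (Multiset.replicate (p.parts.count a) a).sum + c.sum := by
    rw [← Multiset.sum_add, ← hc]
  rw [Multiset.sum_replicate, smul_eq_mul] at h2
  have := p.parts_sum
  omega

lemma part_le_n (p : Nat.Partition n) {a : ℕ} (h : 0 < p.parts.count a) : a ≤ n := by
  have h1 := count_mul_le p a
  have h2 : a ≤ p.parts.count a * a := Nat.le_mul_of_pos_left a h
  omega

lemma count_eq_zero_of_gt (p : Nat.Partition n) {a : ℕ} (h : n < a) : p.parts.count a = 0 := by
  by_contra hc
  have := part_le_n p (a := a) (by omega)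
  omega

lemma mem_Icc_of_count_pos (p : Nat.Partition n) {a : ℕ} (h : 0 < p.parts.count a) :
    a ∈ Finset.Icc 1 n := by
  rw [Finset.mem_Icc]
  refine ⟨p.parts_pos (Multiset.count_pos.mp h), part_le_n p h⟩

lemma toFinset_eq (p : Nat.Partition n) :
    p.parts.toFinset = (Finset.Icc 1 n).filter fun a => 0 < p.parts.count a := by
  ext a
  simp only [Multiset.mem_toFinset, Finset.mem_filter, ← Multiset.count_pos]
  exact ⟨fun h => ⟨mem_Icc_of_count_pos p h, h⟩, fun h => h.2⟩

lemma numParts_eq (p : Nat.Partition n) :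
    numParts p = ∑ a ∈ Finset.Icc 1 n, p.parts.count a := by
  refine (Multiset.sum_count_eq_card fun a ha => ?_).symm
  exact mem_Icc_of_count_pos p (Multiset.count_pos.mpr ha)

lemma weight_eq (p : Nat.Partition n) :
    ∑ a ∈ Finset.Icc 1 n, p.parts.count a * a = n := by
  classical
  have h0 : p.parts.map id = p.parts := Multiset.map_id _
  have h1 : p.parts.sum = ∑ a ∈ p.parts.toFinset, p.parts.count a • a := by
    conv_lhs => rw [← h0]
    exact Finset.sum_multiset_map_count _ _
  have h2 : ∑ a ∈ Finset.Icc 1 n, p.parts.count a • a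
      = ∑ a ∈ p.parts.toFinset, p.parts.count a • a := by
    refine (Finset.sum_subset ?_ ?_).symm
    · rw [toFinset_eq p]; exact Finset.filter_subset _ _
    · intro a _ ha
      have : p.parts.count a = 0 := by
        by_contra hc
        exact ha (Multiset.mem_toFinset.mpr (Multiset.count_pos.mp (by omega)))
      simp [this]
  have h3 := p.parts_sum
  simp only [smul_eq_mul] at h1 h2
  omega

lemma card_finsetSum {ι : Type*} (s : Finset ι) (f : ι → Multiset ℕ) :
    Multiset.card (∑ x ∈ s, f x) = ∑ x ∈ s, Multiset.card (f x) := by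
  classical
  induction s using Finset.cons_induction with
  | empty => simp
  | cons a s ha ih => simp [Finset.sum_cons, ih]

lemma sum_finsetSum {ι : Type*} (s : Finset ι) (f : ι → Multiset ℕ) :
    (∑ x ∈ s, f x).sum = ∑ x ∈ s, (f x).sum := by
  classical
  induction s using Finset.cons_induction with
  | empty => simp
  | cons a s ha ih => rw [Finset.sum_cons, Finset.sum_cons, Multiset.sum_add, ih]

end PartitionBasics

section Phi

variable (r n : ℕ)

/-- parts not divisible by `r`, within range. -/
def nondivs : Finset ℕ := (Finset.Icc 1 n).filter fun i => ¬ r ∣ i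

/-- parts divisible by `r`, within range. -/
def divs : Finset ℕ := (Finset.Icc 1 n).filter fun b => r ∣ b

def indexS : Finset (ℕ × ℕ) := nondivs r n ×ˢ Finset.range (n + 1)

variable {n}

def Msum (p : Nat.Partition n) : ℕ := ∑ b ∈ divs r n, p.parts.count b

def Tm (m : ℕ) : ℕ := ∑ k ∈ Finset.range (n + 1), m / r ^ (k + 1)

def Tsum (p : Nat.Partition n) : ℕ := ∑ i ∈ nondivs r n, Tm r (n := n) (p.parts.count i)

def sdig (m : ℕ) : ℕ := ∑ k ∈ Finset.range (n + 1), m / r ^ k % r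

def phiParts (p : Nat.Partition n) : Multiset ℕ :=
  ∑ x ∈ indexS r n,
    Multiset.replicate
      (p.parts.count x.1 / r ^ x.2 % r + r * p.parts.count (x.1 * r ^ (x.2 + 1)))
      (x.1 * r ^ x.2)

variable {r}

lemma count_lt_pow_of_gt {p : Nat.Partition n} {i k : ℕ} (hi : 0 < i) (h : n < i * r ^ k) :
    p.parts.count i < r ^ k := by
  have h1 := count_mul_le p i
  by_contra hc
  push_neg at hc
  have : r ^ k * i ≤ p.parts.count i * i := Nat.mul_le_mul_right i hc
  nlinarith

lemma count_phiParts (hr : 2 ≤ r) (p : Nat.Partition n) {a : ℕ} (ha : 0 < a) :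
    (phiParts r p).count a
      = p.parts.count (ordp r a) / r ^ kv r a % r + r * p.parts.count (r * a) := by
  classical
  rw [phiParts, Multiset.count_sum']
  have hrep : ordp r a * r ^ kv r a = a := ordp_mul_pow a
  have hord_pos : 0 < ordp r a := ordp_pos ha
  have hord_nd : ¬ r ∣ ordp r a := not_dvd_ordp hr ha
  by_cases han : a ≤ n
  · rw [Finset.sum_eq_single_of_mem (ordp r a, kv r a) ?mem ?zero]
    · rw [Multiset.count_replicate,
        if_pos (show (ordp r a, kv r a).1 * r ^ (ordp r a, kv r a).2 = a from hrep)]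
      have harg : (ordp r a, kv r a).1 * r ^ ((ordp r a, kv r a).2 + 1) = r * a := by
        show ordp r a * r ^ (kv r a + 1) = r * a
        rw [pow_succ, ← mul_assoc, hrep, mul_comm]
      rw [harg]
    case mem =>
      simp only [indexS, nondivs, Finset.mem_product, Finset.mem_filter, Finset.mem_Icc,
        Finset.mem_range]
      refine ⟨⟨⟨hord_pos, le_trans (ordp_le ha) han⟩, hord_nd⟩, ?_⟩
      have := kv_le hr ha han
      omega
    case zero =>
      rintro ⟨i, k⟩ hmem hne
      simp only [indexS, nondivs, Finset.mem_product, Finset.mem_filter, Finset.mem_Icc,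
        Finset.mem_range] at hmem
      rw [Multiset.count_replicate, if_neg]
      intro heq
      apply hne
      have h1 : kv r (i * r ^ k) = k := kv_mul_pow hr hmem.1.2
      have h2 : ordp r (i * r ^ k) = i := ordp_mul_pow_eq hr hmem.1.2
      rw [heq] at h1 h2
      simp [Prod.ext_iff, h1, h2]
  · push_neg at han
    have c1 : p.parts.count (r * a) = 0 :=
      count_eq_zero_of_gt p (by nlinarith [Nat.le_mul_of_pos_left a (show 0 < r by omega)])
    have c2 : p.parts.count (ordp r a) / r ^ kv r a = 0 := by
      apply Nat.div_eq_of_lt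
      apply count_lt_pow_of_gt hord_pos
      rw [hrep]; exact han
    rw [c1, c2, Finset.sum_eq_zero]
    · simp
    · rintro ⟨i, k⟩ hmem
      simp only [indexS, nondivs, Finset.mem_product, Finset.mem_filter, Finset.mem_Icc,
        Finset.mem_range] at hmem
      rw [Multiset.count_replicate]
      split_ifs with heq
      · have heq' : i * r ^ k = a := heq
        have hi : 0 < i := hmem.1.1.1
        have e1 : p.parts.count i / r ^ k = 0 := by
          apply Nat.div_eq_of_lt
          apply count_lt_pow_of_gt hi
          omega
        have e2 : p.parts.count (i * r ^ (k + 1)) = 0 := by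
          apply count_eq_zero_of_gt
          have : i * r ^ k ≤ i * r ^ (k + 1) :=
            Nat.mul_le_mul_left i (Nat.pow_le_pow_right (by omega) (by omega))
          omega
        simp [e1, e2]
      · rfl

lemma count_le_n (p : Nat.Partition n) {a : ℕ} (ha : 0 < a) : p.parts.count a ≤ n := by
  have := count_mul_le p a
  nlinarith

lemma count_lt_rpow (hr : 2 ≤ r) (p : Nat.Partition n) {a : ℕ} (ha : 0 < a) :
    p.parts.count a < r ^ (n + 1) := by
  have h1 := count_le_n p ha
  have h2 : n < r ^ n := lt_pow_self' hr
  have h3 : r ^ n ≤ r ^ (n + 1) := Nat.pow_le_pow_right (by omega) (by omega)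
  omega

lemma sum_reps (hr : 2 ≤ r) (g : ℕ → ℕ) (hg : ∀ b, n < b → g b = 0) :
    ∑ x ∈ indexS r n, g (x.1 * r ^ (x.2 + 1)) = ∑ b ∈ divs r n, g b := by
  classical
  rw [← Finset.sum_filter_add_sum_filter_not (indexS r n) (fun x => x.1 * r ^ (x.2 + 1) ≤ n)]
  have hz : ∑ x ∈ (indexS r n).filter (fun x => ¬ x.1 * r ^ (x.2 + 1) ≤ n),
      g (x.1 * r ^ (x.2 + 1)) = 0 := by
    refine Finset.sum_eq_zero fun x hx => ?_
    simp only [Finset.mem_filter, not_le] at hx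
    exact hg _ hx.2
  rw [hz, add_zero]
  refine Finset.sum_nbij' (fun x => x.1 * r ^ (x.2 + 1)) (fun b => (ordp r b, kv r b - 1))
    ?_ ?_ ?_ ?_ ?_
  · rintro ⟨i, k⟩ hx
    simp only [indexS, nondivs, Finset.mem_product, Finset.mem_filter, Finset.mem_Icc,
      Finset.mem_range] at hx
    simp only [divs, Finset.mem_filter, Finset.mem_Icc]
    refine ⟨⟨?_, hx.2⟩, ?_⟩
    · have : 0 < i * r ^ (k + 1) :=
        Nat.mul_pos (by omega) (pow_pos (by omega) _)
      omega
    · exact Dvd.dvd.mul_left (dvd_pow_self r (by omega)) i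
  · intro b hb
    simp only [divs, Finset.mem_filter, Finset.mem_Icc] at hb
    obtain ⟨⟨hb1, hb2⟩, hbd⟩ := hb
    have hbp : 0 < b := by omega
    have hkv : 1 ≤ kv r b := kv_pos_of_dvd hr hbp hbd
    simp only [indexS, nondivs, Finset.mem_product, Finset.mem_filter, Finset.mem_Icc,
      Finset.mem_range]
    have hol : ordp r b ≤ b := ordp_le hbp
    have hkn : kv r b ≤ n := kv_le hr hbp hb2
    refine ⟨⟨⟨⟨ordp_pos hbp, by omega⟩, not_dvd_ordp hr hbp⟩, by omega⟩, ?_⟩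
    have : ordp r b * r ^ (kv r b - 1 + 1) = b := by
      rw [show kv r b - 1 + 1 = kv r b by omega]
      exact ordp_mul_pow b
    omega
  · rintro ⟨i, k⟩ hx
    simp only [indexS, nondivs, Finset.mem_product, Finset.mem_filter, Finset.mem_Icc,
      Finset.mem_range] at hx
    have h1 : kv r (i * r ^ (k + 1)) = k + 1 := kv_mul_pow hr hx.1.1.2
    have h2 : ordp r (i * r ^ (k + 1)) = i := ordp_mul_pow_eq hr hx.1.1.2
    simp [h1, h2]
  · intro b hb
    simp only [divs, Finset.mem_filter, Finset.mem_Icc] at hb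
    have hbp : 0 < b := by omega
    have hkv : 1 ≤ kv r b := kv_pos_of_dvd hr hbp hb.2
    simp only
    rw [show kv r b - 1 + 1 = kv r b by omega]
    exact ordp_mul_pow b
  · intro x hx
    rfl

lemma phiParts_sum (hr : 2 ≤ r) (p : Nat.Partition n) : (phiParts r p).sum = n := by
  classical
  rw [phiParts, sum_finsetSum]
  have hterm : ∀ x ∈ indexS r n,
      (Multiset.replicate
        (p.parts.count x.1 / r ^ x.2 % r + r * p.parts.count (x.1 * r ^ (x.2 + 1)))
        (x.1 * r ^ x.2)).sum
      = (p.parts.count x.1 / r ^ x.2 % r * r ^ x.2) * x.1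
        + p.parts.count (x.1 * r ^ (x.2 + 1)) * (x.1 * r ^ (x.2 + 1)) := by
    rintro ⟨i, k⟩ _
    rw [Multiset.sum_replicate, smul_eq_mul]
    ring
  rw [Finset.sum_congr rfl hterm, Finset.sum_add_distrib]
  have h1 : ∑ x ∈ indexS r n, (p.parts.count x.1 / r ^ x.2 % r * r ^ x.2) * x.1
      = ∑ i ∈ nondivs r n, p.parts.count i * i := by
    rw [indexS, Finset.sum_product]
    refine Finset.sum_congr rfl fun i hi => ?_
    simp only [nondivs, Finset.mem_filter, Finset.mem_Icc] at hi
    rw [← Finset.sum_mul]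
    congr 1
    exact digit_sum_eq hr (n + 1) _ (count_lt_rpow hr p (by omega))
  have h2 : ∑ x ∈ indexS r n, p.parts.count (x.1 * r ^ (x.2 + 1)) * (x.1 * r ^ (x.2 + 1))
      = ∑ b ∈ divs r n, p.parts.count b * b := by
    exact sum_reps hr (fun b => p.parts.count b * b)
      (fun b hb => by show p.parts.count b * b = 0; rw [count_eq_zero_of_gt p hb, zero_mul])
  rw [h1, h2]
  have h4 := Finset.sum_filter_add_sum_filter_not (Finset.Icc 1 n) (fun b => r ∣ b)
    (fun a => p.parts.count a * a)
  have h5 := weight_eq p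
  simp only [divs, nondivs] at *
  omega

lemma phiParts_card (hr : 2 ≤ r) (p : Nat.Partition n) :
    Multiset.card (phiParts r p)
      = (∑ i ∈ nondivs r n, sdig r (n := n) (p.parts.count i)) + r * Msum r p := by
  classical
  rw [phiParts, card_finsetSum]
  have hterm : ∀ x ∈ indexS r n,
      Multiset.card (Multiset.replicate
        (p.parts.count x.1 / r ^ x.2 % r + r * p.parts.count (x.1 * r ^ (x.2 + 1)))
        (x.1 * r ^ x.2))
      = p.parts.count x.1 / r ^ x.2 % r + r * p.parts.count (x.1 * r ^ (x.2 + 1)) := by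
    intro x _; rw [Multiset.card_replicate]
  rw [Finset.sum_congr rfl hterm, Finset.sum_add_distrib]
  congr 1
  · rw [indexS, Finset.sum_product]
    rfl
  · rw [← Finset.mul_sum, Msum]
    congr 1
    exact sum_reps hr (fun b => p.parts.count b)
      (fun b hb => count_eq_zero_of_gt p hb)

/-- The Glaisher-type bijection. -/
def phiPartition (hr : 2 ≤ r) (p : Nat.Partition n) : Nat.Partition n where
  parts := phiParts r p
  parts_pos := by
    intro a ha
    rw [phiParts, Multiset.mem_sum] at ha
    obtain ⟨x, hx, hmem⟩ := ha
    have := Multiset.eq_of_mem_replicate hmem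
    subst this
    simp only [indexS, nondivs, Finset.mem_product, Finset.mem_filter, Finset.mem_Icc] at hx
    exact Nat.mul_pos (by omega) (pow_pos (by omega) _)
  parts_sum := phiParts_sum hr p

def psiCount (r n : ℕ) (s : Multiset ℕ) (b : ℕ) : ℕ :=
  if r ∣ b then s.count (b / r) / r
  else ∑ k ∈ Finset.range (n + 1), s.count (b * r ^ k) % r * r ^ k

def psiM (r n : ℕ) (s : Multiset ℕ) : Multiset ℕ :=
  ∑ b ∈ Finset.Icc 1 n, Multiset.replicate (psiCount r n s b) b

lemma count_psiM (s : Multiset ℕ) {a : ℕ} (ha : a ∈ Finset.Icc 1 n) :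
    (psiM r n s).count a = psiCount r n s a := by
  classical
  rw [psiM, Multiset.count_sum', Finset.sum_eq_single_of_mem a ha]
  · simp [Multiset.count_replicate]
  · intro b _ hne
    rw [Multiset.count_replicate, if_neg hne]

lemma count_psiM_zero (s : Multiset ℕ) {a : ℕ} (ha : a ∉ Finset.Icc 1 n) :
    (psiM r n s).count a = 0 := by
  classical
  rw [psiM, Multiset.count_sum']
  refine Finset.sum_eq_zero fun b hb => ?_
  rw [Multiset.count_replicate, if_neg]
  intro h
  exact ha (h ▸ hb)

lemma psiM_phi (hr : 2 ≤ r) (p : Nat.Partition n) : psiM r n (phiParts r p) = p.parts := by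
  classical
  ext a
  by_cases ha0 : a = 0
  · subst ha0
    rw [count_psiM_zero _ (by simp), Multiset.count_eq_zero_of_notMem]
    intro hmem
    exact absurd (p.parts_pos hmem) (by omega)
  by_cases han : a ≤ n
  · have haI : a ∈ Finset.Icc 1 n := Finset.mem_Icc.mpr ⟨by omega, han⟩
    rw [count_psiM _ haI, psiCount]
    split_ifs with hdvd
    · have har : r ≤ a := Nat.le_of_dvd (by omega) hdvd
      have hb : 0 < a / r := Nat.div_pos har (by omega)
      rw [count_phiParts hr p hb, Nat.mul_div_cancel' hdvd]
      have hd : p.parts.count (ordp r (a / r)) / r ^ kv r (a / r) % r < r :=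
        Nat.mod_lt _ (by omega)
      rw [Nat.add_mul_div_left _ _ (show 0 < r by omega), Nat.div_eq_of_lt hd, zero_add]
    · have key : ∀ k, (phiParts r p).count (a * r ^ k) % r = p.parts.count a / r ^ k % r := by
        intro k
        by_cases hle : a * r ^ k ≤ n
        · rw [count_phiParts hr p (Nat.mul_pos (by omega) (pow_pos (by omega) _)),
            ordp_mul_pow_eq hr hdvd, kv_mul_pow hr hdvd, Nat.add_mul_mod_self_left,
            Nat.mod_mod_of_dvd _ (dvd_refl r)]
        · push_neg at hle
          have hz : (phiParts r p).count (a * r ^ k) = 0 :=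
            count_eq_zero_of_gt (phiPartition hr p) hle
          have hz2 : p.parts.count a / r ^ k = 0 :=
            Nat.div_eq_of_lt (count_lt_pow_of_gt (by omega) hle)
          rw [hz, hz2]
      have hsum : ∑ k ∈ Finset.range (n + 1), (phiParts r p).count (a * r ^ k) % r * r ^ k
          = ∑ k ∈ Finset.range (n + 1), p.parts.count a / r ^ k % r * r ^ k :=
        Finset.sum_congr rfl fun k _ => by rw [key k]
      rw [hsum]
      exact digit_sum_eq hr (n + 1) _ (count_lt_rpow hr p (by omega))
  · push_neg at han
    rw [count_psiM_zero _ (by simp [Finset.mem_Icc]; omega), count_eq_zero_of_gt p han]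

lemma phi_injective (hr : 2 ≤ r) :
    Function.Injective (phiPartition (r := r) (n := n) hr) := by
  intro p q h
  have h1 : phiParts r p = phiParts r q := congrArg Nat.Partition.parts h
  have h2 : p.parts = q.parts := by
    rw [← psiM_phi hr p, ← psiM_phi hr q, h1]
  exact Nat.Partition.ext h2

def Ostat (r n : ℕ) {m : ℕ} (p : Nat.Partition m) : ℕ :=
  ((Finset.Icc 1 n).filter fun b => r ∣ b ∧ 0 < p.parts.count b).card

lemma mem_setO_iff {j : ℕ} (p : Nat.Partition n) :
    p ∈ setO j r n ↔ Ostat r n p = j := by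
  rw [setO, Finset.mem_filter]
  simp only [Finset.mem_univ, true_and]
  have : p.parts.toFinset.filter (fun i => r ∣ i)
      = (Finset.Icc 1 n).filter fun b => r ∣ b ∧ 0 < p.parts.count b := by
    rw [toFinset_eq p, Finset.filter_filter]
    ext a
    simp only [Finset.mem_filter, Finset.mem_Icc]
    tauto
  rw [Ostat, this]

lemma mem_setD_iff (hr : 2 ≤ r) {j : ℕ} (p : Nat.Partition n) :
    p ∈ setD j r n ↔ ((Finset.Icc 1 n).filter fun a => r ≤ p.parts.count a).card = j := by
  rw [setD, Finset.mem_filter]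
  simp only [Finset.mem_univ, true_and]
  have : p.parts.toFinset.filter (fun i => r ≤ p.parts.count i)
      = (Finset.Icc 1 n).filter fun a => r ≤ p.parts.count a := by
    rw [toFinset_eq p, Finset.filter_filter]
    ext a
    simp only [Finset.mem_filter, Finset.mem_Icc]
    constructor
    · tauto
    · intro h
      exact ⟨⟨h.1.1, h.1.2⟩, ⟨by omega, h.2⟩⟩
  rw [this]

lemma count_phi_ge_iff (hr : 2 ≤ r) (p : Nat.Partition n) {a : ℕ} (ha : 0 < a) :
    r ≤ (phiParts r p).count a ↔ 0 < p.parts.count (r * a) := by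
  rw [count_phiParts hr p ha]
  have hd : p.parts.count (ordp r a) / r ^ kv r a % r < r := Nat.mod_lt _ (by omega)
  constructor
  · intro h
    by_contra hc
    push_neg at hc
    interval_cases h' : p.parts.count (r * a) <;> omega
  · intro h
    have : r * 1 ≤ r * p.parts.count (r * a) := Nat.mul_le_mul_left r h
    omega

lemma stat_phi (hr : 2 ≤ r) (p : Nat.Partition n) :
    ((Finset.Icc 1 n).filter fun a => r ≤ (phiParts r p).count a).card = Ostat r n p := by
  classical
  rw [Ostat]
  refine Finset.card_bij' (fun a _ => r * a) (fun b _ => b / r) ?_ ?_ ?_ ?_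
  · intro a ha
    simp only [Finset.mem_filter, Finset.mem_Icc] at ha ⊢
    have hpos : 0 < a := by omega
    have h1 : 0 < p.parts.count (r * a) := (count_phi_ge_iff hr p hpos).mp ha.2
    refine ⟨⟨Nat.mul_pos (by omega) hpos, part_le_n p h1⟩, ⟨Dvd.intro a rfl, h1⟩⟩
  · intro b hb
    simp only [Finset.mem_filter, Finset.mem_Icc] at hb ⊢
    obtain ⟨⟨hb1, hb2⟩, hbd, hbc⟩ := hb
    have hrb : r ≤ b := Nat.le_of_dvd (by omega) hbd
    have h1 : 0 < b / r := Nat.div_pos hrb (by omega)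
    refine ⟨⟨by omega, le_trans (Nat.div_le_self b r) hb2⟩, ?_⟩
    rw [count_phi_ge_iff hr p h1, Nat.mul_div_cancel' hbd]
    exact hbc
  · intro a _
    exact Nat.mul_div_cancel_left a (by omega)
  · intro b hb
    simp only [Finset.mem_filter, Finset.mem_Icc] at hb
    exact Nat.mul_div_cancel' hb.2.1

set_option maxHeartbeats 1000000 in
lemma image_phi (hr : 2 ≤ r) (j : ℕ) :
    (setO j r n).image (phiPartition hr) = setD j r n := by
  classical
  ext q
  constructor
  · intro hq
    obtain ⟨p, hp, rfl⟩ := Finset.mem_image.mp hq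
    rw [mem_setD_iff hr]
    show ((Finset.Icc 1 n).filter fun a => r ≤ (phiParts r p).count a).card = j
    rw [stat_phi hr p]
    exact (mem_setO_iff p).mp hp
  · intro hq
    have hbij := Finite.injective_iff_bijective.mp (phi_injective (n := n) hr)
    obtain ⟨p, rfl⟩ := hbij.surjective q
    refine Finset.mem_image_of_mem _ ?_
    rw [mem_setO_iff, ← stat_phi hr p]
    exact (mem_setD_iff hr _).mp hq

set_option maxHeartbeats 1000000 in
lemma sum_length_D (hr : 2 ≤ r) (j : ℕ) :
    ∑ q ∈ setD j r n, (numParts q : ℤ)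
      = ∑ p ∈ setO j r n, (Multiset.card (phiParts r p) : ℤ) := by
  classical
  rw [← image_phi hr j, Finset.sum_image (fun p _ q _ h => phi_injective hr h)]
  rfl

lemma length_diff (hr : 2 ≤ r) (p : Nat.Partition n) :
    (numParts p : ℤ) - (Multiset.card (phiParts r p) : ℤ)
      = ((r : ℤ) - 1) * ((Tsum r p : ℤ) - (Msum r p : ℤ)) := by
  rw [phiParts_card hr p, numParts_eq p]
  have hsplit := Finset.sum_filter_add_sum_filter_not (Finset.Icc 1 n) (fun b => r ∣ b)
    (fun a => p.parts.count a)
  have hpoint : ∀ i ∈ nondivs r n,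
      (p.parts.count i : ℤ) - (sdig r (n := n) (p.parts.count i) : ℤ)
        = ((r : ℤ) - 1) * (Tm r (n := n) (p.parts.count i) : ℤ) := by
    intro i hi
    simp only [nondivs, Finset.mem_filter, Finset.mem_Icc] at hi
    exact sub_digitsum hr (n + 1) _ (count_lt_rpow hr p (by omega))
  have hsum : ∑ i ∈ nondivs r n, ((p.parts.count i : ℤ) - (sdig r (n := n) (p.parts.count i) : ℤ))
      = ((r : ℤ) - 1) * (Tsum r p : ℤ) := by
    rw [Finset.sum_congr rfl hpoint, ← Finset.mul_sum, Tsum]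
    push_cast
    ring
  rw [Finset.sum_sub_distrib] at hsum
  have hO : ((∑ a ∈ Finset.Icc 1 n, p.parts.count a : ℕ) : ℤ)
      = (∑ b ∈ divs r n, p.parts.count b : ℕ) + (∑ i ∈ nondivs r n, p.parts.count i : ℕ) := by
    rw [divs, nondivs]
    exact_mod_cast congrArg (fun x : ℕ => (x : ℤ)) hsplit.symm
  push_cast at hO hsum ⊢
  rw [Msum]
  push_cast
  linarith
/-- Replace `cx` copies of `x` by `cy` copies of `y` (of equal total weight). -/
def movePtn (p : Nat.Partition n) (x y cx cy : ℕ)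
    (hle : Multiset.replicate cx x ≤ p.parts) (hxy : cx * x = cy * y) (hy : 0 < y) :
    Nat.Partition n where
  parts := p.parts - Multiset.replicate cx x + Multiset.replicate cy y
  parts_pos := by
    intro a ha
    rw [Multiset.mem_add] at ha
    rcases ha with ha | ha
    · exact p.parts_pos (Multiset.mem_of_le (tsub_le_self) ha)
    · rw [Multiset.eq_of_mem_replicate ha]; exact hy
  parts_sum := by
    have h1 : (p.parts - Multiset.replicate cx x) + Multiset.replicate cx x = p.parts :=
      tsub_add_cancel_of_le hle
    have h2 := congrArg Multiset.sum h1
    rw [Multiset.sum_add, Multiset.sum_replicate, smul_eq_mul] at h2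
    rw [Multiset.sum_add, Multiset.sum_replicate, smul_eq_mul]
    have h3 := p.parts_sum
    omega

lemma movePtn_count (p : Nat.Partition n) (x y cx cy : ℕ) (hle) (hxy) (hy) (b : ℕ) :
    (movePtn p x y cx cy hle hxy hy).parts.count b
      = p.parts.count b - (if b = x then cx else 0) + (if b = y then cy else 0) := by
  show (p.parts - Multiset.replicate cx x + Multiset.replicate cy y).count b = _
  rw [Multiset.count_add, Multiset.count_sub, Multiset.count_replicate, Multiset.count_replicate]
  simp only [eq_comm]

lemma movePtn_parts (p : Nat.Partition n) (x y cx cy : ℕ) (hle) (hxy) (hy) :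
    (movePtn p x y cx cy hle hxy hy).parts
      = p.parts - Multiset.replicate cx x + Multiset.replicate cy y := rfl

lemma movePtn_inv (p : Nat.Partition n) (x y cx cy : ℕ) (hle) (hxy) (hy) (hle') (hxy') (hx) :
    movePtn (movePtn p x y cx cy hle hxy hy) y x cy cx hle' hxy' hx = p := by
  apply Nat.Partition.ext
  rw [movePtn_parts, movePtn_parts, add_tsub_cancel_right, tsub_add_cancel_of_le hle]

lemma ostat_move (hr : 2 ≤ r) (p : Nat.Partition n) {x y cx cy : ℕ} (hle) (hxy) (hy)
    (hx : ¬ r ∣ x) (hyd : r ∣ y) (hcy : 0 < cy) :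
    Ostat r n (movePtn p x y cx cy hle hxy hy)
      = Ostat r n p + (if p.parts.count y = 0 then 1 else 0) := by
  classical
  set q := movePtn p x y cx cy hle hxy hy with hq
  have hcount : ∀ b, r ∣ b → q.parts.count b = p.parts.count b + (if b = y then cy else 0) := by
    intro b hb
    have hbx : b ≠ x := fun h => hx (h ▸ hb)
    rw [hq, movePtn_count, if_neg hbx, Nat.sub_zero]
  have hqy : q.parts.count y = p.parts.count y + cy := by
    rw [hcount y hyd, if_pos rfl]
  by_cases hz : p.parts.count y = 0
  · rw [if_pos hz]
    have hyn : y ≤ n := part_le_n q (by omega)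
    have hset : (Finset.Icc 1 n).filter (fun b => r ∣ b ∧ 0 < q.parts.count b)
        = insert y ((Finset.Icc 1 n).filter fun b => r ∣ b ∧ 0 < p.parts.count b) := by
      ext b
      simp only [Finset.mem_insert, Finset.mem_filter, Finset.mem_Icc]
      constructor
      · rintro ⟨hbI, hbd, hbc⟩
        by_cases hby : b = y
        · exact Or.inl hby
        · right
          rw [hcount b hbd, if_neg hby] at hbc
          exact ⟨hbI, hbd, by omega⟩
      · rintro (rfl | ⟨hbI, hbd, hbc⟩)
        · exact ⟨⟨by omega, hyn⟩, hyd, by omega⟩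
        · exact ⟨hbI, hbd, by rw [hcount b hbd]; omega⟩
    rw [Ostat, Ostat, hset, Finset.card_insert_of_notMem]
    simp only [Finset.mem_filter, Finset.mem_Icc]
    intro h
    omega
  · rw [if_neg hz, Ostat, Ostat, add_zero]
    congr 1
    apply Finset.filter_congr
    intro b hbI
    by_cases hbd : r ∣ b
    · by_cases hby : b = y
      · subst hby
        simp only [hbd, true_and]
        omega
      · rw [hcount b hbd, if_neg hby, add_zero]
    · simp [hbd]

lemma card_Icc_filter_le {X : ℕ} (h : X ≤ n) :
    (((Finset.Icc 1 n)).filter fun c => c ≤ X).card = X := by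
  have : ((Finset.Icc 1 n)).filter (fun c => c ≤ X) = Finset.Icc 1 X := by
    ext c
    simp only [Finset.mem_filter, Finset.mem_Icc]
    omega
  rw [this, Nat.card_Icc]
  omega

def markT (p : Nat.Partition n) : Finset ((ℕ × ℕ) × ℕ) :=
  ((Finset.Icc 1 n ×ˢ Finset.range (n + 1)) ×ˢ Finset.Icc 1 n).filter fun m =>
    ¬ r ∣ m.1.1 ∧ m.2 * r ^ (m.1.2 + 1) ≤ p.parts.count m.1.1

def markY (j : ℕ) (q : Nat.Partition n) : Finset (ℕ × ℕ) :=
  (Finset.Icc 1 n ×ˢ Finset.Icc 1 n).filter fun m =>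
    r ∣ m.1 ∧ m.2 ≤ q.parts.count m.1 ∧
      (if m.2 = q.parts.count m.1 then Ostat r n q = j + 1 else Ostat r n q = j)

lemma card_markT (hr : 2 ≤ r) (p : Nat.Partition n) : (markT (r := r) p).card = Tsum r p := by
  classical
  rw [markT, Finset.card_filter, Finset.sum_product]
  have hstep : ∀ x ∈ Finset.Icc 1 n ×ˢ Finset.range (n + 1),
      (∑ c ∈ Finset.Icc 1 n,
        if ¬ r ∣ x.1 ∧ c * r ^ (x.2 + 1) ≤ p.parts.count x.1 then 1 else 0)
      = if ¬ r ∣ x.1 then p.parts.count x.1 / r ^ (x.2 + 1) else 0 := by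
    rintro ⟨i, k⟩ hik
    simp only [Finset.mem_product, Finset.mem_Icc, Finset.mem_range] at hik
    by_cases hd : r ∣ i
    · simp [hd]
    · simp only [hd, not_false_iff, true_and, if_true]
      rw [← Finset.card_filter]
      have hiff : ∀ c, (c * r ^ (k + 1) ≤ p.parts.count i) ↔ c ≤ p.parts.count i / r ^ (k + 1) := by
        intro c
        rw [Nat.le_div_iff_mul_le (pow_pos (by omega) _)]
      rw [Finset.filter_congr (fun c _ => by rw [hiff c])]
      exact card_Icc_filter_le (le_trans (Nat.div_le_self _ _) (count_le_n p (by omega)))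
  rw [Finset.sum_congr rfl hstep, Finset.sum_product]
  have hpull : ∀ i ∈ Finset.Icc 1 n,
      (∑ k ∈ Finset.range (n + 1),
        if ¬ r ∣ (i, k).1 then p.parts.count (i, k).1 / r ^ ((i, k).2 + 1) else 0)
      = if ¬ r ∣ i then Tm r (n := n) (p.parts.count i) else 0 := by
    intro i _
    split_ifs with h
    · simp
    · rfl
  rw [Finset.sum_congr rfl hpull, Tsum, nondivs, ← Finset.sum_filter]

lemma ostat_eq_sum (q : Nat.Partition n) :
    Ostat r n q = ∑ a ∈ divs r n, if 0 < q.parts.count a then 1 else 0 := by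
  classical
  rw [Ostat, ← Finset.card_filter]
  congr 1
  rw [divs, Finset.filter_filter]

lemma card_markY_top (hr : 2 ≤ r) {j : ℕ} (q : Nat.Partition n) (h : Ostat r n q = j + 1) :
    (markY (r := r) j q).card = j + 1 := by
  classical
  rw [← h, Ostat]
  refine Finset.card_bij' (fun m _ => m.1) (fun a _ => (a, q.parts.count a)) ?_ ?_ ?_ ?_
  · intro m hm
    simp only [markY, Finset.mem_filter, Finset.mem_product, Finset.mem_Icc] at hm
    obtain ⟨⟨hmI, hcI⟩, hd, hle, hif⟩ := hm
    have hceq : m.2 = q.parts.count m.1 := by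
      by_contra hne
      rw [if_neg hne] at hif
      omega
    simp only [Finset.mem_filter, Finset.mem_Icc]
    exact ⟨hmI, hd, by omega⟩
  · intro a ha
    simp only [Finset.mem_filter, Finset.mem_Icc] at ha
    obtain ⟨haI, hd, hc⟩ := ha
    simp only [markY, Finset.mem_filter, Finset.mem_product, Finset.mem_Icc]
    refine ⟨⟨haI, by omega, count_le_n q (by omega)⟩, hd, le_rfl, ?_⟩
    simpa using h
  · intro m hm
    simp only [markY, Finset.mem_filter, Finset.mem_product, Finset.mem_Icc] at hm
    obtain ⟨⟨hmI, hcI⟩, hd, hle, hif⟩ := hm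
    have hceq : m.2 = q.parts.count m.1 := by
      by_contra hne
      rw [if_neg hne] at hif
      omega
    exact Prod.ext rfl hceq.symm
  · intro a _
    rfl

lemma card_markY_mid (hr : 2 ≤ r) {j : ℕ} (q : Nat.Partition n) (h : Ostat r n q = j) :
    (markY (r := r) j q).card + j = Msum r q := by
  classical
  have hset : markY (r := r) j q
      = (Finset.Icc 1 n ×ˢ Finset.Icc 1 n).filter fun m =>
          r ∣ m.1 ∧ m.2 ≤ q.parts.count m.1 - 1 := by
    ext m
    simp only [markY, Finset.mem_filter, Finset.mem_product, Finset.mem_Icc]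
    constructor
    · rintro ⟨hm, hd, hle, hif⟩
      by_cases hceq : m.2 = q.parts.count m.1
      · rw [if_pos hceq] at hif
        omega
      · exact ⟨hm, hd, by omega⟩
    · rintro ⟨hm, hd, hle⟩
      have hc1 : 1 ≤ m.2 := hm.2.1
      refine ⟨hm, hd, by omega, ?_⟩
      rw [if_neg (by omega)]
      exact h
  have hcard : (markY (r := r) j q).card = ∑ a ∈ divs r n, (q.parts.count a - 1) := by
    rw [hset, Finset.card_filter, Finset.sum_product]
    have hstep : ∀ a ∈ Finset.Icc 1 n,
        (∑ c ∈ Finset.Icc 1 n, if r ∣ a ∧ c ≤ q.parts.count a - 1 then 1 else 0)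
        = if r ∣ a then q.parts.count a - 1 else 0 := by
      intro a ha
      simp only [Finset.mem_Icc] at ha
      by_cases hd : r ∣ a
      · simp only [hd, true_and, if_true]
        rw [← Finset.card_filter]
        exact card_Icc_filter_le (le_trans (Nat.sub_le _ _) (count_le_n q (by omega)))
      · simp [hd]
    rw [Finset.sum_congr rfl hstep, divs, ← Finset.sum_filter]
  rw [hcard, ← h, ostat_eq_sum, ← Finset.sum_add_distrib, Msum]
  refine Finset.sum_congr rfl fun a ha => ?_
  by_cases hc : 0 < q.parts.count a <;> simp [hc] <;> omega

lemma card_markY_none {j : ℕ} (q : Nat.Partition n) (h1 : Ostat r n q ≠ j + 1)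
    (h2 : Ostat r n q ≠ j) : (markY (r := r) j q).card = 0 := by
  classical
  rw [Finset.card_eq_zero, markY, Finset.filter_false_of_mem]
  rintro m _ ⟨hd, hle, hif⟩
  by_cases hceq : m.2 = q.parts.count m.1
  · rw [if_pos hceq] at hif; exact h1 hif
  · rw [if_neg hceq] at hif; exact h2 hif

lemma setO_eq (j : ℕ) : setO j r n = Finset.univ.filter fun q => Ostat r n q = j := by
  ext q
  rw [mem_setO_iff, Finset.mem_filter]
  simp

lemma sum_markY (hr : 2 ≤ r) (j : ℕ) :
    (∑ q : Nat.Partition n, (markY (r := r) j q).card) + j * (setO j r n).card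
      = (j + 1) * (setO (j + 1) r n).card + ∑ p ∈ setO j r n, Msum r p := by
  classical
  have hsplit1 := Finset.sum_filter_add_sum_filter_not Finset.univ
    (fun q : Nat.Partition n => Ostat r n q = j + 1) (fun q => (markY (r := r) j q).card)
  have hsplit2 := Finset.sum_filter_add_sum_filter_not
    (Finset.univ.filter fun q : Nat.Partition n => ¬ Ostat r n q = j + 1)
    (fun q => Ostat r n q = j) (fun q => (markY (r := r) j q).card)
  have he1 : Finset.univ.filter (fun q : Nat.Partition n => Ostat r n q = j + 1)
      = setO (j + 1) r n := (setO_eq (j + 1)).symm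
  have he2 : (Finset.univ.filter fun q : Nat.Partition n => ¬ Ostat r n q = j + 1).filter
      (fun q => Ostat r n q = j) = setO j r n := by
    rw [Finset.filter_filter, setO_eq j]
    refine Finset.filter_congr fun q _ => ?_
    constructor
    · exact fun h => h.2
    · intro h; exact ⟨by omega, h⟩
  have hv1 : ∑ q ∈ setO (j + 1) r n, (markY (r := r) j q).card = (j + 1) * (setO (j + 1) r n).card := by
    rw [Finset.sum_congr rfl (fun q hq => card_markY_top hr q ((mem_setO_iff q).mp hq))]
    rw [Finset.sum_const, smul_eq_mul, mul_comm]
  have hv2 : ∑ q ∈ setO j r n, ((markY (r := r) j q).card + j) = ∑ q ∈ setO j r n, Msum r q := by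
    refine Finset.sum_congr rfl fun q hq => ?_
    exact card_markY_mid hr q ((mem_setO_iff q).mp hq)
  have hv3 : ∑ q ∈ (Finset.univ.filter fun q : Nat.Partition n =>
      ¬ Ostat r n q = j + 1).filter (fun q => ¬ Ostat r n q = j), (markY (r := r) j q).card = 0 := by
    refine Finset.sum_eq_zero fun q hq => ?_
    simp only [Finset.mem_filter] at hq
    exact card_markY_none q hq.1.2 hq.2
  rw [he1, hv1] at hsplit1
  rw [he2, hv3, add_zero] at hsplit2
  have hv2' : ∑ q ∈ setO j r n, ((markY (r := r) j q).card + j)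
      = (∑ q ∈ setO j r n, (markY (r := r) j q).card) + j * (setO j r n).card := by
    rw [Finset.sum_add_distrib, Finset.sum_const, smul_eq_mul, mul_comm]
  omega

/-- total version of `movePtn`. -/
def movePtnT (p : Nat.Partition n) (x y cx cy : ℕ) : Nat.Partition n :=
  if h : Multiset.replicate cx x ≤ p.parts ∧ cx * x = cy * y ∧ 0 < y then
    movePtn p x y cx cy h.1 h.2.1 h.2.2
  else p

lemma movePtnT_eq (p : Nat.Partition n) (x y cx cy : ℕ) (h1 : Multiset.replicate cx x ≤ p.parts)
    (h2 : cx * x = cy * y) (h3 : 0 < y) :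
    movePtnT p x y cx cy = movePtn p x y cx cy h1 h2 h3 := dif_pos ⟨h1, h2, h3⟩

def S1 (r n j : ℕ) : Finset (Nat.Partition n × ((ℕ × ℕ) × ℕ)) :=
  (setO j r n ×ˢ ((Finset.Icc 1 n ×ˢ Finset.range (n + 1)) ×ˢ Finset.Icc 1 n)).filter
    fun z => z.2 ∈ markT (r := r) z.1

def S2 (r n j : ℕ) : Finset (Nat.Partition n × (ℕ × ℕ)) :=
  (Finset.univ ×ˢ (Finset.Icc 1 n ×ˢ Finset.Icc 1 n)).filter
    fun w => w.2 ∈ markY (r := r) j w.1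

lemma mem_S1_iff {j : ℕ} {z : Nat.Partition n × ((ℕ × ℕ) × ℕ)} :
    z ∈ S1 r n j ↔ z.1 ∈ setO j r n ∧ z.2 ∈ markT (r := r) z.1 := by
  rw [S1, Finset.mem_filter, Finset.mem_product]
  constructor
  · rintro ⟨⟨h1, _⟩, h2⟩; exact ⟨h1, h2⟩
  · rintro ⟨h1, h2⟩
    exact ⟨⟨h1, (Finset.mem_filter.mp h2).1⟩, h2⟩

lemma mem_S2_iff {j : ℕ} {w : Nat.Partition n × (ℕ × ℕ)} :
    w ∈ S2 r n j ↔ w.2 ∈ markY (r := r) j w.1 := by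
  rw [S2, Finset.mem_filter, Finset.mem_product]
  constructor
  · rintro ⟨_, h2⟩; exact h2
  · intro h2
    exact ⟨⟨Finset.mem_univ _, (Finset.mem_filter.mp h2).1⟩, h2⟩

lemma card_S1 (hr : 2 ≤ r) (j : ℕ) : (S1 r n j).card = ∑ p ∈ setO j r n, Tsum r p := by
  classical
  rw [S1, Finset.card_filter, Finset.sum_product]
  refine Finset.sum_congr rfl fun p _ => ?_
  rw [← Finset.card_filter]
  have hfe : ((Finset.Icc 1 n ×ˢ Finset.range (n + 1)) ×ˢ Finset.Icc 1 n).filter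
      (fun m => m ∈ markT (r := r) p) = markT (r := r) p := by
    ext m
    simp only [Finset.mem_filter]
    refine ⟨fun h => h.2, fun h => ⟨?_, h⟩⟩
    rw [markT] at h
    exact (Finset.mem_filter.mp h).1
  rw [hfe, card_markT hr p]

lemma card_S2 (j : ℕ) : (S2 r n j).card = ∑ q : Nat.Partition n, (markY (r := r) j q).card := by
  classical
  rw [S2, Finset.card_filter, Finset.sum_product]
  refine Finset.sum_congr rfl fun q _ => ?_
  rw [← Finset.card_filter]
  have hfe : (Finset.Icc 1 n ×ˢ Finset.Icc 1 n).filter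
      (fun m => m ∈ markY (r := r) j q) = markY (r := r) j q := by
    ext m
    simp only [Finset.mem_filter]
    refine ⟨fun h => h.2, fun h => ⟨?_, h⟩⟩
    rw [markY] at h
    exact (Finset.mem_filter.mp h).1
  rw [hfe]

lemma mem_markT_iff {p : Nat.Partition n} {m : (ℕ × ℕ) × ℕ} :
    m ∈ markT (r := r) p ↔ (1 ≤ m.1.1 ∧ m.1.1 ≤ n) ∧ m.1.2 < n + 1 ∧ (1 ≤ m.2 ∧ m.2 ≤ n)
      ∧ ¬ r ∣ m.1.1 ∧ m.2 * r ^ (m.1.2 + 1) ≤ p.parts.count m.1.1 := by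
  rw [markT, Finset.mem_filter]
  simp only [Finset.mem_product, Finset.mem_Icc, Finset.mem_range]
  tauto

lemma mem_markY_iff {j : ℕ} {q : Nat.Partition n} {m : ℕ × ℕ} :
    m ∈ markY (r := r) j q ↔ (1 ≤ m.1 ∧ m.1 ≤ n) ∧ (1 ≤ m.2 ∧ m.2 ≤ n)
      ∧ r ∣ m.1 ∧ m.2 ≤ q.parts.count m.1 ∧
        (if m.2 = q.parts.count m.1 then Ostat r n q = j + 1 else Ostat r n q = j) := by
  rw [markY, Finset.mem_filter]
  simp only [Finset.mem_product, Finset.mem_Icc]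
  tauto

lemma card_S1_eq_card_S2 (hr : 2 ≤ r) (j : ℕ) : (S1 r n j).card = (S2 r n j).card := by
  classical
  refine Finset.card_bij'
    (fun z _ => (movePtnT z.1 z.2.1.1 (z.2.1.1 * r ^ (z.2.1.2 + 1))
      (z.2.2 * r ^ (z.2.1.2 + 1)) z.2.2, (z.2.1.1 * r ^ (z.2.1.2 + 1), z.2.2)))
    (fun w _ => (movePtnT w.1 w.2.1 (ordp r w.2.1) w.2.2 (w.2.2 * r ^ (kv r w.2.1)),
      ((ordp r w.2.1, kv r w.2.1 - 1), w.2.2)))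
    ?_ ?_ ?_ ?_
  · -- forward membership
    rintro ⟨p, ⟨⟨i, k⟩, c⟩⟩ hz
    obtain ⟨hzO, hzm⟩ := mem_S1_iff.mp hz
    obtain ⟨⟨hi1, hi2⟩, hk, ⟨hc1, hc2⟩, hnd, hcnt⟩ := mem_markT_iff.mp hzm
    dsimp only at hzO hi1 hi2 hk hc1 hc2 hnd hcnt ⊢
    set a := i * r ^ (k + 1) with ha_def
    have h1 : Multiset.replicate (c * r ^ (k + 1)) i ≤ p.parts :=
      Multiset.le_count_iff_replicate_le.mp hcnt
    have h2 : (c * r ^ (k + 1)) * i = c * a := by rw [ha_def]; ring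
    have h3 : 0 < a := Nat.mul_pos (by omega) (pow_pos (by omega) _)
    have hrpow : 2 ≤ r ^ (k + 1) := le_trans hr (Nat.le_self_pow (by omega) r)
    have hia' : i * 2 ≤ i * r ^ (k + 1) := Nat.mul_le_mul_left i hrpow
    have hia : i ≠ a := by rw [ha_def]; omega
    rw [movePtnT_eq p i a (c * r ^ (k + 1)) c h1 h2 h3]
    set q := movePtn p i a (c * r ^ (k + 1)) c h1 h2 h3 with hq_def
    have hqa : q.parts.count a = p.parts.count a + c := by
      rw [hq_def, movePtn_count, if_neg (fun h => hia h.symm), if_pos rfl]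
      omega
    have han : a ≤ n := part_le_n q (by omega)
    have hda : r ∣ a := Dvd.dvd.mul_left (dvd_pow_self r (by omega)) i
    have hOq : Ostat r n q = Ostat r n p + (if p.parts.count a = 0 then 1 else 0) :=
      ostat_move hr p h1 h2 h3 hnd hda (by omega)
    have hOp : Ostat r n p = j := (mem_setO_iff p).mp hzO
    rw [mem_S2_iff]
    rw [mem_markY_iff]
    dsimp only
    refine ⟨⟨by omega, han⟩, ⟨hc1, hc2⟩, hda, by omega, ?_⟩
    split_ifs with hceq
    · rw [hOq, if_pos (by omega), hOp]
    · rw [hOq, if_neg (by omega), hOp, add_zero]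
  · -- backward membership
    rintro ⟨q, ⟨a, c⟩⟩ hw
    have hwm := mem_S2_iff.mp hw
    obtain ⟨⟨ha1, ha2⟩, ⟨hc1, hc2⟩, hda, hle, hif⟩ := mem_markY_iff.mp hwm
    dsimp only at ha1 ha2 hc1 hc2 hda hle hif ⊢
    have ha0 : 0 < a := by omega
    have hcle : Multiset.replicate c a ≤ q.parts := Multiset.le_count_iff_replicate_le.mp hle
    have hxy : c * a = (c * r ^ (kv r a)) * ordp r a := by
      conv_lhs => rw [← ordp_mul_pow (r := r) a]
      ring
    have hop : 0 < ordp r a := ordp_pos ha0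
    rw [movePtnT_eq q a (ordp r a) c (c * r ^ (kv r a)) hcle hxy hop]
    set p := movePtn q a (ordp r a) c (c * r ^ (kv r a)) hcle hxy hop with hp_def
    have hnd : ¬ r ∣ ordp r a := not_dvd_ordp hr ha0
    have hia : ordp r a ≠ a := fun h => hnd (by rw [h]; exact hda)
    have hpi : p.parts.count (ordp r a) = q.parts.count (ordp r a) + c * r ^ (kv r a) := by
      rw [hp_def, movePtn_count, if_neg hia, if_pos rfl]
      omega
    have hpa : p.parts.count a = q.parts.count a - c := by
      rw [hp_def, movePtn_count, if_pos rfl, if_neg (fun h => hia h.symm)]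
      omega
    have hkv1 : 1 ≤ kv r a := kv_pos_of_dvd hr ha0 hda
    have hkvn : kv r a ≤ n := kv_le hr ha0 ha2
    -- reverse move to compute Ostat
    have hle' : Multiset.replicate (c * r ^ (kv r a)) (ordp r a) ≤ p.parts :=
      Multiset.le_count_iff_replicate_le.mp (by omega)
    have hxy' : (c * r ^ (kv r a)) * ordp r a = c * a := hxy.symm
    have hback := movePtn_inv q a (ordp r a) c (c * r ^ (kv r a)) hcle hxy hop hle' hxy' ha0
    have hOq := ostat_move hr p hle' hxy' ha0 hnd hda (by omega)
    rw [hback] at hOq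
    have hOp : Ostat r n p = j := by
      by_cases hceq : c = q.parts.count a
      · rw [if_pos hceq] at hif
        rw [if_pos (by omega)] at hOq
        omega
      · rw [if_neg hceq] at hif
        rw [if_neg (by omega)] at hOq
        omega
    rw [mem_S1_iff]
    dsimp only
    refine ⟨(mem_setO_iff p).mpr hOp, mem_markT_iff.mpr ?_⟩
    dsimp only
    have hordle : ordp r a ≤ a := ordp_le ha0
    refine ⟨⟨by omega, by omega⟩, by omega, ⟨hc1, hc2⟩, hnd, ?_⟩
    rw [show kv r a - 1 + 1 = kv r a by omega]
    omega
  · -- left inverse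
    rintro ⟨p, ⟨⟨i, k⟩, c⟩⟩ hz
    obtain ⟨hzO, hzm⟩ := mem_S1_iff.mp hz
    obtain ⟨⟨hi1, hi2⟩, hk, ⟨hc1, hc2⟩, hnd, hcnt⟩ := mem_markT_iff.mp hzm
    dsimp only at hzO hi1 hi2 hk hc1 hc2 hnd hcnt ⊢
    have h1 : Multiset.replicate (c * r ^ (k + 1)) i ≤ p.parts :=
      Multiset.le_count_iff_replicate_le.mp hcnt
    have h2 : (c * r ^ (k + 1)) * i = c * (i * r ^ (k + 1)) := by ring
    have h3 : 0 < i * r ^ (k + 1) := Nat.mul_pos (by omega) (pow_pos (by omega) _)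
    rw [movePtnT_eq p i (i * r ^ (k + 1)) (c * r ^ (k + 1)) c h1 h2 h3]
    set q := movePtn p i (i * r ^ (k + 1)) (c * r ^ (k + 1)) c h1 h2 h3 with hq_def
    have hko : kv r (i * r ^ (k + 1)) = k + 1 := kv_mul_pow hr hnd
    have hoo : ordp r (i * r ^ (k + 1)) = i := ordp_mul_pow_eq hr hnd
    have hrpow : 2 ≤ r ^ (k + 1) := le_trans hr (Nat.le_self_pow (by omega) r)
    have hia' : i * 2 ≤ i * r ^ (k + 1) := Nat.mul_le_mul_left i hrpow
    have hia : i ≠ i * r ^ (k + 1) := by omega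
    have hqa : q.parts.count (i * r ^ (k + 1)) = p.parts.count (i * r ^ (k + 1)) + c := by
      rw [hq_def, movePtn_count, if_neg (fun h => hia h.symm), if_pos rfl]
      omega
    have hcle : Multiset.replicate c (i * r ^ (k + 1)) ≤ q.parts :=
      Multiset.le_count_iff_replicate_le.mp (by omega)
    have hxy : c * (i * r ^ (k + 1)) = (c * r ^ (kv r (i * r ^ (k + 1)))) * ordp r (i * r ^ (k + 1)) := by
      rw [hko, hoo]
      ring
    have hop : 0 < ordp r (i * r ^ (k + 1)) := by rw [hoo]; omega
    rw [movePtnT_eq q (i * r ^ (k + 1)) (ordp r (i * r ^ (k + 1))) c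
      (c * r ^ (kv r (i * r ^ (k + 1)))) hcle hxy hop]
    refine Prod.ext ?_ ?_
    · dsimp only
      apply Nat.Partition.ext
      rw [movePtn_parts, movePtn_parts, hko, hoo, add_tsub_cancel_right,
        tsub_add_cancel_of_le h1]
    · dsimp only
      rw [hoo, hko]
      simp
  · -- right inverse
    rintro ⟨q, ⟨a, c⟩⟩ hw
    have hwm := mem_S2_iff.mp hw
    obtain ⟨⟨ha1, ha2⟩, ⟨hc1, hc2⟩, hda, hle, hif⟩ := mem_markY_iff.mp hwm
    dsimp only at ha1 ha2 hc1 hc2 hda hle hif ⊢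
    have ha0 : 0 < a := by omega
    have hcle : Multiset.replicate c a ≤ q.parts := Multiset.le_count_iff_replicate_le.mp hle
    have hxy : c * a = (c * r ^ (kv r a)) * ordp r a := by
      conv_lhs => rw [← ordp_mul_pow (r := r) a]
      ring
    have hop : 0 < ordp r a := ordp_pos ha0
    rw [movePtnT_eq q a (ordp r a) c (c * r ^ (kv r a)) hcle hxy hop]
    set p := movePtn q a (ordp r a) c (c * r ^ (kv r a)) hcle hxy hop with hp_def
    have hnd : ¬ r ∣ ordp r a := not_dvd_ordp hr ha0
    have hia : ordp r a ≠ a := fun h => hnd (by rw [h]; exact hda)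
    have hpi : p.parts.count (ordp r a) = q.parts.count (ordp r a) + c * r ^ (kv r a) := by
      rw [hp_def, movePtn_count, if_neg hia, if_pos rfl]
      omega
    have hkv1 : 1 ≤ kv r a := kv_pos_of_dvd hr ha0 hda
    have hk1 : kv r a - 1 + 1 = kv r a := by omega
    have hle2 : Multiset.replicate (c * r ^ (kv r a - 1 + 1)) (ordp r a) ≤ p.parts := by
      rw [hk1]
      exact Multiset.le_count_iff_replicate_le.mp (by omega)
    have hxy2 : (c * r ^ (kv r a - 1 + 1)) * ordp r a
        = c * (ordp r a * r ^ (kv r a - 1 + 1)) := by ring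
    have h32 : 0 < ordp r a * r ^ (kv r a - 1 + 1) :=
      Nat.mul_pos hop (pow_pos (by omega) _)
    rw [movePtnT_eq p (ordp r a) (ordp r a * r ^ (kv r a - 1 + 1))
      (c * r ^ (kv r a - 1 + 1)) c hle2 hxy2 h32]
    have hoa : ordp r a * r ^ (kv r a - 1 + 1) = a := by
      rw [hk1]
      exact ordp_mul_pow a
    refine Prod.ext ?_ ?_
    · dsimp only
      apply Nat.Partition.ext
      rw [movePtn_parts, movePtn_parts, hk1, ordp_mul_pow, add_tsub_cancel_right,
        tsub_add_cancel_of_le hcle]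
    · dsimp only
      rw [hoa]

lemma claimB (hr : 2 ≤ r) (j : ℕ) :
    (∑ p ∈ setO j r n, Tsum r p) + j * (setO j r n).card
      = (j + 1) * (setO (j + 1) r n).card + ∑ p ∈ setO j r n, Msum r p := by
  have h1 := card_S1 (n := n) hr j
  have h2 := card_S2 (r := r) (n := n) j
  have h3 := card_S1_eq_card_S2 (n := n) hr j
  have h4 := sum_markY (n := n) hr j
  omega

end Phi

lemma main_result (n j r : ℕ) (hr : 2 ≤ r) :
    bDiff j r n =
      ((r : ℤ) - 1) *
        (((j : ℤ) + 1) * ((setO (j + 1) r n).card : ℤ) - (j : ℤ) * ((setO j r n).card : ℤ)) := by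
  classical
  rw [bDiff, sum_length_D hr j, ← Finset.sum_sub_distrib]
  rw [Finset.sum_congr rfl (fun p _ => length_diff hr p), ← Finset.mul_sum]
  have hB := claimB (n := n) hr j
  have hBZ : ((∑ p ∈ setO j r n, Tsum r p : ℕ) : ℤ) + (j : ℤ) * ((setO j r n).card : ℤ)
      = ((j : ℤ) + 1) * ((setO (j + 1) r n).card : ℤ)
        + ((∑ p ∈ setO j r n, Msum r p : ℕ) : ℤ) := by
    exact_mod_cast congrArg (fun x : ℕ => (x : ℤ)) hB
  push_cast at hBZ
  have hS : ∑ p ∈ setO j r n, ((Tsum r p : ℤ) - (Msum r p : ℤ))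
      = ∑ p ∈ setO j r n, (Tsum r p : ℤ) - ∑ p ∈ setO j r n, (Msum r p : ℤ) :=
    Finset.sum_sub_distrib _ _
  rw [hS]
  have : (∑ p ∈ setO j r n, (Tsum r p : ℤ)) - ∑ p ∈ setO j r n, (Msum r p : ℤ)
      = ((j : ℤ) + 1) * ((setO (j + 1) r n).card : ℤ) - (j : ℤ) * ((setO j r n).card : ℤ) := by
    linarith
  rw [this]

end BeckAux

/-- `b_{j,r}(n) = (r-1)·((j+1)·|O_{j+1,r}(n)| - j·|O_{j,r}(n)|)`. -/
theorem bDiff_eq_O (n j r : ℕ) (hr : 2 ≤ r) :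
    bDiff j r n =
      ((r : ℤ) - 1) *
        (((j : ℤ) + 1) * ((setO (j + 1) r n).card : ℤ) - (j : ℤ) * ((setO j r n).card : ℤ)) :=
  BeckAux.main_result n j r hr
end
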